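/- arXiv:1810.05578 — 6 statements merged into one kernel-verified Lean document; each statement's English description precedes it below -/
import Mathlib

section
/- For probability vectors p and r, there exists a thermal process T ∈ TP(d,s) with T p = r if and only if p thermomajorizes r, i.e., f_p(x) ≥ f_r(x) for all x ∈ [0,Z]. -/
/-- The set of thermal processes. -/
def TP (d : ℕ) (s : Fin d → ℝ) : Set (Matrix (Fin d) (Fin d) ℝ) :=
  {T | (∀ i j, 0 ≤ T i j) ∧ (∀ j, ∑ i, T i j = 1) ∧
    T.mulVec (fun i => s i / ∑ k, s k) = (fun i => s i / ∑ k, s k)}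

/-- A probability vector. -/
def ProbVec (d : ℕ) (p : Fin d → ℝ) : Prop := (∀ i, 0 ≤ p i) ∧ ∑ i, p i = 1

/-- The thermomajorization curve of `p`:
`f_p(x) = max { ∑ i, λ i * p i : λ ∈ [0,1]^d, ∑ i, λ i * s i = x }`. -/
noncomputable def curve (d : ℕ) (s p : Fin d → ℝ) (x : ℝ) : ℝ :=
  sSup {y | ∃ lam : Fin d → ℝ, (∀ i, lam i ∈ Set.Icc (0 : ℝ) 1) ∧
    (∑ i, lam i * s i = x) ∧ y = ∑ i, lam i * p i}



namespace Stmt2Aux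

open Finset

/-- Extend a `Fin d`-indexed family to `ℕ` by zero. -/
def extF (d : ℕ) (f : Fin d → ℝ) : ℕ → ℝ := fun m => if h : m < d then f ⟨m, h⟩ else 0

lemma extF_apply {d : ℕ} (f : Fin d → ℝ) (i : Fin d) : extF d f (i : ℕ) = f i := by
  simp [extF, i.isLt]

lemma extF_mul {d : ℕ} (f g : Fin d → ℝ) (m : ℕ) :
    extF d f m * extF d g m = extF d (fun i => f i * g i) m := by
  unfold extF; split <;> simp

lemma extF_sub {d : ℕ} (f g : Fin d → ℝ) (m : ℕ) :
    extF d (fun i => f i - g i) m = extF d f m - extF d g m := by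
  unfold extF; split <;> simp

lemma sum_extF {d : ℕ} (f : Fin d → ℝ) : ∑ m ∈ range d, extF d f m = ∑ i, f i := by
  rw [← Fin.sum_univ_eq_sum_range]
  exact Finset.sum_congr rfl fun i _ => extF_apply f i

lemma extF_nonneg {d : ℕ} {f : Fin d → ℝ} (hf : ∀ i, 0 ≤ f i) (m : ℕ) : 0 ≤ extF d f m := by
  unfold extF; split
  · exact hf _
  · exact le_rfl

lemma sum_ite_range (f : ℕ → ℝ) {k n : ℕ} (hk : k ≤ n) :
    ∑ m ∈ range n, (if m < k then f m else 0) = ∑ m ∈ range k, f m := by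
  have h1 : ∑ m ∈ range k, (if m < k then f m else 0)
      = ∑ m ∈ range n, (if m < k then f m else 0) :=
    Finset.sum_subset (Finset.range_subset_range.2 hk) (fun m _ hm => if_neg (by simpa using hm))
  have h2 : ∑ m ∈ range k, (if m < k then f m else 0) = ∑ m ∈ range k, f m :=
    Finset.sum_congr rfl fun m hm => if_pos (mem_range.1 hm)
  rw [← h1, h2]

/-- Abel summation nonnegativity. -/
lemma abel_nonneg (n : ℕ) (c v : ℕ → ℝ)
    (hC : ∀ k, k ≤ n → 0 ≤ ∑ m ∈ range k, c m)
    (hCn : ∑ m ∈ range n, c m = 0)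
    (hv : ∀ i j, i ≤ j → j < n → v j ≤ v i) :
    0 ≤ ∑ m ∈ range n, c m * v m := by
  have hparts := Finset.sum_range_by_parts v c n
  have hrw : ∑ m ∈ range n, c m * v m = ∑ m ∈ range n, v m • c m := by
    exact Finset.sum_congr rfl fun m _ => by rw [smul_eq_mul, mul_comm]
  rw [hrw, hparts, hCn, smul_zero]
  have : ∀ i ∈ range (n - 1), (v (i + 1) - v i) • (∑ j ∈ range (i + 1), c j) ≤ 0 := by
    intro i hi
    have hi' : i + 1 < n := by have := mem_range.1 hi; omega
    have h1 : v (i + 1) - v i ≤ 0 := by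
      have := hv i (i + 1) (Nat.le_succ i) hi'
      linarith
    have h2 : 0 ≤ ∑ j ∈ range (i + 1), c j := hC (i + 1) (by omega)
    exact smul_nonpos_of_nonpos_of_nonneg h1 h2
  have := Finset.sum_nonpos this
  linarith

section Greedy

variable {d : ℕ} (s p : Fin d → ℝ) (τ : Equiv.Perm (Fin d))

/-- Partial sums of `s` along the permutation `τ`. -/
def XX (k : ℕ) : ℝ := ∑ m ∈ range k, extF d (fun i => s (τ i)) m

/-- The greedy filling vector at level `x`. -/
noncomputable def greedy (x : ℝ) (j : Fin d) : ℝ :=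
  min 1 (max 0 ((x - XX s τ ((τ.symm j : ℕ))) / s j))

variable {s p τ}

lemma XX_zero : XX s τ 0 = 0 := by simp [XX]

lemma XX_succ {m : ℕ} (hm : m < d) : XX s τ (m + 1) = XX s τ m + s (τ ⟨m, hm⟩) := by
  simp [XX, Finset.sum_range_succ, extF, hm]

lemma XX_mono (hs : ∀ i, 0 < s i) : Monotone (XX s τ) := by
  intro k k' hk
  exact Finset.sum_le_sum_of_subset_of_nonneg (Finset.range_subset_range.2 hk)
    (fun m _ _ => extF_nonneg (fun i => (hs (τ i)).le) m)

lemma XX_nonneg (hs : ∀ i, 0 < s i) (k : ℕ) : 0 ≤ XX s τ k := by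
  have := XX_mono (s := s) (τ := τ) hs (Nat.zero_le k)
  rwa [XX_zero] at this

lemma XX_d : XX s τ d = ∑ i, s i := by
  rw [XX, sum_extF]
  exact Equiv.sum_comp τ s

lemma XX_le (hs : ∀ i, 0 < s i) {k : ℕ} (hk : k ≤ d) : XX s τ k ≤ ∑ i, s i := by
  have := XX_mono (s := s) (τ := τ) hs hk
  rwa [XX_d] at this

lemma greedy_nonneg (x : ℝ) (j : Fin d) : 0 ≤ greedy s τ x j :=
  le_min zero_le_one (le_max_left 0 _)

lemma greedy_le_one (x : ℝ) (j : Fin d) : greedy s τ x j ≤ 1 := min_le_left _ _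

lemma greedy_mono (hs : ∀ i, 0 < s i) {x x' : ℝ} (h : x ≤ x') (j : Fin d) :
    greedy s τ x j ≤ greedy s τ x' j := by
  apply min_le_min le_rfl
  apply max_le_max le_rfl
  exact (div_le_div_iff_of_pos_right (hs j)).2 (by linarith)

lemma greedy_zero (hs : ∀ i, 0 < s i) (j : Fin d) : greedy s τ 0 j = 0 := by
  unfold greedy
  have h1 : (0 - XX s τ ((τ.symm j : ℕ))) / s j ≤ 0 := by
    apply div_nonpos_of_nonpos_of_nonneg
    · have := XX_nonneg (s := s) (τ := τ) hs ((τ.symm j : ℕ)); linarith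
    · exact (hs j).le
  rw [max_eq_left h1, min_eq_right zero_le_one]

lemma greedy_top (hs : ∀ i, 0 < s i) (j : Fin d) : greedy s τ (∑ i, s i) j = 1 := by
  unfold greedy
  have hm : ((τ.symm j : ℕ)) < d := (τ.symm j).isLt
  have hXsucc : XX s τ ((τ.symm j : ℕ) + 1) = XX s τ ((τ.symm j : ℕ)) + s j := by
    rw [XX_succ hm]
    congr 1
    have : (⟨(τ.symm j : ℕ), hm⟩ : Fin d) = τ.symm j := Fin.eta _ _
    rw [this, Equiv.apply_symm_apply]
  have hXle : XX s τ ((τ.symm j : ℕ) + 1) ≤ ∑ i, s i := XX_le hs hm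
  have h1 : (1 : ℝ) ≤ ((∑ i, s i) - XX s τ ((τ.symm j : ℕ))) / s j := by
    rw [le_div_iff₀ (hs j), one_mul]
    linarith [hXsucc ▸ hXle]
  rw [max_eq_right (le_trans zero_le_one h1), min_eq_left h1]

lemma clamp_mul {x A c : ℝ} (hc : 0 < c) :
    min 1 (max 0 ((x - A) / c)) * c = min x (A + c) - min x A := by
  rcases le_or_gt x A with h | h
  · have h1 : (x - A) / c ≤ 0 := div_nonpos_of_nonpos_of_nonneg (by linarith) hc.le
    rw [max_eq_left h1, min_eq_right zero_le_one, zero_mul,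
      min_eq_left h, min_eq_left (by linarith : x ≤ A + c)]
    ring
  · rcases le_or_gt x (A + c) with h2 | h2
    · have hpos : 0 ≤ (x - A) / c := le_of_lt (div_pos (by linarith) hc)
      have hle1 : (x - A) / c ≤ 1 := (div_le_one hc).2 (by linarith)
      rw [max_eq_right hpos, min_eq_right hle1, div_mul_cancel₀ _ (ne_of_gt hc),
        min_eq_left h2, min_eq_right h.le]
    · have h1 : (1 : ℝ) ≤ (x - A) / c := (one_le_div hc).2 (by linarith)
      rw [max_eq_right (le_trans zero_le_one h1), min_eq_left h1, one_mul,
        min_eq_right h2.le, min_eq_right h.le]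
      ring

lemma greedy_mul (hs : ∀ i, 0 < s i) {x : ℝ} {m : ℕ} (hm : m < d) :
    greedy s τ x (τ ⟨m, hm⟩) * s (τ ⟨m, hm⟩)
      = min x (XX s τ (m + 1)) - min x (XX s τ m) := by
  have hsymm : τ.symm (τ ⟨m, hm⟩) = ⟨m, hm⟩ := Equiv.symm_apply_apply τ _
  unfold greedy
  rw [hsymm]
  rw [XX_succ hm]
  exact clamp_mul (hs _)

lemma sum_greedy_partial (hs : ∀ i, 0 < s i) {x : ℝ} (hx0 : 0 ≤ x) {k : ℕ} (hk : k ≤ d) :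
    ∑ m ∈ range k, extF d (fun i => greedy s τ x (τ i) * s (τ i)) m = min x (XX s τ k) := by
  have hcong : ∀ m ∈ range k, extF d (fun i => greedy s τ x (τ i) * s (τ i)) m
      = min x (XX s τ (m + 1)) - min x (XX s τ m) := by
    intro m hm
    have hmd : m < d := lt_of_lt_of_le (mem_range.1 hm) hk
    rw [extF, dif_pos hmd]
    exact greedy_mul hs hmd
  rw [Finset.sum_congr rfl hcong, Finset.sum_range_sub (fun m => min x (XX s τ m)), XX_zero,
    min_eq_right hx0, sub_zero]

lemma sum_greedy_s (hs : ∀ i, 0 < s i) {x : ℝ} (hx : x ∈ Set.Icc 0 (∑ i, s i)) :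
    ∑ j, greedy s τ x j * s j = x := by
  have h1 : ∑ j, greedy s τ x j * s j = ∑ i, greedy s τ x (τ i) * s (τ i) :=
    (Equiv.sum_comp τ (fun j => greedy s τ x j * s j)).symm
  rw [h1, ← sum_extF (fun i => greedy s τ x (τ i) * s (τ i)),
    sum_greedy_partial hs hx.1 le_rfl, XX_d, min_eq_left hx.2]

lemma greedy_dominates (hs : ∀ i, 0 < s i)
    (hw : Antitone fun i : Fin d => p (τ i) / s (τ i))
    {x : ℝ} (hx : x ∈ Set.Icc 0 (∑ i, s i)) (μ : Fin d → ℝ)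
    (hμ01 : ∀ i, μ i ∈ Set.Icc (0 : ℝ) 1) (hμs : ∑ i, μ i * s i = x) :
    ∑ i, μ i * p i ≤ ∑ i, greedy s τ x i * p i := by
  set c : ℕ → ℝ := fun m =>
    extF d (fun i => (greedy s τ x (τ i) - μ (τ i)) * s (τ i)) m with hc
  set v : ℕ → ℝ := fun m => extF d (fun i => p (τ i) / s (τ i)) m with hv
  -- partial sums of μ·s
  have hμsum : ∀ k, k ≤ d →
      ∑ m ∈ range k, extF d (fun i => μ (τ i) * s (τ i)) m ≤ min x (XX s τ k) := by
    intro k hk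
    apply le_min
    · calc ∑ m ∈ range k, extF d (fun i => μ (τ i) * s (τ i)) m
          ≤ ∑ m ∈ range d, extF d (fun i => μ (τ i) * s (τ i)) m :=
            Finset.sum_le_sum_of_subset_of_nonneg (Finset.range_subset_range.2 hk)
              (fun m _ _ => extF_nonneg
                (fun i => mul_nonneg (hμ01 (τ i)).1 (hs (τ i)).le) m)
        _ = ∑ i, μ (τ i) * s (τ i) := sum_extF _
        _ = ∑ i, μ i * s i := Equiv.sum_comp τ (fun i => μ i * s i)
        _ = x := hμs
    · rw [XX]
      apply Finset.sum_le_sum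
      intro m _
      unfold extF
      split
      · exact mul_le_of_le_one_left (hs _).le (hμ01 _).2
      · exact le_rfl
  have hCeq : ∀ k, k ≤ d → ∑ m ∈ range k, c m
      = min x (XX s τ k) - ∑ m ∈ range k, extF d (fun i => μ (τ i) * s (τ i)) m := by
    intro k hk
    have hfg : (fun i => (greedy s τ x (τ i) - μ (τ i)) * s (τ i))
        = fun i => greedy s τ x (τ i) * s (τ i) - μ (τ i) * s (τ i) := by
      funext i; ring
    have : ∀ m, c m = extF d (fun i => greedy s τ x (τ i) * s (τ i)) m
        - extF d (fun i => μ (τ i) * s (τ i)) m := by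
      intro m
      rw [hc]
      simp only
      rw [hfg, extF_sub]
    simp_rw [this]
    rw [Finset.sum_sub_distrib, sum_greedy_partial hs hx.1 hk]
  have hC : ∀ k, k ≤ d → 0 ≤ ∑ m ∈ range k, c m := by
    intro k hk
    rw [hCeq k hk]
    linarith [hμsum k hk]
  have hCd : ∑ m ∈ range d, c m = 0 := by
    rw [hCeq d le_rfl]
    have h1 : ∑ m ∈ range d, extF d (fun i => μ (τ i) * s (τ i)) m = x := by
      rw [sum_extF]
      rw [Equiv.sum_comp τ (fun i => μ i * s i)]
      exact hμs
    rw [h1, XX_d, min_eq_left hx.2, sub_self]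
  have hvmono : ∀ i j, i ≤ j → j < d → v j ≤ v i := by
    intro i j hij hjd
    have hid : i < d := lt_of_le_of_lt hij hjd
    rw [hv]
    simp only
    rw [extF, dif_pos hjd, extF, dif_pos hid]
    exact hw (by exact Fin.mk_le_mk.2 hij)
  have habel := abel_nonneg d c v hC hCd hvmono
  have hfinal : ∑ m ∈ range d, c m * v m
      = ∑ i, (greedy s τ x i - μ i) * p i := by
    have : ∀ m, c m * v m
        = extF d (fun i => (greedy s τ x (τ i) - μ (τ i)) * p (τ i)) m := by
      intro m
      rw [hc, hv]
      simp only
      rw [extF_mul]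
      unfold extF
      split
      · rename_i hmd
        have hne : s (τ ⟨m, hmd⟩) ≠ 0 := (hs _).ne'
        show (greedy s τ x (τ ⟨m, hmd⟩) - μ (τ ⟨m, hmd⟩)) * s (τ ⟨m, hmd⟩)
            * (p (τ ⟨m, hmd⟩) / s (τ ⟨m, hmd⟩))
          = (greedy s τ x (τ ⟨m, hmd⟩) - μ (τ ⟨m, hmd⟩)) * p (τ ⟨m, hmd⟩)
        field_simp
      · rfl
    simp_rw [this]
    rw [sum_extF]
    exact Equiv.sum_comp τ (fun i => (greedy s τ x i - μ i) * p i)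
  rw [hfinal] at habel
  have : ∑ i, (greedy s τ x i - μ i) * p i
      = ∑ i, greedy s τ x i * p i - ∑ i, μ i * p i := by
    rw [← Finset.sum_sub_distrib]
    exact Finset.sum_congr rfl fun i _ => by ring
  linarith [this ▸ habel]

end Greedy

end Stmt2Aux

namespace Stmt2Aux

open Finset

lemma curve_bddAbove {d : ℕ} (s p : Fin d → ℝ) (hp0 : ∀ i, 0 ≤ p i) (x : ℝ) :
    BddAbove {y | ∃ lam : Fin d → ℝ, (∀ i, lam i ∈ Set.Icc (0 : ℝ) 1) ∧
      (∑ i, lam i * s i = x) ∧ y = ∑ i, lam i * p i} := by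
  refine ⟨∑ i, p i, ?_⟩
  rintro y ⟨lam, hlam, -, rfl⟩
  exact Finset.sum_le_sum fun i _ => mul_le_of_le_one_left (hp0 i) (hlam i).2

lemma le_curve {d : ℕ} {s p : Fin d → ℝ} (hp0 : ∀ i, 0 ≤ p i) {x : ℝ} (μ : Fin d → ℝ)
    (hμ : ∀ i, μ i ∈ Set.Icc (0 : ℝ) 1) (hμs : ∑ i, μ i * s i = x) :
    ∑ i, μ i * p i ≤ curve d s p x :=
  le_csSup (curve_bddAbove s p hp0 x) ⟨μ, hμ, hμs, rfl⟩

lemma curve_le_greedy {d : ℕ} {s p : Fin d → ℝ} {τ : Equiv.Perm (Fin d)}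
    (hs : ∀ i, 0 < s i) (hw : Antitone fun i : Fin d => p (τ i) / s (τ i))
    {x : ℝ} (hx : x ∈ Set.Icc 0 (∑ i, s i)) :
    curve d s p x ≤ ∑ i, greedy s τ x i * p i := by
  apply csSup_le
  · exact ⟨∑ i, greedy s τ x i * p i, greedy s τ x,
      fun i => ⟨greedy_nonneg _ _, greedy_le_one _ _⟩, sum_greedy_s hs hx, rfl⟩
  · rintro y ⟨μ, hμ, hμs, rfl⟩
    exact greedy_dominates hs hw hx μ hμ hμs

lemma exists_sort {d : ℕ} (f : Fin d → ℝ) :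
    ∃ σ : Equiv.Perm (Fin d), Antitone fun i => f (σ i) := by
  refine ⟨Tuple.sort (fun i => -f i), fun i j hij => ?_⟩
  have := Tuple.monotone_sort (fun i => -f i) hij
  simpa using this

/-- Key construction: given the thermomajorization condition, for every linear functional `a`
there is a thermal process `T` with `⟨a, r⟩ ≤ ⟨a, T p⟩`. -/
lemma key {d : ℕ} {s p r : Fin d → ℝ} (hs : ∀ i, 0 < s i) (hp : ProbVec d p) (hr : ProbVec d r)
    (hcurve : ∀ x ∈ Set.Icc (0 : ℝ) (∑ i, s i), curve d s r x ≤ curve d s p x)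
    (a : Fin d → ℝ) :
    ∃ T ∈ TP d s, ∑ i, a i * r i ≤ ∑ i, a i * T.mulVec p i := by
  obtain ⟨σ, hσ⟩ := exists_sort a
  obtain ⟨τ, hτ⟩ := exists_sort (fun i => p i / s i)
  have hXmem : ∀ k, k ≤ d → XX s σ k ∈ Set.Icc (0 : ℝ) (∑ i, s i) :=
    fun k hk => ⟨XX_nonneg hs k, XX_le hs hk⟩
  set G : ℕ → ℝ := fun k => ∑ j, greedy s τ (XX s σ k) j * p j with hGdef
  set T : Matrix (Fin d) (Fin d) ℝ := fun i j =>
    greedy s τ (XX s σ ((σ.symm i : ℕ) + 1)) j - greedy s τ (XX s σ (σ.symm i : ℕ)) j with hTdef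
  have hT_nonneg : ∀ i j, 0 ≤ T i j := fun i j =>
    sub_nonneg.2 (greedy_mono hs (XX_mono hs (Nat.le_succ _)) j)
  have hT_colsum : ∀ j, ∑ i, T i j = 1 := by
    intro j
    have h1 : ∑ i, T i j = ∑ i, T (σ i) j := (Equiv.sum_comp σ (fun i => T i j)).symm
    have h2 : ∀ i : Fin d,
        T (σ i) j = greedy s τ (XX s σ ((i : ℕ) + 1)) j - greedy s τ (XX s σ (i : ℕ)) j := by
      intro i
      rw [hTdef]
      simp only
      rw [Equiv.symm_apply_apply]
    rw [h1]
    simp_rw [h2]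
    rw [Fin.sum_univ_eq_sum_range
      (fun m => greedy s τ (XX s σ (m + 1)) j - greedy s τ (XX s σ m) j) d]
    rw [Finset.sum_range_sub (fun m => greedy s τ (XX s σ m) j), XX_d, XX_zero,
      greedy_top hs j, greedy_zero hs j]
    norm_num
  have hTs : ∀ i, ∑ j, T i j * s j = s i := by
    intro i
    have hmd : ((σ.symm i : ℕ)) < d := (σ.symm i).isLt
    have e1 : ∑ j, T i j * s j
        = (∑ j, greedy s τ (XX s σ ((σ.symm i : ℕ) + 1)) j * s j)
          - ∑ j, greedy s τ (XX s σ (σ.symm i : ℕ)) j * s j := by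
      rw [← Finset.sum_sub_distrib]
      refine Finset.sum_congr rfl fun j _ => ?_
      rw [hTdef]
      ring
    rw [e1, sum_greedy_s hs (hXmem _ hmd), sum_greedy_s hs (hXmem _ hmd.le), XX_succ hmd]
    have he : (⟨(σ.symm i : ℕ), hmd⟩ : Fin d) = σ.symm i := Fin.eta _ _
    rw [he, Equiv.apply_symm_apply]
    ring
  have hTmem : T ∈ TP d s := by
    refine ⟨hT_nonneg, hT_colsum, ?_⟩
    funext i
    have hmv : T.mulVec (fun k => s k / ∑ k, s k) i = ∑ j, T i j * (s j / ∑ k, s k) := by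
      simp [Matrix.mulVec, dotProduct]
    rw [hmv]
    have h2 : ∑ j, T i j * (s j / ∑ k, s k) = (∑ j, T i j * s j) / ∑ k, s k := by
      rw [Finset.sum_div]
      exact Finset.sum_congr rfl fun j _ => (mul_div_assoc _ _ _).symm
    rw [h2, hTs i]
  have hTp_row : ∀ (m : ℕ) (hm : m < d), T.mulVec p (σ ⟨m, hm⟩) = G (m + 1) - G m := by
    intro m hm
    have hmv : T.mulVec p (σ ⟨m, hm⟩) = ∑ j, T (σ ⟨m, hm⟩) j * p j := by
      simp [Matrix.mulVec, dotProduct]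
    rw [hmv, hGdef]
    simp only
    rw [← Finset.sum_sub_distrib]
    refine Finset.sum_congr rfl fun j _ => ?_
    rw [hTdef]
    simp only
    have hsymm : ((σ.symm (σ ⟨m, hm⟩) : Fin d) : ℕ) = m := by
      rw [Equiv.symm_apply_apply]
    rw [hsymm]
    ring
  set R : ℕ → ℝ := fun k => ∑ m ∈ range k, extF d (fun i => r (σ i)) m with hRdef
  have hG0 : G 0 = 0 := by
    rw [hGdef]
    simp only
    rw [XX_zero]
    simp [greedy_zero hs]
  have hGd : G d = 1 := by
    rw [hGdef]
    simp only
    rw [XX_d]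
    simp only [greedy_top hs, one_mul]
    exact hp.2
  have hpartial : ∀ k, k ≤ d →
      ∑ m ∈ range k, extF d (fun i => T.mulVec p (σ i)) m = G k := by
    intro k hk
    have hcong : ∀ m ∈ range k, extF d (fun i => T.mulVec p (σ i)) m = G (m + 1) - G m := by
      intro m hm
      have hmd := lt_of_lt_of_le (mem_range.1 hm) hk
      rw [extF, dif_pos hmd]
      exact hTp_row m hmd
    rw [Finset.sum_congr rfl hcong, Finset.sum_range_sub G, hG0, sub_zero]
  have hR_le_G : ∀ k, k ≤ d → R k ≤ G k := by
    intro k hk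
    set μ : Fin d → ℝ := fun j => if ((σ.symm j : ℕ)) < k then 1 else 0 with hμdef
    have hμ01 : ∀ j, μ j ∈ Set.Icc (0 : ℝ) 1 := by
      intro j
      rw [hμdef]
      simp only
      split_ifs <;> simp
    have hcomp : ∀ f : Fin d → ℝ,
        ∑ j, μ j * f j = ∑ m ∈ range k, extF d (fun i => f (σ i)) m := by
      intro f
      have h1 : ∑ j, μ j * f j = ∑ i, μ (σ i) * f (σ i) :=
        (Equiv.sum_comp σ (fun j => μ j * f j)).symm
      have h2 : ∀ i : Fin d, μ (σ i) * f (σ i)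
          = (fun m => if m < k then extF d (fun i' => f (σ i')) m else 0) (i : ℕ) := by
        intro i
        rw [hμdef]
        simp only [Equiv.symm_apply_apply]
        split_ifs with h
        · rw [one_mul, extF, dif_pos i.isLt]
        · rw [zero_mul]
      rw [h1]
      calc ∑ i : Fin d, μ (σ i) * f (σ i)
          = ∑ i : Fin d, (fun m => if m < k then extF d (fun i' => f (σ i')) m else 0) (i : ℕ) :=
            Finset.sum_congr rfl fun i _ => h2 i
        _ = ∑ m ∈ range d, (if m < k then extF d (fun i' => f (σ i')) m else 0) :=
            Fin.sum_univ_eq_sum_range (fun m => if m < k then extF d (fun i' => f (σ i')) m else 0) d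
        _ = ∑ m ∈ range k, extF d (fun i' => f (σ i')) m := sum_ite_range _ hk
    have hμs : ∑ j, μ j * s j = XX s σ k := by rw [hcomp s]; rfl
    have hμr : ∑ j, μ j * r j = R k := by rw [hcomp r]
    calc R k = ∑ j, μ j * r j := hμr.symm
      _ ≤ curve d s r (XX s σ k) := le_curve hr.1 μ hμ01 hμs
      _ ≤ curve d s p (XX s σ k) := hcurve _ (hXmem k hk)
      _ ≤ ∑ j, greedy s τ (XX s σ k) j * p j := curve_le_greedy hs hτ (hXmem k hk)
      _ = G k := rfl
  have hRd : R d = 1 := by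
    rw [hRdef]
    simp only
    rw [sum_extF, Equiv.sum_comp σ r]
    exact hr.2
  set c : ℕ → ℝ := fun m => extF d (fun i => T.mulVec p (σ i) - r (σ i)) m with hcdef
  set v : ℕ → ℝ := fun m => extF d (fun i => a (σ i)) m with hvdef
  have hCk : ∀ k, k ≤ d → ∑ m ∈ range k, c m = G k - R k := by
    intro k hk
    have hcm : ∀ m, c m = extF d (fun i => T.mulVec p (σ i)) m
        - extF d (fun i => r (σ i)) m := by
      intro m
      rw [hcdef]
      exact extF_sub _ _ m
    simp_rw [hcm]
    rw [Finset.sum_sub_distrib, hpartial k hk, hRdef]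
  have hC : ∀ k, k ≤ d → 0 ≤ ∑ m ∈ range k, c m := by
    intro k hk
    rw [hCk k hk]
    have := hR_le_G k hk
    linarith
  have hCd : ∑ m ∈ range d, c m = 0 := by
    rw [hCk d le_rfl, hGd, hRd, sub_self]
  have hvmono : ∀ i j, i ≤ j → j < d → v j ≤ v i := by
    intro i j hij hjd
    have hid : i < d := lt_of_le_of_lt hij hjd
    rw [hvdef]
    simp only
    rw [extF, dif_pos hjd, extF, dif_pos hid]
    exact hσ (Fin.mk_le_mk.2 hij)
  have habel := abel_nonneg d c v hC hCd hvmono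
  have hsum : ∑ m ∈ range d, c m * v m = ∑ i, (T.mulVec p i - r i) * a i := by
    have hcv : ∀ m, c m * v m
        = extF d (fun i => (T.mulVec p (σ i) - r (σ i)) * a (σ i)) m := by
      intro m
      rw [hcdef, hvdef]
      exact extF_mul _ _ m
    simp_rw [hcv]
    rw [sum_extF]
    exact Equiv.sum_comp σ (fun i => (T.mulVec p i - r i) * a i)
  rw [hsum] at habel
  refine ⟨T, hTmem, ?_⟩
  have hfin : ∑ i, (T.mulVec p i - r i) * a i
      = ∑ i, a i * T.mulVec p i - ∑ i, a i * r i := by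
    rw [← Finset.sum_sub_distrib]
    exact Finset.sum_congr rfl fun i _ => by ring
  rw [hfin] at habel
  linarith

end Stmt2Aux
namespace Stmt2Aux

open Finset

lemma tp_compact (d : ℕ) (s : Fin d → ℝ) : IsCompact (TP d s) := by
  have hbox : IsCompact {T : Matrix (Fin d) (Fin d) ℝ | ∀ i j, T i j ∈ Set.Icc (0 : ℝ) 1} := by
    have h : {T : Matrix (Fin d) (Fin d) ℝ | ∀ i j, T i j ∈ Set.Icc (0 : ℝ) 1} =
        Set.univ.pi (fun _ : Fin d => Set.univ.pi fun _ : Fin d => Set.Icc (0 : ℝ) 1) := by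
      ext T
      constructor
      · intro hT i _ j _
        exact hT i j
      · intro hT i j
        exact hT i (Set.mem_univ i) j (Set.mem_univ j)
    rw [h]
    exact isCompact_univ_pi fun _ => isCompact_univ_pi fun _ => isCompact_Icc
  have hclosed : IsClosed (TP d s) := by
    have h1 : IsClosed {T : Matrix (Fin d) (Fin d) ℝ | ∀ i j, 0 ≤ T i j} := by
      have h : {T : Matrix (Fin d) (Fin d) ℝ | ∀ i j, 0 ≤ T i j}
          = ⋂ i, ⋂ j, {T : Matrix (Fin d) (Fin d) ℝ | 0 ≤ T i j} := by
        ext T; simp [Set.mem_iInter]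
      rw [h]
      exact isClosed_iInter fun i => isClosed_iInter fun j =>
        isClosed_le continuous_const (continuous_id.matrix_elem i j)
    have h2 : IsClosed {T : Matrix (Fin d) (Fin d) ℝ | ∀ j, ∑ i, T i j = 1} := by
      have h : {T : Matrix (Fin d) (Fin d) ℝ | ∀ j, ∑ i, T i j = 1}
          = ⋂ j, {T : Matrix (Fin d) (Fin d) ℝ | ∑ i, T i j = 1} := by
        ext T; simp [Set.mem_iInter]
      rw [h]
      exact isClosed_iInter fun j => isClosed_eq
        (continuous_finset_sum _ fun i _ => continuous_id.matrix_elem i j) continuous_const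
    have h3 : IsClosed {T : Matrix (Fin d) (Fin d) ℝ |
        T.mulVec (fun i => s i / ∑ k, s k) = fun i => s i / ∑ k, s k} :=
      isClosed_eq (Continuous.matrix_mulVec continuous_id continuous_const) continuous_const
    have h : TP d s = {T : Matrix (Fin d) (Fin d) ℝ | ∀ i j, 0 ≤ T i j}
        ∩ ({T : Matrix (Fin d) (Fin d) ℝ | ∀ j, ∑ i, T i j = 1}
          ∩ {T : Matrix (Fin d) (Fin d) ℝ |
              T.mulVec (fun i => s i / ∑ k, s k) = fun i => s i / ∑ k, s k}) := by
      ext T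
      simp only [TP, Set.mem_setOf_eq, Set.mem_inter_iff]
    rw [h]
    exact h1.inter (h2.inter h3)
  refine IsCompact.of_isClosed_subset hbox hclosed ?_
  rintro T ⟨h1, h2, -⟩ i j
  refine ⟨h1 i j, ?_⟩
  rw [← h2 j]
  exact Finset.single_le_sum (fun i' _ => h1 i' j) (Finset.mem_univ i)

lemma tp_convex (d : ℕ) (s : Fin d → ℝ) (p : Fin d → ℝ) :
    Convex ℝ ((fun T : Matrix (Fin d) (Fin d) ℝ => T.mulVec p) '' TP d s) := by
  rintro q1 ⟨T1, ⟨hA1, hB1, hC1⟩, rfl⟩ q2 ⟨T2, ⟨hA2, hB2, hC2⟩, rfl⟩ α β hα hβ hαβ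
  refine ⟨α • T1 + β • T2, ⟨fun i j => ?_, fun j => ?_, ?_⟩, ?_⟩
  · simp only [Matrix.add_apply, Matrix.smul_apply, smul_eq_mul]
    exact add_nonneg (mul_nonneg hα (hA1 i j)) (mul_nonneg hβ (hA2 i j))
  · simp only [Matrix.add_apply, Matrix.smul_apply, smul_eq_mul]
    rw [Finset.sum_add_distrib, ← Finset.mul_sum, ← Finset.mul_sum, hB1 j, hB2 j]
    linarith
  · rw [Matrix.add_mulVec, Matrix.smul_mulVec, Matrix.smul_mulVec, hC1, hC2,
      ← add_smul, hαβ, one_smul]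
  · show (α • T1 + β • T2).mulVec p = α • T1.mulVec p + β • T2.mulVec p
    rw [Matrix.add_mulVec, Matrix.smul_mulVec, Matrix.smul_mulVec]

end Stmt2Aux

/-- there is a thermal process mapping `p` to `r` iff `p`
thermomajorizes `r`, i.e. `f_p(x) ≥ f_r(x)` for all `x ∈ [0, Z]`. -/
theorem stmt2 (d : ℕ) (hd : 1 ≤ d) (s : Fin d → ℝ) (hs : ∀ i, 0 < s i)
    (p r : Fin d → ℝ) (hp : ProbVec d p) (hr : ProbVec d r) :
    (∃ T ∈ TP d s, T.mulVec p = r) ↔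
      ∀ x ∈ Set.Icc (0 : ℝ) (∑ i, s i), curve d s r x ≤ curve d s p x := by
  have hZ : 0 < ∑ k, s k :=
    Finset.sum_pos (fun i _ => hs i) ⟨⟨0, hd⟩, Finset.mem_univ _⟩
  constructor
  · rintro ⟨T, ⟨hT1, hT2, hT3⟩, hTp⟩ x hx
    have hTs : ∀ i, ∑ j, T i j * s j = s i := by
      intro i
      have hcongr := congrFun hT3 i
      have hmv : T.mulVec (fun k => s k / ∑ k, s k) i = ∑ j, T i j * (s j / ∑ k, s k) := by
        simp [Matrix.mulVec, dotProduct]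
      rw [hmv] at hcongr
      have h2 : ∑ j, T i j * (s j / ∑ k, s k) = (∑ j, T i j * s j) / ∑ k, s k := by
        rw [Finset.sum_div]
        exact Finset.sum_congr rfl fun j _ => (mul_div_assoc _ _ _).symm
      rw [h2] at hcongr
      have := congrArg (· * (∑ k, s k)) hcongr
      simpa [div_mul_cancel₀, hZ.ne'] using this
    have hTp_i : ∀ i, ∑ j, T i j * p j = r i := by
      intro i
      have := congrFun hTp i
      simpa [Matrix.mulVec, dotProduct] using this
    apply csSup_le
    · refine ⟨∑ i, (x / ∑ k, s k) * r i, fun _ => x / ∑ k, s k,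
        fun i => ⟨div_nonneg hx.1 hZ.le, (div_le_one hZ).2 hx.2⟩, ?_, rfl⟩
      rw [← Finset.mul_sum]
      field_simp
    · rintro y ⟨lam, hlam, hlams, rfl⟩
      set μ : Fin d → ℝ := fun j => ∑ i, lam i * T i j with hμdef
      have hμ01 : ∀ j, μ j ∈ Set.Icc (0 : ℝ) 1 := by
        intro j
        constructor
        · exact Finset.sum_nonneg fun i _ => mul_nonneg (hlam i).1 (hT1 i j)
        · calc ∑ i, lam i * T i j ≤ ∑ i, T i j :=
              Finset.sum_le_sum fun i _ => mul_le_of_le_one_left (hT1 i j) (hlam i).2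
            _ = 1 := hT2 j
      have hswap : ∀ f : Fin d → ℝ,
          ∑ j, μ j * f j = ∑ i, lam i * ∑ j, T i j * f j := by
        intro f
        rw [hμdef]
        simp only [Finset.sum_mul]
        rw [Finset.sum_comm]
        exact Finset.sum_congr rfl fun i _ => by
          rw [Finset.mul_sum]
          exact Finset.sum_congr rfl fun j _ => by ring
      have hμs : ∑ j, μ j * s j = x := by
        rw [hswap s]
        calc ∑ i, lam i * ∑ j, T i j * s j = ∑ i, lam i * s i :=
            Finset.sum_congr rfl fun i _ => by rw [hTs i]
          _ = x := hlams
      have hμp : ∑ j, μ j * p j = ∑ i, lam i * r i := by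
        rw [hswap p]
        exact Finset.sum_congr rfl fun i _ => by rw [hTp_i i]
      rw [← hμp]
      exact Stmt2Aux.le_curve hp.1 μ hμ01 hμs
  · intro hcurve
    have hrS : r ∈ (fun T : Matrix (Fin d) (Fin d) ℝ => T.mulVec p) '' TP d s := by
      by_contra hrS
      have hSclosed : IsClosed ((fun T : Matrix (Fin d) (Fin d) ℝ => T.mulVec p) '' TP d s) :=
        ((Stmt2Aux.tp_compact d s).image
          (Continuous.matrix_mulVec continuous_id continuous_const)).isClosed
      obtain ⟨f, u, hfS, hfr⟩ :=
        geometric_hahn_banach_closed_point (Stmt2Aux.tp_convex d s p) hSclosed hrS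
      set a : Fin d → ℝ := fun i => f (fun j => if i = j then 1 else 0) with hadef
      have hf_eq : ∀ q : Fin d → ℝ, f q = ∑ i, a i * q i := by
        intro q
        conv_lhs => rw [pi_eq_sum_univ q]
        rw [map_sum]
        exact Finset.sum_congr rfl fun i _ => by rw [map_smul, smul_eq_mul, mul_comm, hadef]
      obtain ⟨T, hT, hle⟩ := Stmt2Aux.key hs hp hr hcurve a
      have h1 : f (T.mulVec p) < u := hfS _ ⟨T, hT, rfl⟩
      rw [hf_eq] at h1
      rw [hf_eq] at hfr
      linarith
    obtain ⟨T, hT, hTp⟩ := hrS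
    exact ⟨T, hT, hTp⟩
end

section
/- A matrix M ∈ T(r,c) is an extreme point of T(r,c) if and only if its support graph is acyclic (a forest). Moreover, if all entries of r and of c are strictly positive, then the support graph of every extreme point of T(r,c) has no isolated vertices. -/
/-- The transportation polytope `T(r,c)`. -/
def TransportPolytope (m n : ℕ) (r : Fin m → ℝ) (c : Fin n → ℝ) :
    Set (Matrix (Fin m) (Fin n) ℝ) :=
  {M | (∀ i j, 0 ≤ M i j) ∧ (∀ i, ∑ j, M i j = r i) ∧ (∀ j, ∑ i, M i j = c j)}

/-- The bipartite support graph of a matrix `M`: vertices are rows (`Sum.inl`) and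
columns (`Sum.inr`), with an edge between row `i` and column `j` iff `M i j ≠ 0`. -/
def supportGraph (m n : ℕ) (M : Matrix (Fin m) (Fin n) ℝ) :
    SimpleGraph (Fin m ⊕ Fin n) :=
  SimpleGraph.fromRel fun a b =>
    match a, b with
    | Sum.inl i, Sum.inr j => M i j ≠ 0
    | _, _ => False

open SimpleGraph in
lemma supportGraph_adj_inl_inr {m n : ℕ} {M : Matrix (Fin m) (Fin n) ℝ} {i : Fin m} {j : Fin n} :
    (supportGraph m n M).Adj (Sum.inl i) (Sum.inr j) ↔ M i j ≠ 0 := by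
  have h : (supportGraph m n M).Adj (Sum.inl i) (Sum.inr j) ↔
      (Sum.inl i : Fin m ⊕ Fin n) ≠ Sum.inr j ∧ ((M i j ≠ 0) ∨ False) :=
    SimpleGraph.fromRel_adj _ _ _
  simp only [h, or_false, ne_eq, and_iff_right_iff_imp]
  intro _ hcontra
  exact absurd hcontra (by simp)

open SimpleGraph in
lemma supportGraph_adj_cases {m n : ℕ} {M : Matrix (Fin m) (Fin n) ℝ}
    {a b : Fin m ⊕ Fin n} (h : (supportGraph m n M).Adj a b) :
    ∃ i j, M i j ≠ 0 ∧ ((a = Sum.inl i ∧ b = Sum.inr j) ∨ (a = Sum.inr j ∧ b = Sum.inl i)) := by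
  rcases a with i | j <;> rcases b with i' | j'
  · exact absurd h (by
      have : (supportGraph m n M).Adj (Sum.inl i) (Sum.inl i') ↔
          (Sum.inl i : Fin m ⊕ Fin n) ≠ Sum.inl i' ∧ (False ∨ False) :=
        SimpleGraph.fromRel_adj _ _ _
      simp [this])
  · exact ⟨i, j', supportGraph_adj_inl_inr.mp h, Or.inl ⟨rfl, rfl⟩⟩
  · exact ⟨i', j, supportGraph_adj_inl_inr.mp h.symm, Or.inr ⟨rfl, rfl⟩⟩
  · exact absurd h (by
      have : (supportGraph m n M).Adj (Sum.inr j) (Sum.inr j') ↔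
          (Sum.inr j : Fin m ⊕ Fin n) ≠ Sum.inr j' ∧ (False ∨ False) :=
        SimpleGraph.fromRel_adj _ _ _
      simp [this])
open SimpleGraph in
/-- Walk along a sequence of pairwise adjacent vertices. -/
def seqWalk {V : Type*} (G : SimpleGraph V) (v : ℕ → V)
    (hadj : ∀ t, G.Adj (v t) (v (t + 1))) : ∀ (d a : ℕ), G.Walk (v a) (v (a + d))
  | 0, _ => Walk.nil
  | (d + 1), a =>
      (Walk.cons (hadj a) (seqWalk G v hadj d (a + 1))).copy rfl (congrArg v (by omega))

open SimpleGraph in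
lemma seqWalk_edges {V : Type*} (G : SimpleGraph V) (v : ℕ → V)
    (hadj : ∀ t, G.Adj (v t) (v (t + 1))) :
    ∀ (d a : ℕ), ∀ e ∈ (seqWalk G v hadj d a).edges,
      ∃ t, a ≤ t ∧ t < a + d ∧ e = s(v t, v (t + 1))
  | 0, a => by simp [seqWalk]
  | (d + 1), a => by
    intro e he
    rw [seqWalk, Walk.edges_copy, Walk.edges_cons] at he
    rcases List.mem_cons.mp he with h | h
    · exact ⟨a, le_refl a, by omega, h⟩
    · obtain ⟨t, h1, h2, h3⟩ := seqWalk_edges G v hadj d (a + 1) e h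
      exact ⟨t, by omega, by omega, h3⟩

open SimpleGraph in
lemma dart_flow {V : Type*} [DecidableEq V] {G : SimpleGraph V} {a b : V} (p : G.Walk a b) (u : V) :
    (p.darts.map (fun d => (if d.toProd.1 = u then (1 : ℝ) else 0)
      - (if d.toProd.2 = u then (1 : ℝ) else 0))).sum
      = (if a = u then (1 : ℝ) else 0) - (if b = u then (1 : ℝ) else 0) := by
  induction p with
  | nil => simp
  | cons h p ih =>
    simp only [Walk.darts_cons, List.map_cons, List.sum_cons, ih]
    ring

/-- The adjacency relation of the support graph of `D`. -/
def dadj {m n : ℕ} (D : Matrix (Fin m) (Fin n) ℝ) :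
    (Fin m ⊕ Fin n) → (Fin m ⊕ Fin n) → Prop
  | Sum.inl i, Sum.inr j => D i j ≠ 0
  | Sum.inr j, Sum.inl i => D i j ≠ 0
  | _, _ => False

lemma dadj_step {m n : ℕ} {D : Matrix (Fin m) (Fin n) ℝ}
    (hrow : ∀ i, ∑ j, D i j = 0) (hcol : ∀ j, ∑ i, D i j = 0)
    {u w : Fin m ⊕ Fin n} (h : dadj D u w) : ∃ w', dadj D w w' ∧ w' ≠ u := by
  rcases u with i | j <;> rcases w with i' | j' <;> simp only [dadj] at h
  · -- u = inl i, w = inr j'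
    by_contra hno
    push_neg at hno
    have hall : ∀ i'', i'' ≠ i → D i'' j' = 0 := by
      intro i'' hi''
      by_contra hD'
      have := hno (Sum.inl i'') hD'
      exact hi'' (Sum.inl.inj this)
    have hs : ∑ i'', D i'' j' = D i j' := by
      refine Finset.sum_eq_single i (fun b _ hb => hall b hb) (by simp)
    rw [hcol j'] at hs
    exact h hs.symm
  · -- u = inr j, w = inl i'
    by_contra hno
    push_neg at hno
    have hall : ∀ j'', j'' ≠ j → D i' j'' = 0 := by
      intro j'' hj''
      by_contra hD'
      have := hno (Sum.inr j'') hD'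
      exact hj'' (Sum.inr.inj this)
    have hs : ∑ j'', D i' j'' = D i' j := by
      refine Finset.sum_eq_single j (fun b _ hb => hall b hb) (by simp)
    rw [hrow i'] at hs
    exact h hs.symm

open SimpleGraph in
lemma dadj_to_adj {m n : ℕ} {M D : Matrix (Fin m) (Fin n) ℝ}
    (hsupp : ∀ i j, M i j = 0 → D i j = 0) {u w : Fin m ⊕ Fin n}
    (h : dadj D u w) : (supportGraph m n M).Adj u w := by
  rcases u with i | j <;> rcases w with i' | j' <;> simp only [dadj] at h
  · exact supportGraph_adj_inl_inr.mpr (fun h0 => h (hsupp _ _ h0))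
  · exact (supportGraph_adj_inl_inr.mpr (fun h0 => h (hsupp _ _ h0))).symm
open SimpleGraph in
lemma D_eq_zero_of_acyclic {m n : ℕ} {M D : Matrix (Fin m) (Fin n) ℝ}
    (hac : (supportGraph m n M).IsAcyclic)
    (hrow : ∀ i, ∑ j, D i j = 0) (hcol : ∀ j, ∑ i, D i j = 0)
    (hsupp : ∀ i j, M i j = 0 → D i j = 0) : D = 0 := by
  classical
  by_contra hD
  obtain ⟨i0, j0, h0⟩ : ∃ i j, D i j ≠ 0 := by
    by_contra hno
    push_neg at hno
    exact hD (by ext i j; simpa using hno i j)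
  have h0' : dadj D (Sum.inl i0) (Sum.inr j0) := h0
  -- the greedy sequence of pairs
  let p : ℕ → (Fin m ⊕ Fin n) × (Fin m ⊕ Fin n) := fun t =>
    Nat.rec ((Sum.inl i0 : Fin m ⊕ Fin n), (Sum.inr j0 : Fin m ⊕ Fin n))
      (fun _ q => if h : dadj D q.1 q.2
        then (q.2, Classical.choose (dadj_step hrow hcol h)) else q) t
  have hpst : ∀ t, p (t + 1) = if h : dadj D (p t).1 (p t).2
      then ((p t).2, Classical.choose (dadj_step hrow hcol h)) else p t := fun _ => rfl
  have hinv : ∀ t, dadj D (p t).1 (p t).2 := by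
    intro t
    induction t with
    | zero => exact h0'
    | succ t ih =>
      rw [hpst t, dif_pos ih]
      exact (Classical.choose_spec (dadj_step hrow hcol ih)).1
  have hvst : ∀ t, p (t + 1) = ((p t).2, Classical.choose (dadj_step hrow hcol (hinv t))) := by
    intro t; rw [hpst t, dif_pos (hinv t)]
  let v : ℕ → Fin m ⊕ Fin n := fun t => (p t).1
  have hv1 : ∀ t, v (t + 1) = (p t).2 := by
    intro t; show (p (t + 1)).1 = (p t).2; rw [hvst t]
  have hadjD : ∀ t, dadj D (v t) (v (t + 1)) := by
    intro t; rw [hv1 t]; exact hinv t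
  have hne2 : ∀ t, v (t + 2) ≠ v t := by
    intro t
    have h1 : v (t + 2) = Classical.choose (dadj_step hrow hcol (hinv t)) := by
      rw [hv1 (t + 1), hvst t]
    rw [h1]
    exact (Classical.choose_spec (dadj_step hrow hcol (hinv t))).2
  have hadjG : ∀ t, (supportGraph m n M).Adj (v t) (v (t + 1)) :=
    fun t => dadj_to_adj hsupp (hadjD t)
  -- pigeonhole
  obtain ⟨x, y, hxy, hvxy⟩ := Finite.exists_ne_map_eq_of_infinite v
  have hP : ∃ l, ∃ k, k < l ∧ v k = v l := by
    rcases lt_or_gt_of_ne hxy with h | h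
    · exact ⟨y, x, h, hvxy⟩
    · exact ⟨x, y, h, hvxy.symm⟩
  set l0 := Nat.find hP with hl0
  obtain ⟨k0, hk0l, hvk0⟩ := Nat.find_spec hP
  rw [← hl0] at hk0l hvk0
  have hinj : ∀ a b, a < l0 → b < l0 → v a = v b → a = b := by
    intro a b ha hb hvab
    by_contra hne
    rcases Nat.lt_or_ge a b with h | h
    · exact Nat.find_min hP hb ⟨a, h, hvab⟩
    · exact Nat.find_min hP ha ⟨b, by omega, hvab.symm⟩
  have hl1 : l0 ≠ k0 + 1 := by
    intro h
    rw [h] at hvk0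
    exact (hadjG k0).ne hvk0
  have hl2 : l0 ≠ k0 + 2 := by
    intro h
    rw [h] at hvk0
    exact hne2 k0 hvk0.symm
  have hl3 : k0 + 3 ≤ l0 := by omega
  -- the walk from v (k0+1) to v l0 = v k0
  have hend : (k0 + 1) + (l0 - (k0 + 1)) = l0 := by omega
  let w : (supportGraph m n M).Walk (v (k0 + 1)) (v ((k0 + 1) + (l0 - (k0 + 1)))) :=
    seqWalk _ v hadjG (l0 - (k0 + 1)) (k0 + 1)
  let w' : (supportGraph m n M).Walk (v (k0 + 1)) (v k0) :=
    w.copy rfl (by rw [hend]; exact hvk0.symm)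
  have hedges : ∀ e ∈ w'.edges, ∃ t, k0 + 1 ≤ t ∧ t < l0 ∧ e = s(v t, v (t + 1)) := by
    intro e he
    rw [Walk.edges_copy] at he
    obtain ⟨t, h1, h2, h3⟩ := seqWalk_edges _ v hadjG _ _ e he
    exact ⟨t, h1, by omega, h3⟩
  have hnotmem : s(v k0, v (k0 + 1)) ∉ (w'.toPath).val.edges := by
    intro hmem
    obtain ⟨t, ht1, ht2, ht3⟩ := hedges _ (Walk.edges_toPath_subset w' hmem)
    rw [Sym2.eq_iff] at ht3
    rcases ht3 with ⟨ha, hb⟩ | ⟨ha, hb⟩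
    · have := hinj t k0 ht2 (by omega) ha.symm
      omega
    · -- v k0 = v (t+1), v (k0+1) = v t
      rcases Nat.lt_or_ge (t + 1) l0 with h | h
      · have := hinj (t + 1) k0 h (by omega) ha.symm
        omega
      · have ht1' : t + 1 = l0 := by omega
        have : t = k0 + 1 := hinj t (k0 + 1) ht2 (by omega) hb.symm
        omega
  have hcyc := SimpleGraph.Path.cons_isCycle w'.toPath (hadjG k0) hnotmem
  exact hac _ hcyc
open SimpleGraph in
lemma dart_cases {m n : ℕ} {M : Matrix (Fin m) (Fin n) ℝ} (d : (supportGraph m n M).Dart) :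
    ∃ i j, M i j ≠ 0 ∧ (d.toProd = (Sum.inl i, Sum.inr j) ∨ d.toProd = (Sum.inr j, Sum.inl i)) := by
  obtain ⟨i, j, hM, hc | hc⟩ := supportGraph_adj_cases d.adj
  · exact ⟨i, j, hM, Or.inl (Prod.ext hc.1 hc.2)⟩
  · exact ⟨i, j, hM, Or.inr (Prod.ext hc.1 hc.2)⟩

open SimpleGraph in
lemma dart_sum1 {m n : ℕ} {M : Matrix (Fin m) (Fin n) ℝ} (d : (supportGraph m n M).Dart)
    (i : Fin m) :
    ∑ j, (if d.toProd = (Sum.inl i, Sum.inr j) then (1 : ℝ) else 0)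
      = if d.toProd.1 = Sum.inl i then 1 else 0 := by
  obtain ⟨i', j', _, hd | hd⟩ := dart_cases d <;> rw [hd]
  · by_cases hi : i' = i
    · subst hi; simp
    · simp [Prod.ext_iff, hi]
  · simp

open SimpleGraph in
lemma dart_sum2 {m n : ℕ} {M : Matrix (Fin m) (Fin n) ℝ} (d : (supportGraph m n M).Dart)
    (i : Fin m) :
    ∑ j, (if d.toProd = (Sum.inr j, Sum.inl i) then (1 : ℝ) else 0)
      = if d.toProd.2 = Sum.inl i then 1 else 0 := by
  obtain ⟨i', j', _, hd | hd⟩ := dart_cases d <;> rw [hd]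
  · simp
  · by_cases hi : i' = i
    · subst hi; simp
    · simp [Prod.ext_iff, hi]

open SimpleGraph in
lemma dart_sum3 {m n : ℕ} {M : Matrix (Fin m) (Fin n) ℝ} (d : (supportGraph m n M).Dart)
    (j : Fin n) :
    ∑ i, (if d.toProd = (Sum.inl i, Sum.inr j) then (1 : ℝ) else 0)
      = if d.toProd.2 = Sum.inr j then 1 else 0 := by
  obtain ⟨i', j', _, hd | hd⟩ := dart_cases d <;> rw [hd]
  · by_cases hj : j' = j
    · subst hj; simp
    · simp [Prod.ext_iff, hj]
  · simp

open SimpleGraph in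
lemma dart_sum4 {m n : ℕ} {M : Matrix (Fin m) (Fin n) ℝ} (d : (supportGraph m n M).Dart)
    (j : Fin n) :
    ∑ i, (if d.toProd = (Sum.inr j, Sum.inl i) then (1 : ℝ) else 0)
      = if d.toProd.1 = Sum.inr j then 1 else 0 := by
  obtain ⟨i', j', _, hd | hd⟩ := dart_cases d <;> rw [hd]
  · simp
  · by_cases hj : j' = j
    · subst hj; simp
    · simp [Prod.ext_iff, hj]

lemma sum_list_swap {α β : Type*} [Fintype β] (l : List α) (g : β → α → ℝ) :
    ∑ b, (l.map (g b)).sum = (l.map (fun a => ∑ b, g b a)).sum := by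
  induction l with
  | nil => simp
  | cons a l ih => simp [Finset.sum_add_distrib, ih]

open SimpleGraph in
lemma dart_flow' {V : Type*} [DecidableEq V] {G : SimpleGraph V} {a b : V} (p : G.Walk a b)
    (u : V) :
    (p.darts.map (fun d => (if d.toProd.2 = u then (1 : ℝ) else 0)
      - (if d.toProd.1 = u then (1 : ℝ) else 0))).sum
      = (if b = u then (1 : ℝ) else 0) - (if a = u then (1 : ℝ) else 0) := by
  induction p with
  | nil => simp
  | cons h p ih =>
    simp only [Walk.darts_cons, List.map_cons, List.sum_cons, ih]
    ring

set_option maxHeartbeats 2000000 in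
open SimpleGraph in
lemma exists_D_of_not_acyclic {m n : ℕ} {M : Matrix (Fin m) (Fin n) ℝ}
    (h : ¬(supportGraph m n M).IsAcyclic) :
    ∃ D : Matrix (Fin m) (Fin n) ℝ, D ≠ 0 ∧ (∀ i, ∑ j, D i j = 0) ∧
      (∀ j, ∑ i, D i j = 0) ∧ (∀ i j, M i j = 0 → D i j = 0) := by
  classical
  rw [SimpleGraph.IsAcyclic] at h
  push_neg at h
  obtain ⟨x, c, hc⟩ := h
  have hrowsum : ∀ i : Fin m, ∑ j, (c.darts.map (fun d =>
      (if d.toProd = (Sum.inl i, Sum.inr j) then (1 : ℝ) else 0)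
      - (if d.toProd = (Sum.inr j, Sum.inl i) then (1 : ℝ) else 0))).sum = 0 := by
    intro i
    rw [sum_list_swap c.darts (fun j d =>
      (if d.toProd = (Sum.inl i, Sum.inr j) then (1 : ℝ) else 0)
      - (if d.toProd = (Sum.inr j, Sum.inl i) then (1 : ℝ) else 0))]
    have hcong : ∀ d ∈ c.darts,
        (∑ j, ((if d.toProd = (Sum.inl i, Sum.inr j) then (1 : ℝ) else 0)
          - (if d.toProd = (Sum.inr j, Sum.inl i) then (1 : ℝ) else 0)))
        = (if d.toProd.1 = Sum.inl i then (1 : ℝ) else 0)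
          - (if d.toProd.2 = Sum.inl i then (1 : ℝ) else 0) := by
      intro d _
      rw [Finset.sum_sub_distrib, dart_sum1, dart_sum2]
    rw [List.map_congr_left hcong, dart_flow]
    simp
  have hcolsum : ∀ j : Fin n, ∑ i, (c.darts.map (fun d =>
      (if d.toProd = (Sum.inl i, Sum.inr j) then (1 : ℝ) else 0)
      - (if d.toProd = (Sum.inr j, Sum.inl i) then (1 : ℝ) else 0))).sum = 0 := by
    intro j
    rw [sum_list_swap c.darts (fun i d =>
      (if d.toProd = (Sum.inl i, Sum.inr j) then (1 : ℝ) else 0)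
      - (if d.toProd = (Sum.inr j, Sum.inl i) then (1 : ℝ) else 0))]
    have hcong : ∀ d ∈ c.darts,
        (∑ i, ((if d.toProd = (Sum.inl i, Sum.inr j) then (1 : ℝ) else 0)
          - (if d.toProd = (Sum.inr j, Sum.inl i) then (1 : ℝ) else 0)))
        = (if d.toProd.2 = Sum.inr j then (1 : ℝ) else 0)
          - (if d.toProd.1 = Sum.inr j then (1 : ℝ) else 0) := by
      intro d _
      rw [Finset.sum_sub_distrib, dart_sum3, dart_sum4]
    rw [List.map_congr_left hcong, dart_flow']
    simp
  have hsuppD : ∀ i j, M i j = 0 → (c.darts.map (fun d =>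
      (if d.toProd = (Sum.inl i, Sum.inr j) then (1 : ℝ) else 0)
      - (if d.toProd = (Sum.inr j, Sum.inl i) then (1 : ℝ) else 0))).sum = 0 := by
    intro i j hM0
    apply List.sum_eq_zero
    intro z hz
    obtain ⟨d, _, rfl⟩ := List.mem_map.mp hz
    rw [if_neg, if_neg]
    · ring
    · intro hEq
      have hadj := d.adj
      rw [hEq] at hadj
      exact supportGraph_adj_inl_inr.mp hadj.symm hM0
    · intro hEq
      have hadj := d.adj
      rw [hEq] at hadj
      exact supportGraph_adj_inl_inr.mp hadj hM0
  have hne0 : ∃ i j, (c.darts.map (fun d =>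
      (if d.toProd = (Sum.inl i, Sum.inr j) then (1 : ℝ) else 0)
      - (if d.toProd = (Sum.inr j, Sum.inl i) then (1 : ℝ) else 0))).sum ≠ 0 := by
    cases c with
    | nil => exact absurd hc Walk.IsCycle.not_of_nil
    | @cons _ y _ hxy q =>
      have hnd : (Walk.cons hxy q).edges.Nodup := hc.isCircuit.isTrail.edges_nodup
      rw [Walk.edges_cons, List.nodup_cons] at hnd
      have hne : s(x, y) ∉ q.edges := hnd.1
      obtain ⟨i, j, hMij, ⟨hX, hY⟩ | ⟨hX, hY⟩⟩ := supportGraph_adj_cases hxy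
      · -- x = inl i, y = inr j : entry = 1
        refine ⟨i, j, ?_⟩
        rw [Walk.darts_cons, List.map_cons, List.sum_cons]
        have h1 : (Dart.mk (x, y) hxy).toProd = ((Sum.inl i : Fin m ⊕ Fin n), (Sum.inr j : Fin m ⊕ Fin n)) :=
          Prod.ext hX hY
        rw [if_pos h1, if_neg (by rw [h1]; simp)]
        have h2 : (List.map (fun d =>
            (if d.toProd = (Sum.inl i, Sum.inr j) then (1 : ℝ) else 0)
            - (if d.toProd = (Sum.inr j, Sum.inl i) then (1 : ℝ) else 0)) q.darts).sum = 0 := by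
          apply List.sum_eq_zero
          intro z hz
          obtain ⟨d, hd, rfl⟩ := List.mem_map.mp hz
          have hedge : d.edge ∈ q.edges := List.mem_map_of_mem hd
          rw [if_neg, if_neg]
          · ring
          · intro hEq
            apply hne
            have h3 : d.edge = s(Sum.inr j, Sum.inl i) := dart_edge_eq_mk'_iff.mpr (Or.inl hEq)
            have h4 : s(x, y) = d.edge := by rw [hX, hY, h3]; exact Sym2.eq_swap
            rw [h4]; exact hedge
          · intro hEq
            apply hne
            have h3 : d.edge = s(Sum.inl i, Sum.inr j) := dart_edge_eq_mk'_iff.mpr (Or.inl hEq)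
            have h4 : s(x, y) = d.edge := by rw [hX, hY, h3]
            rw [h4]; exact hedge
        rw [h2]
        norm_num
      · -- x = inr j, y = inl i : entry = -1
        refine ⟨i, j, ?_⟩
        rw [Walk.darts_cons, List.map_cons, List.sum_cons]
        have h1 : (Dart.mk (x, y) hxy).toProd = ((Sum.inr j : Fin m ⊕ Fin n), (Sum.inl i : Fin m ⊕ Fin n)) :=
          Prod.ext hX hY
        rw [if_pos h1, if_neg (by rw [h1]; simp)]
        have h2 : (List.map (fun d =>
            (if d.toProd = (Sum.inl i, Sum.inr j) then (1 : ℝ) else 0)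
            - (if d.toProd = (Sum.inr j, Sum.inl i) then (1 : ℝ) else 0)) q.darts).sum = 0 := by
          apply List.sum_eq_zero
          intro z hz
          obtain ⟨d, hd, rfl⟩ := List.mem_map.mp hz
          have hedge : d.edge ∈ q.edges := List.mem_map_of_mem hd
          rw [if_neg, if_neg]
          · ring
          · intro hEq
            apply hne
            have h3 : d.edge = s(Sum.inr j, Sum.inl i) := dart_edge_eq_mk'_iff.mpr (Or.inl hEq)
            have h4 : s(x, y) = d.edge := by rw [hX, hY, h3]
            rw [h4]; exact hedge
          · intro hEq
            apply hne
            have h3 : d.edge = s(Sum.inl i, Sum.inr j) := dart_edge_eq_mk'_iff.mpr (Or.inl hEq)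
            have h4 : s(x, y) = d.edge := by rw [hX, hY, h3]; exact Sym2.eq_swap
            rw [h4]; exact hedge
        rw [h2]
        norm_num
  refine ⟨fun i j => (c.darts.map (fun d =>
      (if d.toProd = (Sum.inl i, Sum.inr j) then (1 : ℝ) else 0)
      - (if d.toProd = (Sum.inr j, Sum.inl i) then (1 : ℝ) else 0))).sum,
    ?_, hrowsum, hcolsum, hsuppD⟩
  intro hzero
  obtain ⟨i, j, hij⟩ := hne0
  apply hij
  have := congrFun (congrFun hzero i) j
  simpa using this
open SimpleGraph in
lemma D_zero_of_extreme {m n : ℕ} {r : Fin m → ℝ} {c : Fin n → ℝ}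
    {M : Matrix (Fin m) (Fin n) ℝ}
    (hext : M ∈ Set.extremePoints ℝ (TransportPolytope m n r c))
    (D : Matrix (Fin m) (Fin n) ℝ)
    (hrow : ∀ i, ∑ j, D i j = 0) (hcol : ∀ j, ∑ i, D i j = 0)
    (hsupp : ∀ i j, M i j = 0 → D i j = 0) : D = 0 := by
  classical
  obtain ⟨hMmem, hextp⟩ := hext
  obtain ⟨hMpos, hMrow, hMcol⟩ := hMmem
  by_cases hne : (Finset.univ : Finset (Fin m × Fin n)).Nonempty
  swap
  · ext i j
    exact absurd (Finset.mem_univ (i, j)) (fun hmem => hne ⟨_, hmem⟩)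
  set g : Fin m × Fin n → ℝ := fun p => if D p.1 p.2 = 0 then 1 else M p.1 p.2 / |D p.1 p.2|
    with hg
  set ε : ℝ := Finset.univ.inf' hne g with hε
  have hMpos' : ∀ i j, D i j ≠ 0 → 0 < M i j :=
    fun i j hD => lt_of_le_of_ne (hMpos i j) (fun h => hD (hsupp i j h.symm))
  have hεpos : 0 < ε := by
    rw [hε, Finset.lt_inf'_iff]
    intro p _
    by_cases hD : D p.1 p.2 = 0
    · simp [hg, hD]
    · simp only [hg, if_neg hD]
      exact div_pos (hMpos' _ _ hD) (abs_pos.mpr hD)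
  have hbound : ∀ i j, ε * |D i j| ≤ M i j := by
    intro i j
    by_cases hD : D i j = 0
    · simpa [hD] using hMpos i j
    · have h1 : ε ≤ M i j / |D i j| := by
        have h2 := Finset.inf'_le g (Finset.mem_univ (i, j))
        rw [← hε] at h2
        simpa [hg, hD] using h2
      calc ε * |D i j| ≤ (M i j / |D i j|) * |D i j| :=
            mul_le_mul_of_nonneg_right h1 (abs_nonneg _)
        _ = M i j := div_mul_cancel₀ _ (ne_of_gt (abs_pos.mpr hD))
  have habs : ∀ i j, -(ε * |D i j|) ≤ ε * D i j ∧ ε * D i j ≤ ε * |D i j| := by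
    intro i j
    constructor
    · nlinarith [neg_abs_le (D i j), hεpos.le]
    · nlinarith [le_abs_self (D i j), hεpos.le]
  set X : Matrix (Fin m) (Fin n) ℝ := fun i j => M i j + ε * D i j with hXd
  set Y : Matrix (Fin m) (Fin n) ℝ := fun i j => M i j - ε * D i j with hYd
  have hXmem : X ∈ TransportPolytope m n r c := by
    refine ⟨fun i j => ?_, fun i => ?_, fun j => ?_⟩
    · have h1 := (habs i j).1
      have h2 := hbound i j
      show 0 ≤ M i j + ε * D i j
      linarith
    · show ∑ j, (M i j + ε * D i j) = r i
      rw [Finset.sum_add_distrib, ← Finset.mul_sum, hrow, hMrow]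
      ring
    · show ∑ i, (M i j + ε * D i j) = c j
      rw [Finset.sum_add_distrib, ← Finset.mul_sum, hcol, hMcol]
      ring
  have hYmem : Y ∈ TransportPolytope m n r c := by
    refine ⟨fun i j => ?_, fun i => ?_, fun j => ?_⟩
    · have h1 := (habs i j).2
      have h2 := hbound i j
      show 0 ≤ M i j - ε * D i j
      linarith
    · show ∑ j, (M i j - ε * D i j) = r i
      rw [Finset.sum_sub_distrib, ← Finset.mul_sum, hrow, hMrow]
      ring
    · show ∑ i, (M i j - ε * D i j) = c j
      rw [Finset.sum_sub_distrib, ← Finset.mul_sum, hcol, hMcol]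
      ring
  have hseg : M ∈ openSegment ℝ X Y := by
    refine ⟨1/2, 1/2, by norm_num, by norm_num, by norm_num, ?_⟩
    ext i j
    show (1/2 : ℝ) * X i j + (1/2 : ℝ) * Y i j = M i j
    show (1/2 : ℝ) * (M i j + ε * D i j) + (1/2 : ℝ) * (M i j - ε * D i j) = M i j
    ring
  have hXM := hextp hXmem hYmem hseg
  ext i j
  have h5 : M i j + ε * D i j = M i j := congrFun (congrFun hXM i) j
  have h6 : ε * D i j = 0 := by linarith
  show D i j = 0
  exact (mul_eq_zero.mp h6).resolve_left (ne_of_gt hεpos)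
/-- `M ∈ T(r,c)` is an extreme point iff its support graph is acyclic
(a forest); moreover, if all entries of `r` and of `c` are strictly positive then the
support graph of every extreme point has no isolated vertices. -/
theorem stmt5 (m n : ℕ) (r : Fin m → ℝ) (c : Fin n → ℝ)
    (hr : ∀ i, 0 ≤ r i) (hc : ∀ j, 0 ≤ c j) (hsum : ∑ i, r i = ∑ j, c j)
    (M : Matrix (Fin m) (Fin n) ℝ) (hM : M ∈ TransportPolytope m n r c) :
    (M ∈ Set.extremePoints ℝ (TransportPolytope m n r c) ↔
      (supportGraph m n M).IsAcyclic) ∧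
    ((∀ i, 0 < r i) → (∀ j, 0 < c j) →
      M ∈ Set.extremePoints ℝ (TransportPolytope m n r c) →
      ∀ v, ∃ w, (supportGraph m n M).Adj v w) := by
  obtain ⟨hMpos, hMrow, hMcol⟩ := hM
  constructor
  · constructor
    · intro hext
      by_contra hnac
      obtain ⟨D, hD0, hr', hc', hs'⟩ := exists_D_of_not_acyclic hnac
      exact hD0 (D_zero_of_extreme hext D hr' hc' hs')
    · intro hac
      refine ⟨⟨hMpos, hMrow, hMcol⟩, ?_⟩
      intro X hX Y hY hseg
      obtain ⟨a, b, ha, hb, hab, habsum⟩ := hseg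
      obtain ⟨hXpos, hXrow, hXcol⟩ := hX
      obtain ⟨hYpos, hYrow, hYcol⟩ := hY
      have hentry : ∀ i j, a * X i j + b * Y i j = M i j := by
        intro i j
        have := congrFun (congrFun habsum i) j
        simpa [Matrix.add_apply, Matrix.smul_apply] using this
      have hsupp : ∀ i j, M i j = 0 → (X - Y) i j = 0 := by
        intro i j h0
        have h1 := hentry i j
        rw [h0] at h1
        have hX0 : X i j = 0 := by nlinarith [hXpos i j, hYpos i j]
        have hY0 : Y i j = 0 := by nlinarith [hXpos i j, hYpos i j]
        simp [Matrix.sub_apply, hX0, hY0]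
      have hrowD : ∀ i, ∑ j, (X - Y) i j = 0 := by
        intro i
        simp only [Matrix.sub_apply]
        rw [Finset.sum_sub_distrib, hXrow, hYrow]
        ring
      have hcolD : ∀ j, ∑ i, (X - Y) i j = 0 := by
        intro j
        simp only [Matrix.sub_apply]
        rw [Finset.sum_sub_distrib, hXcol, hYcol]
        ring
      have hD := D_eq_zero_of_acyclic hac hrowD hcolD hsupp
      have hXY : X = Y := sub_eq_zero.mp hD
      have hXM : X = M := by
        ext i j
        have h1 := hentry i j
        have hYX : Y i j = X i j := by rw [hXY]
        rw [hYX] at h1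
        calc X i j = (a + b) * X i j := by rw [hab]; ring
          _ = a * X i j + b * X i j := by ring
          _ = M i j := h1
      exact hXM
  · intro hrpos hcpos _ v
    rcases v with i | j
    · have hs := hMrow i
      have hex : ∃ j, M i j ≠ 0 := by
        by_contra hno
        push_neg at hno
        rw [Finset.sum_eq_zero (fun j _ => hno j)] at hs
        exact absurd hs.symm (ne_of_gt (hrpos i))
      obtain ⟨j, hj⟩ := hex
      exact ⟨Sum.inr j, supportGraph_adj_inl_inr.mpr hj⟩
    · have hs := hMcol j
      have hex : ∃ i, M i j ≠ 0 := by
        by_contra hno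
        push_neg at hno
        rw [Finset.sum_eq_zero (fun i _ => hno i)] at hs
        exact absurd hs.symm (ne_of_gt (hcpos j))
      obtain ⟨i, hi⟩ := hex
      exact ⟨Sum.inl i, (supportGraph_adj_inl_inr.mpr hi).symm⟩
end

section
/- Every extreme point of TP(d,s) has at most 2d − 1 nonzero entries. -/
/-- every extreme point of `TP(d,s)` has at most `2d - 1` nonzero
entries. -/
theorem stmt7 (d : ℕ) (hd : 1 ≤ d) (s : Fin d → ℝ) (hs : ∀ i, 0 < s i)
    (T : Matrix (Fin d) (Fin d) ℝ) (hT : T ∈ Set.extremePoints ℝ (TP d s)) :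
    {ij : Fin d × Fin d | T ij.1 ij.2 ≠ 0}.ncard ≤ 2 * d - 1 := by
  classical
  have hne : Nonempty (Fin d) := ⟨⟨0, hd⟩⟩
  by_contra hcon
  push_neg at hcon
  set g : Fin d → ℝ := fun i => s i / ∑ k, s k with hg
  obtain ⟨hTmem, hext⟩ := hT
  obtain ⟨hpos, hcol, hfix⟩ := hTmem
  -- the support as a finset
  set S : Finset (Fin d × Fin d) :=
    Finset.univ.filter (fun ij => T ij.1 ij.2 ≠ 0) with hS
  have hncard : {ij : Fin d × Fin d | T ij.1 ij.2 ≠ 0}.ncard = S.card := by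
    rw [Set.ncard_eq_toFinset_card']
    congr 1
    ext ij
    simp [hS]
  rw [hncard] at hcon
  have hcard : 2 * d ≤ S.card := by omega
  -- linear maps
  let L1 : Matrix (Fin d) (Fin d) ℝ →ₗ[ℝ] (Fin d → ℝ) :=
    { toFun := fun Δ => fun j => ∑ i, Δ i j
      map_add' := by
        intro A B; funext j; simp [Finset.sum_add_distrib]
      map_smul' := by
        intro c A; funext j; simp [Finset.mul_sum] }
  let L2 : Matrix (Fin d) (Fin d) ℝ →ₗ[ℝ] (Fin d → ℝ) :=
    { toFun := fun Δ => Δ.mulVec g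
      map_add' := by intro A B; simp [Matrix.add_mulVec]
      map_smul' := by intro c A; simp [Matrix.smul_mulVec] }
  let L := L1.prod L2
  let E : ({x // x ∈ S} → ℝ) →ₗ[ℝ] Matrix (Fin d) (Fin d) ℝ :=
    { toFun := fun x => fun i j => if h : (i, j) ∈ S then x ⟨(i, j), h⟩ else 0
      map_add' := by
        intro x y; funext i j
        show (if h : (i, j) ∈ S then (x + y) ⟨(i, j), h⟩ else 0) = (if h : (i, j) ∈ S then x ⟨(i, j), h⟩ else 0) + (if h : (i, j) ∈ S then y ⟨(i, j), h⟩ else 0)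
        by_cases h : (i, j) ∈ S <;> simp [h, Matrix.add_apply, Pi.add_apply]
      map_smul' := by
        intro c x; funext i j
        show (if h : (i, j) ∈ S then (c • x) ⟨(i, j), h⟩ else 0) = c • (if h : (i, j) ∈ S then x ⟨(i, j), h⟩ else 0)
        by_cases h : (i, j) ∈ S <;> simp [h, Matrix.smul_apply, Pi.smul_apply] }
  let f : ((Fin d → ℝ) × (Fin d → ℝ)) →ₗ[ℝ] ℝ :=
    { toFun := fun p => (∑ i, p.2 i) - ∑ j, g j * p.1 j
      map_add' := by
        intro p q; simp [Finset.sum_add_distrib, mul_add]; ring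
      map_smul' := by
        intro c p
        show (∑ i, (c • p).2 i) - ∑ j, g j * (c • p).1 j =
          c * ((∑ i, p.2 i) - ∑ j, g j * p.1 j)
        simp only [Prod.smul_snd, Prod.smul_fst, Pi.smul_apply, smul_eq_mul]
        rw [mul_sub, Finset.mul_sum, Finset.mul_sum]
        congr 1
        exact Finset.sum_congr rfl (fun j _ => by ring) }
  have hfL : ∀ Δ, f (L Δ) = 0 := by
    intro Δ
    show (∑ i, Δ.mulVec g i) - ∑ j, g j * ∑ i, Δ i j = 0
    have : ∑ i, Δ.mulVec g i = ∑ j, g j * ∑ i, Δ i j := by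
      simp only [Matrix.mulVec, dotProduct]
      rw [Finset.sum_comm]
      simp [Finset.mul_sum, mul_comm]
    rw [this, sub_self]
  have hrange : LinearMap.range (L ∘ₗ E) ≤ LinearMap.ker f := by
    rintro y ⟨x, rfl⟩
    exact hfL (E x)
  -- f is nonzero
  have hfne : f ≠ 0 := by
    intro h0
    have : f (0, fun _ => 1) = 0 := by rw [h0]; rfl
    have h1 : f ((0 : Fin d → ℝ), fun _ => (1 : ℝ)) = d := by
      show (∑ _i : Fin d, (1 : ℝ)) - ∑ j, g j * (0 : Fin d → ℝ) j = d
      simp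
    rw [h1] at this
    have : (d : ℝ) ≠ 0 := by positivity
    exact this (by assumption)
  have hkerlt : Module.finrank ℝ (LinearMap.ker f) <
      Module.finrank ℝ ((Fin d → ℝ) × (Fin d → ℝ)) := by
    apply Submodule.finrank_lt
    intro h
    exact hfne (LinearMap.ker_eq_top.mp h)
  have hprodrank : Module.finrank ℝ ((Fin d → ℝ) × (Fin d → ℝ)) = 2 * d := by
    rw [Module.finrank_prod, Module.finrank_pi, Fintype.card_fin]; omega
  have hdomrank : Module.finrank ℝ ({x // x ∈ S} → ℝ) = S.card := by
    rw [Module.finrank_pi, Fintype.card_coe]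
  -- the kernel of L ∘ E is nonzero
  have hker : LinearMap.ker (L ∘ₗ E) ≠ ⊥ := by
    intro hbot
    have hinj : Function.Injective (L ∘ₗ E) := LinearMap.ker_eq_bot.mp hbot
    have h1 := LinearMap.finrank_range_of_inj hinj
    have h2 : Module.finrank ℝ (LinearMap.range (L ∘ₗ E)) ≤
        Module.finrank ℝ (LinearMap.ker f) := Submodule.finrank_mono hrange
    rw [h1, hdomrank] at h2
    rw [hprodrank] at hkerlt
    omega
  obtain ⟨x, hxker, hx0⟩ := (Submodule.ne_bot_iff _).mp hker
  set Δ : Matrix (Fin d) (Fin d) ℝ := E x with hΔ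
  have hLΔ : L Δ = 0 := hxker
  have hΔcol : ∀ j, ∑ i, Δ i j = 0 := by
    intro j
    have := congrFun (congrArg Prod.fst hLΔ) j
    exact this
  have hΔvec : Δ.mulVec g = 0 := congrArg Prod.snd hLΔ
  have hΔsupp : ∀ i j, (i, j) ∉ S → Δ i j = 0 := by
    intro i j h
    show (if h : (i, j) ∈ S then x ⟨(i, j), h⟩ else 0) = 0
    simp [h]
  have hΔne : Δ ≠ 0 := by
    intro h0
    apply hx0
    funext a
    have : Δ a.1.1 a.1.2 = 0 := by rw [h0]; rfl
    rw [show Δ a.1.1 a.1.2 = x a by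
      show (if h : (a.1.1, a.1.2) ∈ S then x ⟨(a.1.1, a.1.2), h⟩ else 0) = x a
      simp] at this
    exact this
  -- bound on entries of Δ and minimum of T on the support
  have hSne : S.Nonempty := Finset.card_pos.mp (by omega)
  set m : ℝ := S.inf' hSne (fun ij => T ij.1 ij.2) with hm
  have hmpos : 0 < m := by
    rw [hm, Finset.lt_inf'_iff]
    intro ij hij
    have h1 : T ij.1 ij.2 ≠ 0 := (Finset.mem_filter.mp hij).2
    exact lt_of_le_of_ne (hpos ij.1 ij.2) (Ne.symm h1)
  have hUne : (Finset.univ : Finset (Fin d × Fin d)).Nonempty :=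
    Finset.univ_nonempty
  set Mx : ℝ := Finset.univ.sup' hUne (fun ij : Fin d × Fin d => |Δ ij.1 ij.2|)
    with hMx
  have hMx0 : 0 ≤ Mx := by
    obtain ⟨ij, hij⟩ := hUne
    rw [hMx]
    exact le_trans (abs_nonneg _)
      (Finset.le_sup' (fun ij : Fin d × Fin d => |Δ ij.1 ij.2|) hij)
  set ε : ℝ := m / (Mx + 1) with hε
  have hεpos : 0 < ε := div_pos hmpos (by linarith)
  have hbound : ∀ i j, ε * |Δ i j| < m := by
    intro i j
    have h1 : |Δ i j| ≤ Mx := by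
      rw [hMx]
      exact Finset.le_sup' (fun ij : Fin d × Fin d => |Δ ij.1 ij.2|)
        (Finset.mem_univ (i, j))
    have h2 : ε * (Mx + 1) = m := div_mul_cancel₀ m (by linarith)
    nlinarith
  have hkey : ∀ i j, 0 ≤ T i j + ε * Δ i j ∧ 0 ≤ T i j - ε * Δ i j := by
    intro i j
    by_cases hij : (i, j) ∈ S
    · have h1 : m ≤ T i j := Finset.inf'_le _ hij
      have h2 := hbound i j
      have h3 : ε * Δ i j ≤ ε * |Δ i j| :=
        mul_le_mul_of_nonneg_left (le_abs_self _) hεpos.le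
      have h4 : -(ε * |Δ i j|) ≤ ε * Δ i j := by
        have := mul_le_mul_of_nonneg_left (neg_abs_le (Δ i j)) hεpos.le
        linarith
      constructor <;> linarith
    · have h1 : T i j = 0 := by
        by_contra h
        exact hij (Finset.mem_filter.mpr ⟨Finset.mem_univ _, h⟩)
      have h2 : Δ i j = 0 := hΔsupp i j hij
      simp [h1, h2]
  -- the two perturbed matrices
  set A : Matrix (Fin d) (Fin d) ℝ := T + ε • Δ with hA
  set B : Matrix (Fin d) (Fin d) ℝ := T - ε • Δ with hB
  have hAent : ∀ i j, A i j = T i j + ε * Δ i j := by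
    intro i j; simp [hA, Matrix.add_apply, Matrix.smul_apply]
  have hBent : ∀ i j, B i j = T i j - ε * Δ i j := by
    intro i j; simp [hB, Matrix.sub_apply, Matrix.smul_apply]
  have hAmem : A ∈ TP d s := by
    refine ⟨?_, ?_, ?_⟩
    · intro i j; rw [hAent]; exact (hkey i j).1
    · intro j
      simp only [hAent]
      rw [Finset.sum_add_distrib, hcol j, ← Finset.mul_sum, hΔcol j]
      ring
    · show A.mulVec g = g
      rw [hA, Matrix.add_mulVec, Matrix.smul_mulVec, hΔvec, hfix]
      simp [hg]
  have hBmem : B ∈ TP d s := by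
    refine ⟨?_, ?_, ?_⟩
    · intro i j; rw [hBent]; exact (hkey i j).2
    · intro j
      simp only [hBent]
      rw [Finset.sum_sub_distrib, hcol j, ← Finset.mul_sum, hΔcol j]
      ring
    · show B.mulVec g = g
      rw [hB, Matrix.sub_mulVec, Matrix.smul_mulVec, hΔvec, hfix]
      simp [hg]
  have hseg : T ∈ openSegment ℝ A B := by
    refine ⟨1/2, 1/2, by norm_num, by norm_num, by norm_num, ?_⟩
    ext i j
    simp only [Matrix.add_apply, Matrix.smul_apply, hAent, hBent, smul_eq_mul]
    ring
  have hAeq : A = T := hext hAmem hBmem hseg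
  -- contradiction
  have : ε • Δ = 0 := by
    have := hAeq
    rw [hA] at this
    have h := congrArg (fun M => M - T) this
    simpa [add_sub_cancel_left] using h
  have hΔ0 : Δ = 0 := by
    rcases smul_eq_zero.mp this with h | h
    · exact absurd h (ne_of_gt hεpos)
    · exact h
  exact hΔne hΔ0
end

section
/- Let p be a probability vector. A probability vector r is an extreme point of p^TP if and only if p tightly thermomajorizes r. -/
/-- `p^TP`, the set of states achievable from `p` by thermal processes. -/
def achievable (d : ℕ) (s p : Fin d → ℝ) : Set (Fin d → ℝ) :=
  (fun T : Matrix (Fin d) (Fin d) ℝ => T.mulVec p) '' TP d s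

/-- `π` is a β-order of `p`: the ratios `p i / s i` are arranged nonincreasingly. -/
def IsBetaOrder (d : ℕ) (s p : Fin d → ℝ) (π : Equiv.Perm (Fin d)) : Prop :=
  ∀ i j : Fin d, i ≤ j → p (π j) / s (π j) ≤ p (π i) / s (π i)

/-- `p` tightly thermomajorizes `r`: `p` thermomajorizes `r` and, for some β-order `π`
of `r`, every elbow `E_k(π,r)`, `k = 0, …, d-2`, lies on the graph of `f_p`. -/
def TightlyThermomajorizes (d : ℕ) (s p r : Fin d → ℝ) : Prop :=
  (∀ x ∈ Set.Icc (0 : ℝ) (∑ i, s i), curve d s r x ≤ curve d s p x) ∧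
  ∃ π : Equiv.Perm (Fin d), IsBetaOrder d s r π ∧
    ∀ k : Fin d, (k : ℕ) + 1 < d →
      curve d s p (∑ i ∈ Finset.Iic k, s (π i)) = ∑ i ∈ Finset.Iic k, r (π i)


open Finset

namespace S8

/-- length of overlap of `[u,v]` and `[c,e]`. -/
def ov (u v c e : ℝ) : ℝ := max 0 (min v e - max u c)

lemma ov_nonneg (u v c e : ℝ) : 0 ≤ ov u v c e := le_max_left _ _

lemma ov_comm (u v c e : ℝ) : ov u v c e = ov c e u v := by
  unfold ov; rw [min_comm, max_comm u c]

lemma ov_le (u v c e : ℝ) (hce : c ≤ e) : ov u v c e ≤ e - c := by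
  unfold ov
  rcases le_total (min v e - max u c) 0 with h | h
  · simpa [max_eq_left h] using sub_nonneg.2 hce
  · rw [max_eq_right h]
    have h1 : min v e ≤ e := min_le_right _ _
    have h2 : c ≤ max u c := le_max_right _ _
    linarith

/-- overlap as difference of clamps: clamp into `[u,v]`. -/
lemma ov_eq (u v c e : ℝ) (huv : u ≤ v) (hce : c ≤ e) :
    ov u v c e = max u (min e v) - max u (min c v) := by
  unfold ov
  rcases le_total e u with h1 | h1
  · have hcv : min c v ≤ u := le_trans (le_trans (min_le_left _ _) hce) h1
    have : min v e - max u c ≤ 0 := by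
      have : min v e ≤ e := min_le_right _ _
      have : max u c ≥ u := le_max_left _ _
      have hev : min e v = e := min_eq_left (le_trans h1 huv)
      linarith [min_le_right v e, le_max_left u c]
    rw [max_eq_left this, max_eq_left (le_trans (min_le_left e v) h1),
      max_eq_left hcv]
    ring
  · rcases le_total v c with h2 | h2
    · have : min v e - max u c ≤ 0 := by
        have := le_max_right u c
        have := min_le_left v e
        linarith
      rw [max_eq_left this, min_eq_right (le_trans h2 hce), min_eq_right h2,
        max_eq_right huv]
      ring
    · -- overlapping case : u ≤ e, c ≤ v
      have hme : max u (min e v) = min e v := max_eq_right (le_min h1 huv)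
      have hmc : max u (min c v) = max u c := by rw [min_eq_left h2]
      have : 0 ≤ min v e - max u c := by
        have : max u c ≤ min v e := by
          apply max_le
          · exact le_min huv h1
          · exact le_min h2 hce
        linarith
      rw [max_eq_right this, hme, hmc, min_comm]

lemma ov_telescope (u v : ℝ) (y : ℕ → ℝ) (hy : ∀ k, y k ≤ y (k + 1)) (huv : u ≤ v) (n : ℕ) :
    ∑ k ∈ range n, ov u v (y k) (y (k + 1)) =
      max u (min (y n) v) - max u (min (y 0) v) := by
  have : ∀ k, ov u v (y k) (y (k+1)) =
      max u (min (y (k+1)) v) - max u (min (y k) v) := fun k => ov_eq _ _ _ _ huv (hy k)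
  simp only [this]
  exact Finset.sum_range_sub (fun k => max u (min (y k) v)) n

/-- value of `ov 0 x c e` when the interval is fully below `x`. -/
lemma ov_full (x c e : ℝ) (hc : 0 ≤ c) (hce : c ≤ e) (hex : e ≤ x) : ov 0 x c e = e - c := by
  unfold ov
  rw [max_eq_right hc, min_eq_right hex, max_eq_right (by linarith)]

lemma ov_mid (x c e : ℝ) (hc : 0 ≤ c) (hcx : c ≤ x) (hxe : x ≤ e) : ov 0 x c e = x - c := by
  unfold ov
  rw [max_eq_right hc, min_eq_left hxe, max_eq_right (by linarith)]

lemma ov_none (x c e : ℝ) (hx : x ≤ c) (hce : c ≤ e) : ov 0 x c e = 0 := by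
  unfold ov
  rcases le_total 0 c with h | h
  · rw [max_eq_right h, max_eq_left (by cases le_total x e with
      | inl h' => rw [min_eq_left h']; linarith
      | inr h' => rw [min_eq_right h']; linarith)]
  · rw [max_eq_left h, max_eq_left (by have := min_le_left x e; linarith)]

lemma ov_diff (u v c e : ℝ) (hc : 0 ≤ c) (hce : c ≤ e) (hu : 0 ≤ u) (huv : u ≤ v) :
    ov u v c e = ov 0 v c e - ov 0 u c e := by
  have h1 : ov u v c e = max c (min v e) - max c (min u e) := by
    rw [ov_comm]; exact ov_eq _ _ _ _ hce huv
  have h2 : ∀ z : ℝ, 0 ≤ z → ov 0 z c e = max c (min z e) - c := by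
    intro z hz
    rw [ov_comm]
    rw [ov_eq _ _ _ _ hce hz, min_eq_left (le_trans hc hce), max_eq_left hc]
  rw [h1, h2 v (le_trans hu huv), h2 u hu]
  ring


variable {d : ℕ}

/-- `f (π k)` for `k < d`, else `0`. -/
def pad (f : Fin d → ℝ) (π : Equiv.Perm (Fin d)) (k : ℕ) : ℝ :=
  if h : k < d then f (π ⟨k, h⟩) else 0

/-- prefix sums of `f ∘ π`. -/
def cum (f : Fin d → ℝ) (π : Equiv.Perm (Fin d)) (n : ℕ) : ℝ :=
  ∑ k ∈ range n, pad f π k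

lemma pad_apply (f : Fin d → ℝ) (π : Equiv.Perm (Fin d)) (k : Fin d) :
    pad f π (k : ℕ) = f (π k) := by simp [pad, Fin.is_lt]

lemma pad_apply' {f : Fin d → ℝ} {π : Equiv.Perm (Fin d)} {m : ℕ} (h : m < d) :
    pad f π m = f (π ⟨m, h⟩) := dif_pos h

lemma pad_nonneg {f : Fin d → ℝ} (hf : ∀ i, 0 ≤ f i) (π : Equiv.Perm (Fin d)) (k : ℕ) :
    0 ≤ pad f π k := by unfold pad; split <;> simp [hf]

lemma cum_zero (f : Fin d → ℝ) (π : Equiv.Perm (Fin d)) : cum f π 0 = 0 := by simp [cum]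

lemma cum_succ (f : Fin d → ℝ) (π : Equiv.Perm (Fin d)) (n : ℕ) :
    cum f π (n + 1) = cum f π n + pad f π n := Finset.sum_range_succ _ _

lemma cum_d (f : Fin d → ℝ) (π : Equiv.Perm (Fin d)) : cum f π d = ∑ i, f i := by
  rw [cum, ← Fin.sum_univ_eq_sum_range (fun k => pad f π k) d]
  rw [show (fun i : Fin d => pad f π (i : ℕ)) = fun i : Fin d => f (π i) from
    funext fun i => pad_apply f π i]
  exact Equiv.sum_comp π f

lemma cum_mono {f : Fin d → ℝ} (hf : ∀ i, 0 ≤ f i) (π : Equiv.Perm (Fin d)) {m n : ℕ}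
    (hmn : m ≤ n) : cum f π m ≤ cum f π n := by
  unfold cum
  exact Finset.sum_le_sum_of_subset_of_nonneg (Finset.range_subset_range.2 hmn)
    (fun k _ _ => pad_nonneg hf π k)

lemma cum_le_step (f : Fin d → ℝ) (hf : ∀ i, 0 ≤ f i) (π : Equiv.Perm (Fin d)) (n : ℕ) :
    cum f π n ≤ cum f π (n + 1) := by
  rw [cum_succ]; linarith [pad_nonneg hf π n]

lemma cum_nonneg {f : Fin d → ℝ} (hf : ∀ i, 0 ≤ f i) (π : Equiv.Perm (Fin d)) (n : ℕ) :
    0 ≤ cum f π n := by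
  rw [← cum_zero f π]; exact cum_mono hf π (Nat.zero_le n)

lemma cum_le_total {f : Fin d → ℝ} (hf : ∀ i, 0 ≤ f i) (π : Equiv.Perm (Fin d)) {n : ℕ}
    (hn : n ≤ d) : cum f π n ≤ ∑ i, f i := by
  rw [← cum_d f π]; exact cum_mono hf π hn

lemma cum_stable {f : Fin d → ℝ} (π : Equiv.Perm (Fin d)) {n : ℕ} (hn : d ≤ n) :
    cum f π n = cum f π d := by
  unfold cum
  rw [← Finset.sum_subset (Finset.range_subset_range.2 hn)]
  intro k _ hk
  simp only [Finset.mem_range, not_lt] at hk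
  rw [pad, dif_neg (by omega)]

/-- helper: truncated ite-sum. -/
lemma sum_ite_lt (f : ℕ → ℝ) {n : ℕ} (hn : n ≤ d) :
    ∑ k ∈ range d, (if k < n then f k else 0) = ∑ k ∈ range n, f k := by
  rw [← Finset.sum_subset (Finset.range_subset_range.2 hn)]
  · exact Finset.sum_congr rfl (fun k hk => if_pos (Finset.mem_range.1 hk))
  · intro k _ hk
    exact if_neg (by simpa using hk)

/-- reindex a `Fin`-sum over `π.symm` into a range-sum of pads. -/
lemma sum_reindex (f : Fin d → ℝ) (π : Equiv.Perm (Fin d)) (F : ℕ → ℝ)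
    (hF : ∀ k : Fin d, f (π k) = F (k : ℕ)) :
    ∑ i, f i = ∑ k ∈ range d, F k := by
  rw [← Equiv.sum_comp π f]
  rw [show (fun i : Fin d => f (π i)) = fun i : Fin d => F (i : ℕ) from funext hF]
  exact Fin.sum_univ_eq_sum_range F d

lemma sum_Iic_eq_cum (f : Fin d → ℝ) (π : Equiv.Perm (Fin d)) (k : Fin d) :
    ∑ i ∈ Finset.Iic k, f (π i) = cum f π ((k : ℕ) + 1) := by
  have h1 : ∑ i ∈ Finset.Iic k, f (π i) = ∑ i : Fin d, (if i ≤ k then f (π i) else 0) := by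
    rw [← Finset.sum_subset (Finset.subset_univ (Finset.Iic k))
      (fun i _ hi => if_neg (by simpa using hi))]
    exact Finset.sum_congr rfl fun i hi => (if_pos (Finset.mem_Iic.1 hi)).symm
  have h2 : ∀ i : Fin d, (if i ≤ k then f (π i) else 0) =
      (fun j => if j < (k : ℕ) + 1 then pad f π j else 0) (i : ℕ) := by
    intro i
    have hle : i ≤ k ↔ (i : ℕ) < (k : ℕ) + 1 := by
      rw [Fin.le_def, Nat.lt_succ_iff]
    by_cases h : i ≤ k
    · rw [if_pos h]
      simp only [if_pos (hle.1 h), pad_apply]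
    · rw [if_neg h]
      simp only [if_neg (fun hc => h (hle.2 hc))]
  rw [h1, show (fun i : Fin d => if i ≤ k then f (π i) else 0)
      = fun i : Fin d => (fun j => if j < (k : ℕ) + 1 then pad f π j else 0) (i : ℕ) from
      funext h2,
    Fin.sum_univ_eq_sum_range (fun j => if j < (k : ℕ) + 1 then pad f π j else 0) d,
    sum_ite_lt _ (by omega), cum]

/-! ### curve API -/

variable (s p : Fin d → ℝ)

/-- the feasible-value set underlying `curve`. -/
def cset (x : ℝ) : Set ℝ :=
  {y | ∃ lam : Fin d → ℝ, (∀ i, lam i ∈ Set.Icc (0 : ℝ) 1) ∧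
    (∑ i, lam i * s i = x) ∧ y = ∑ i, lam i * p i}

lemma curve_eq_sSup (x : ℝ) : curve d s p x = sSup (cset s p x) := rfl

lemma cset_le_sum {p : Fin d → ℝ} (hp : ∀ i, 0 ≤ p i) {x y : ℝ} (hy : y ∈ cset s p x) :
    y ≤ ∑ i, p i := by
  obtain ⟨lam, hlam, -, rfl⟩ := hy
  apply Finset.sum_le_sum
  intro i _
  have := (hlam i).1; have := (hlam i).2
  nlinarith [hp i]

lemma cset_bddAbove {p : Fin d → ℝ} (hp : ∀ i, 0 ≤ p i) (x : ℝ) : BddAbove (cset s p x) :=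
  ⟨∑ i, p i, fun _ hy => cset_le_sum s hp hy⟩

lemma le_curve {p : Fin d → ℝ} (hp : ∀ i, 0 ≤ p i) {x y : ℝ} (hy : y ∈ cset s p x) :
    y ≤ curve d s p x :=
  le_csSup (cset_bddAbove s hp x) hy

lemma curve_le {x B : ℝ} (hB : 0 ≤ B) (h : ∀ y ∈ cset s p x, y ≤ B) :
    curve d s p x ≤ B := Real.sSup_le h hB

/-- the explicit polygonal function: for σ a β-order of `p` this is `curve`. -/
noncomputable def Gc (σ : Equiv.Perm (Fin d)) (x : ℝ) : ℝ :=
  ∑ j ∈ range d, (pad p σ j / pad s σ j) * ov 0 x (cum s σ j) (cum s σ (j + 1))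

variable {s}

lemma optLam_spec (hs : ∀ i, 0 < s i) (σ : Equiv.Perm (Fin d)) {x : ℝ}
    (hx : x ∈ Set.Icc (0:ℝ) (∑ i, s i)) :
    Gc s p σ x ∈ cset s p x := by
  classical
  set lam : Fin d → ℝ := fun i =>
    ov 0 x (cum s σ ((σ.symm i : ℕ))) (cum s σ ((σ.symm i : ℕ) + 1)) / s i with hlam
  have hs0 : ∀ i, (0:ℝ) ≤ s i := fun i => (hs i).le
  have hstep : ∀ i : Fin d,
      cum s σ ((σ.symm i : ℕ) + 1) - cum s σ ((σ.symm i : ℕ)) = s i := by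
    intro i
    rw [cum_succ, pad_apply]
    simp
  refine ⟨lam, ?_, ?_, ?_⟩
  · intro i
    constructor
    · exact div_nonneg (ov_nonneg _ _ _ _) (hs0 i)
    · rw [div_le_one (hs i)]
      calc ov 0 x _ _ ≤ _ := ov_le _ _ _ _ (cum_le_step s hs0 σ _)
        _ = s i := hstep i
  · have h1 : ∀ i : Fin d, lam i * s i =
        (fun k : ℕ => ov 0 x (cum s σ k) (cum s σ (k + 1))) ((σ.symm i : ℕ)) := by
      intro i; simp only [hlam]; exact div_mul_cancel₀ _ (ne_of_gt (hs i))
    calc ∑ i, lam i * s i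
        = ∑ i, (fun k : ℕ => ov 0 x (cum s σ k) (cum s σ (k + 1))) ((σ.symm i : ℕ)) :=
          Finset.sum_congr rfl fun i _ => h1 i
      _ = ∑ k : Fin d, (fun k : ℕ => ov 0 x (cum s σ k) (cum s σ (k + 1))) (k : ℕ) := by
          rw [← Equiv.sum_comp σ.symm
            (fun k : Fin d => (fun k : ℕ => ov 0 x (cum s σ k) (cum s σ (k + 1))) (k : ℕ))]
      _ = ∑ k ∈ range d, ov 0 x (cum s σ k) (cum s σ (k + 1)) :=
          Fin.sum_univ_eq_sum_range (fun k : ℕ => ov 0 x (cum s σ k) (cum s σ (k + 1))) d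
      _ = x := by
          rw [ov_telescope 0 x (fun k => cum s σ k) (cum_le_step s hs0 σ) hx.1]
          rw [cum_zero, cum_d]
          rw [min_eq_right hx.2, max_eq_right hx.1, min_eq_left hx.1]
          simp
  · have h1 : ∀ i : Fin d, lam i * p i =
        (fun k : ℕ => (pad p σ k / pad s σ k) * ov 0 x (cum s σ k) (cum s σ (k + 1)))
          ((σ.symm i : ℕ)) := by
      intro i
      simp only [hlam, pad_apply _ σ (σ.symm i), Equiv.apply_symm_apply]
      rw [div_mul_eq_mul_div, mul_comm, mul_div_assoc]
      ring
    calc Gc s p σ x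
        = ∑ k : Fin d, (fun k : ℕ =>
            (pad p σ k / pad s σ k) * ov 0 x (cum s σ k) (cum s σ (k + 1))) (k : ℕ) :=
          (Fin.sum_univ_eq_sum_range _ d).symm
      _ = ∑ i, lam i * p i := by
          rw [← Equiv.sum_comp σ.symm (fun k : Fin d => (fun k : ℕ =>
            (pad p σ k / pad s σ k) * ov 0 x (cum s σ k) (cum s σ (k + 1))) (k : ℕ))]
          exact Finset.sum_congr rfl fun i _ => (h1 i).symm

/-- locate the segment of the partition containing `x`. -/
lemma exists_segment (hd : 1 ≤ d) (hs : ∀ i, 0 < s i) (σ : Equiv.Perm (Fin d)) {x : ℝ}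
    (hx : x ∈ Set.Icc (0:ℝ) (∑ i, s i)) :
    ∃ m : ℕ, m < d ∧ cum s σ m ≤ x ∧ x ≤ cum s σ (m + 1) := by
  classical
  set P : ℕ → Prop := fun n => cum s σ n ≤ x with hP
  have hP0 : P 0 := by rw [hP]; simpa [cum_zero] using hx.1
  set m := Nat.findGreatest P (d - 1) with hm
  have hmd : m ≤ d - 1 := Nat.findGreatest_le _
  refine ⟨m, by omega, Nat.findGreatest_spec (Nat.zero_le _) hP0, ?_⟩
  rcases Nat.lt_or_ge m (d - 1) with h | h
  · by_contra hcon
    push_neg at hcon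
    exact Nat.findGreatest_is_greatest (Nat.lt_succ_self m) (by omega) hcon.le
  · have : m = d - 1 := le_antisymm hmd h
    have : m + 1 = d := by omega
    rw [this, cum_d]
    exact hx.2

lemma hs0 {s : Fin d → ℝ} (hs : ∀ i, 0 < s i) : ∀ i, (0:ℝ) ≤ s i := fun i => (hs i).le

/-- evaluate `Gc` on the segment `[cum m, cum (m+1)]`. -/
lemma Gc_eval (hs : ∀ i, 0 < s i) (q : Fin d → ℝ) (σ : Equiv.Perm (Fin d)) {x : ℝ} {m : ℕ}
    (hmd : m < d) (h1 : cum s σ m ≤ x) (h2 : x ≤ cum s σ (m + 1)) :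
    Gc s q σ x = cum q σ m + (pad q σ m / pad s σ m) * (x - cum s σ m) := by
  have hs0' := hs0 hs
  have hcong : ∀ j ∈ range d,
      (pad q σ j / pad s σ j) * ov 0 x (cum s σ j) (cum s σ (j + 1)) =
      (if j < m then pad q σ j else
        if j = m then (pad q σ m / pad s σ m) * (x - cum s σ m) else 0) := by
    intro j hj
    have hjd := Finset.mem_range.1 hj
    rcases lt_trichotomy j m with h | h | h
    · rw [if_pos h]
      have hfull : ov 0 x (cum s σ j) (cum s σ (j + 1)) = cum s σ (j + 1) - cum s σ j :=
        ov_full _ _ _ (cum_nonneg hs0' σ j) (cum_le_step s hs0' σ j)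
          (le_trans (cum_mono hs0' σ (by omega)) h1)
      rw [hfull, cum_succ]
      have hpadpos : 0 < pad s σ j := by
        rw [pad, dif_pos hjd]; exact hs _
      field_simp
      ring
    · subst h
      rw [if_neg (lt_irrefl j), if_pos rfl]
      have : ov 0 x (cum s σ j) (cum s σ (j + 1)) = x - cum s σ j :=
        ov_mid _ _ _ (cum_nonneg hs0' σ j) h1 h2
      rw [this]
    · rw [if_neg (by omega), if_neg (by omega)]
      have : ov 0 x (cum s σ j) (cum s σ (j + 1)) = 0 :=
        ov_none _ _ _ (le_trans h2 (cum_mono hs0' σ (by omega))) (cum_le_step s hs0' σ j)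
      rw [this, mul_zero]
  rw [Gc, Finset.sum_congr rfl hcong]
  have hsplit : ∀ j ∈ range d,
      (if j < m then pad q σ j else
        if j = m then (pad q σ m / pad s σ m) * (x - cum s σ m) else 0) =
      (if j < m then pad q σ j else 0) +
      (if j = m then (pad q σ m / pad s σ m) * (x - cum s σ m) else 0) := by
    intro j _
    rcases lt_trichotomy j m with h | h | h
    · rw [if_pos h, if_pos h, if_neg (by omega)]; ring
    · subst h; simp
    · rw [if_neg (by omega), if_neg (by omega), if_neg (by omega)]; ring
  rw [Finset.sum_congr rfl hsplit, Finset.sum_add_distrib,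
    sum_ite_lt (fun j => pad q σ j) (by omega : m ≤ d), Finset.sum_ite_eq' (range d) m]
  rw [if_pos (Finset.mem_range.2 hmd)]
  rfl

/-- key upper bound: any feasible value is at most `Gc` when `σ` is a β-order. -/
lemma cset_le_Gc (hd : 1 ≤ d) (hs : ∀ i, 0 < s i) {p : Fin d → ℝ} {σ : Equiv.Perm (Fin d)}
    (hβ : IsBetaOrder d s p σ) {x y : ℝ} (hx : x ∈ Set.Icc (0:ℝ) (∑ i, s i))
    (hy : y ∈ cset s p x) : y ≤ Gc s p σ x := by
  classical
  obtain ⟨m, hmd, h1, h2⟩ := exists_segment hd hs σ hx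
  obtain ⟨lam, hlam, hlsum, rfl⟩ := hy
  have hs0' := hs0 hs
  set mf : Fin d := ⟨m, hmd⟩ with hmf
  have hpt : ∀ i : Fin d, lam i * p i ≤
      max 0 (p i - (p (σ mf) / s (σ mf)) * s i) + (p (σ mf) / s (σ mf)) * (lam i * s i) := by
    intro i
    have h01 := hlam i
    rcases le_total (p i - (p (σ mf) / s (σ mf)) * s i) 0 with h | h
    · rw [max_eq_left h]; nlinarith [h01.1, h01.2]
    · rw [max_eq_right h]; nlinarith [h01.1, h01.2]
  have hsum : ∑ i, lam i * p i ≤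
      (∑ i, max 0 (p i - (p (σ mf) / s (σ mf)) * s i)) + (p (σ mf) / s (σ mf)) * x := by
    calc ∑ i, lam i * p i
        ≤ ∑ i, (max 0 (p i - (p (σ mf) / s (σ mf)) * s i)
            + (p (σ mf) / s (σ mf)) * (lam i * s i)) := Finset.sum_le_sum fun i _ => hpt i
      _ = (∑ i, max 0 (p i - (p (σ mf) / s (σ mf)) * s i))
            + (p (σ mf) / s (σ mf)) * ∑ i, lam i * s i := by
          rw [Finset.sum_add_distrib, Finset.mul_sum]
      _ = _ := by rw [hlsum]
  have hval : ∀ k : Fin d, max 0 (p (σ k) - (p (σ mf) / s (σ mf)) * s (σ k)) =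
      (fun j : ℕ => if j < m then pad p σ j - (p (σ mf) / s (σ mf)) * pad s σ j else 0)
        (k : ℕ) := by
    intro k
    simp only
    rcases Nat.lt_or_ge (k : ℕ) m with h | h
    · rw [if_pos h, pad_apply, pad_apply]
      have hk : k ≤ mf := by rw [Fin.le_def]; exact h.le
      have h5 : p (σ mf) * s (σ k) ≤ p (σ k) * s (σ mf) :=
        (div_le_div_iff₀ (hs (σ mf)) (hs (σ k))).1 (hβ k mf hk)
      apply max_eq_right
      rw [sub_nonneg, div_mul_eq_mul_div, div_le_iff₀ (hs (σ mf))]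
      linarith
    · rw [if_neg (by omega)]
      have hk : mf ≤ k := by rw [Fin.le_def]; exact h
      have h5 : p (σ k) * s (σ mf) ≤ p (σ mf) * s (σ k) :=
        (div_le_div_iff₀ (hs (σ k)) (hs (σ mf))).1 (hβ mf k hk)
      apply max_eq_left
      rw [sub_nonpos, div_mul_eq_mul_div, le_div_iff₀ (hs (σ mf))]
      linarith
  have hplus : ∑ i, max 0 (p i - (p (σ mf) / s (σ mf)) * s i)
      = cum p σ m - (p (σ mf) / s (σ mf)) * cum s σ m := by
    rw [sum_reindex (fun i => max 0 (p i - (p (σ mf) / s (σ mf)) * s i)) σ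
      (fun j : ℕ => if j < m then pad p σ j - (p (σ mf) / s (σ mf)) * pad s σ j else 0) hval,
      sum_ite_lt _ (le_of_lt hmd)]
    unfold cum
    rw [Finset.sum_sub_distrib, Finset.mul_sum]
  rw [Gc_eval hs p σ hmd h1 h2, pad_apply' hmd, pad_apply' hmd, ← hmf]
  rw [hplus] at hsum
  linarith [hsum]

lemma Gc_nonneg (hs : ∀ i, 0 < s i) {p : Fin d → ℝ} (hp : ∀ i, 0 ≤ p i)
    (σ : Equiv.Perm (Fin d)) (x : ℝ) : 0 ≤ Gc s p σ x := by
  apply Finset.sum_nonneg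
  intro j _
  exact mul_nonneg (div_nonneg (pad_nonneg hp σ j) (pad_nonneg (hs0 hs) σ j))
    (ov_nonneg _ _ _ _)

/-- **Lemma B**: the thermomajorization curve equals the explicit polygonal `Gc`. -/
lemma curve_eq_Gc (hd : 1 ≤ d) (hs : ∀ i, 0 < s i) {p : Fin d → ℝ} (hp : ∀ i, 0 ≤ p i)
    {σ : Equiv.Perm (Fin d)} (hβ : IsBetaOrder d s p σ) {x : ℝ}
    (hx : x ∈ Set.Icc (0:ℝ) (∑ i, s i)) : curve d s p x = Gc s p σ x := by
  refine le_antisymm ?_ ?_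
  · exact curve_le s p (Gc_nonneg hs hp σ x) (fun y hy => cset_le_Gc hd hs hβ hx hy)
  · exact le_curve s hp (optLam_spec p hs σ hx)

/-- the value of the curve is attained by an explicit feasible vector. -/
lemma curve_mem_cset (hd : 1 ≤ d) (hs : ∀ i, 0 < s i) {p : Fin d → ℝ} (hp : ∀ i, 0 ≤ p i)
    {σ : Equiv.Perm (Fin d)} (hβ : IsBetaOrder d s p σ) {x : ℝ}
    (hx : x ∈ Set.Icc (0:ℝ) (∑ i, s i)) : curve d s p x ∈ cset s p x := by
  rw [curve_eq_Gc hd hs hp hβ hx]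
  exact optLam_spec p hs σ hx

/-- existence of a β-order. -/
lemma exists_beta (s p : Fin d → ℝ) : ∃ σ : Equiv.Perm (Fin d), IsBetaOrder d s p σ := by
  set f : Fin d → ℝ := fun i => -(p i / s i) with hf
  refine ⟨Tuple.sort f, fun i j hij => ?_⟩
  have := Tuple.monotone_sort f hij
  simp only [Function.comp_apply, hf, neg_le_neg_iff] at this
  exact this

/-- curve is nonnegative and monotone; concavity in combination form. -/
lemma curve_nonneg (hd : 1 ≤ d) (hs : ∀ i, 0 < s i) {p : Fin d → ℝ} (hp : ∀ i, 0 ≤ p i)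
    {x : ℝ} (hx : x ∈ Set.Icc (0:ℝ) (∑ i, s i)) : 0 ≤ curve d s p x := by
  obtain ⟨σ, hβ⟩ := exists_beta s p
  rw [curve_eq_Gc hd hs hp hβ hx]
  exact Gc_nonneg hs hp σ x

lemma curve_zero' (hs : ∀ i, 0 < s i) {p : Fin d → ℝ} : curve d s p 0 = 0 := by
  have hmem : (0:ℝ) ∈ cset s p 0 :=
    ⟨fun _ => 0, fun i => ⟨le_refl _, zero_le_one⟩, by simp, by simp⟩
  have hub : ∀ y ∈ cset s p 0, y ≤ 0 := by
    rintro y ⟨lam, hlam, hsum, rfl⟩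
    have hz : ∀ i ∈ Finset.univ, lam i * s i = 0 :=
      (Finset.sum_eq_zero_iff_of_nonneg
        (fun i _ => mul_nonneg (hlam i).1 (hs i).le)).1 hsum
    apply le_of_eq
    apply Finset.sum_eq_zero
    intro i hi
    rcases mul_eq_zero.1 (hz i hi) with h | h
    · rw [h, zero_mul]
    · exact absurd h (ne_of_gt (hs i))
  exact le_antisymm (Real.sSup_le hub le_rfl) (le_csSup ⟨0, fun y hy => hub y hy⟩ hmem)

lemma curve_total (hs : ∀ i, 0 < s i) (p : Fin d → ℝ) :
    curve d s p (∑ i, s i) = ∑ i, p i := by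
  have hmem : (∑ i, p i) ∈ cset s p (∑ i, s i) :=
    ⟨fun _ => 1, fun i => ⟨zero_le_one, le_refl _⟩, by simp, by simp⟩
  have hforced : ∀ y ∈ cset s p (∑ i, s i), y = ∑ i, p i := by
    rintro y ⟨lam, hlam, hsum, rfl⟩
    have hz : ∀ i ∈ Finset.univ, (1 - lam i) * s i = 0 := by
      apply (Finset.sum_eq_zero_iff_of_nonneg
        (fun i _ => mul_nonneg (by linarith [(hlam i).2]) (hs i).le)).1
      simp only [sub_mul, one_mul]
      rw [Finset.sum_sub_distrib, hsum, sub_self]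
    apply Finset.sum_congr rfl
    intro i hi
    rcases mul_eq_zero.1 (hz i hi) with h | h
    · have : lam i = 1 := by linarith
      rw [this, one_mul]
    · exact absurd h (ne_of_gt (hs i))
  refine le_antisymm (csSup_le ⟨_, hmem⟩ (fun y hy => (hforced y hy).le))
    (le_csSup ⟨∑ i, p i, fun y hy => (hforced y hy).le⟩ hmem)

lemma curve_combo (hd : 1 ≤ d) (hs : ∀ i, 0 < s i) {p : Fin d → ℝ} (hp : ∀ i, 0 ≤ p i)
    {x₁ x₂ a b : ℝ} (hx₁ : x₁ ∈ Set.Icc (0:ℝ) (∑ i, s i)) (hx₂ : x₂ ∈ Set.Icc (0:ℝ) (∑ i, s i))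
    (ha : 0 ≤ a) (hb : 0 ≤ b) (hab : a + b = 1) :
    a * curve d s p x₁ + b * curve d s p x₂ ≤ curve d s p (a * x₁ + b * x₂) := by
  obtain ⟨σ, hβ⟩ := exists_beta s p
  obtain ⟨l₁, hl₁, hs₁, hv₁⟩ := curve_mem_cset hd hs hp hβ hx₁
  obtain ⟨l₂, hl₂, hs₂, hv₂⟩ := curve_mem_cset hd hs hp hβ hx₂
  apply le_curve s hp
  refine ⟨fun i => a * l₁ i + b * l₂ i, fun i => ⟨?_, ?_⟩, ?_, ?_⟩
  · show 0 ≤ a * l₁ i + b * l₂ i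
    have h1 := (hl₁ i).1; have h2 := (hl₂ i).1
    positivity
  · show a * l₁ i + b * l₂ i ≤ 1
    nlinarith [mul_le_mul_of_nonneg_left (hl₁ i).2 ha, mul_le_mul_of_nonneg_left (hl₂ i).2 hb]
  · simp only [add_mul, mul_assoc]
    rw [Finset.sum_add_distrib, ← Finset.mul_sum, ← Finset.mul_sum, hs₁, hs₂]
  · rw [hv₁, hv₂]
    simp only [add_mul, mul_assoc]
    rw [Finset.sum_add_distrib, ← Finset.mul_sum, ← Finset.mul_sum]

lemma curve_mono (hd : 1 ≤ d) (hs : ∀ i, 0 < s i) {p : Fin d → ℝ} (hp : ∀ i, 0 ≤ p i)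
    {x₁ x₂ : ℝ} (hx₁ : 0 ≤ x₁) (h12 : x₁ ≤ x₂) (hx₂ : x₂ ≤ ∑ i, s i) :
    curve d s p x₁ ≤ curve d s p x₂ := by
  obtain ⟨σ, hβ⟩ := exists_beta s p
  obtain ⟨l₁, hl₁, hs₁, hv₁⟩ := curve_mem_cset hd hs hp hβ ⟨hx₁, le_trans h12 hx₂⟩
  rcases eq_or_lt_of_le (le_trans h12 hx₂ : x₁ ≤ ∑ i, s i) with heq | hlt
  · have : x₂ = ∑ i, s i := le_antisymm hx₂ (heq ▸ h12)
    rw [this, ← heq]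
  · set t : ℝ := (x₂ - x₁) / (∑ i, s i - x₁) with htdef
    have hZx : 0 < ∑ i, s i - x₁ := by linarith
    have ht0 : 0 ≤ t := div_nonneg (by linarith) hZx.le
    have ht1 : t ≤ 1 := by
      rw [div_le_one hZx]; linarith
    have hb01 : ∀ i : Fin d, l₁ i + t * (1 - l₁ i) ∈ Set.Icc (0:ℝ) 1 := by
      intro i
      constructor
      · nlinarith [mul_nonneg ht0 (sub_nonneg.2 (hl₁ i).2), (hl₁ i).1]
      · nlinarith [mul_nonneg (sub_nonneg.2 ht1) (sub_nonneg.2 (hl₁ i).2)]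
    have hsum2 : ∑ i, (l₁ i + t * (1 - l₁ i)) * s i = x₂ := by
      have hterm : ∀ i : Fin d, (l₁ i + t * (1 - l₁ i)) * s i
          = l₁ i * s i + t * s i - t * (l₁ i * s i) := fun i => by ring
      calc ∑ i, (l₁ i + t * (1 - l₁ i)) * s i
          = ∑ i, (l₁ i * s i + t * s i - t * (l₁ i * s i)) :=
            Finset.sum_congr rfl fun i _ => hterm i
        _ = (∑ i, l₁ i * s i) + t * (∑ i, s i) - t * ∑ i, l₁ i * s i := by
            rw [Finset.sum_sub_distrib, Finset.sum_add_distrib, ← Finset.mul_sum,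
              ← Finset.mul_sum]
        _ = x₁ + t * ((∑ i, s i) - x₁) := by rw [hs₁]; ring
        _ = x₂ := by rw [htdef]; field_simp; ring
    calc curve d s p x₁ = ∑ i, l₁ i * p i := hv₁
      _ ≤ ∑ i, (l₁ i + t * (1 - l₁ i)) * p i := by
          apply Finset.sum_le_sum
          intro i _
          have h1 := (hl₁ i).1; have h2 := (hl₁ i).2
          nlinarith [hp i, mul_nonneg ht0 (sub_nonneg.2 h2)]
      _ ≤ curve d s p x₂ :=
          le_curve s hp ⟨fun i => l₁ i + t * (1 - l₁ i), hb01, hsum2, rfl⟩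

/-! ### thermal processes -/

lemma Zpos (hd : 1 ≤ d) (hs : ∀ i, 0 < s i) : 0 < ∑ i, s i := by
  have : (0:ℝ) < s ⟨0, hd⟩ := hs _
  exact Finset.sum_pos (fun i _ => hs i) ⟨⟨0, hd⟩, Finset.mem_univ _⟩

lemma TP_mulVec_s (hd : 1 ≤ d) (hs : ∀ i, 0 < s i) {T : Matrix (Fin d) (Fin d) ℝ}
    (hT : T ∈ TP d s) : T.mulVec s = s := by
  have hZ : (0:ℝ) < ∑ k, s k := Zpos hd hs
  have h3 := hT.2.2
  have hg : (fun i => s i / ∑ k, s k) = (∑ k, s k)⁻¹ • s := by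
    funext i; simp [div_eq_inv_mul, smul_eq_mul]
  rw [hg, Matrix.mulVec_smul] at h3
  have := smul_right_injective (Fin d → ℝ) (inv_ne_zero (ne_of_gt hZ)) h3
  exact this

/-- **Lemma A**: thermal processes only lower the thermomajorization curve. -/
lemma thermal_monotone (hd : 1 ≤ d) (hs : ∀ i, 0 < s i) {p : Fin d → ℝ} (hp : ∀ i, 0 ≤ p i)
    {T : Matrix (Fin d) (Fin d) ℝ} (hT : T ∈ TP d s) {x : ℝ}
    (hx : x ∈ Set.Icc (0:ℝ) (∑ i, s i)) :
    curve d s (T.mulVec p) x ≤ curve d s p x := by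
  apply curve_le s (T.mulVec p) (curve_nonneg hd hs hp hx)
  rintro y ⟨lam, hlam, hsum, rfl⟩
  have hTs := TP_mulVec_s hd hs hT
  set mu : Fin d → ℝ := fun j => ∑ i, lam i * T i j with hmu
  have hval : ∑ i, lam i * T.mulVec p i = ∑ j, mu j * p j := by
    simp only [Matrix.mulVec, dotProduct, hmu, Finset.mul_sum, Finset.sum_mul]
    rw [Finset.sum_comm]
    apply Finset.sum_congr rfl
    intro j _
    apply Finset.sum_congr rfl
    intro i _
    ring
  have hmus : ∑ j, mu j * s j = x := by
    simp only [hmu, Finset.sum_mul]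
    rw [Finset.sum_comm]
    rw [← hsum]
    apply Finset.sum_congr rfl
    intro i _
    have : ∑ j, T i j * s j = s i := congrFun hTs i
    calc ∑ j, lam i * T i j * s j = lam i * ∑ j, T i j * s j := by
          rw [Finset.mul_sum]; exact Finset.sum_congr rfl fun j _ => by ring
      _ = lam i * s i := by rw [this]
  rw [hval]
  apply le_curve s hp
  refine ⟨mu, fun j => ⟨?_, ?_⟩, hmus, rfl⟩
  · exact Finset.sum_nonneg fun i _ => mul_nonneg (hlam i).1 (hT.1 i j)
  · calc ∑ i, lam i * T i j ≤ ∑ i, T i j :=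
        Finset.sum_le_sum fun i _ => by nlinarith [(hlam i).1, (hlam i).2, hT.1 i j]
      _ = 1 := hT.2.1 j

lemma achievable_prob {p : Fin d → ℝ} (hp : ProbVec d p) {r : Fin d → ℝ}
    (hr : r ∈ achievable d s p) : ProbVec d r := by
  obtain ⟨T, hT, rfl⟩ := hr
  show ProbVec d (T.mulVec p)
  constructor
  · intro i
    show 0 ≤ T.mulVec p i
    rw [Matrix.mulVec, dotProduct]
    exact Finset.sum_nonneg fun j _ => mul_nonneg (hT.1 i j) (hp.1 j)
  · have h1 : ∑ i, T.mulVec p i = ∑ j, (∑ i, T i j) * p j := by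
      simp only [Matrix.mulVec, dotProduct, Finset.sum_mul]
      rw [Finset.sum_comm]
    rw [h1, Finset.sum_congr rfl (fun j _ => by rw [hT.2.1 j, one_mul]), hp.2]

lemma achievable_convex (s p : Fin d → ℝ) : Convex ℝ (achievable d s p) := by
  rintro r1 ⟨T1, hT1, rfl⟩ r2 ⟨T2, hT2, rfl⟩ a b ha hb hab
  refine ⟨a • T1 + b • T2, ⟨?_, ?_, ?_⟩, ?_⟩
  · intro i j
    simp only [Matrix.add_apply, Matrix.smul_apply, smul_eq_mul]
    exact add_nonneg (mul_nonneg ha (hT1.1 i j)) (mul_nonneg hb (hT2.1 i j))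
  · intro j
    simp only [Matrix.add_apply, Matrix.smul_apply, smul_eq_mul]
    rw [Finset.sum_add_distrib, ← Finset.mul_sum, ← Finset.mul_sum, hT1.2.1 j, hT2.2.1 j]
    linarith
  · rw [Matrix.add_mulVec, Matrix.smul_mulVec, Matrix.smul_mulVec,
      hT1.2.2, hT2.2.2]
    funext i
    simp only [Pi.add_apply, Pi.smul_apply, smul_eq_mul]
    field_simp
    rw [hab, mul_one]
  · show (a • T1 + b • T2).mulVec p = a • T1.mulVec p + b • T2.mulVec p
    rw [Matrix.add_mulVec, Matrix.smul_mulVec, Matrix.smul_mulVec]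

/-! ### greedy vertices -/

/-- the tight vector with β-order `π`, whose elbows lie on the curve of `p`. -/
noncomputable def vvec (s p : Fin d → ℝ) (π : Equiv.Perm (Fin d)) : Fin d → ℝ := fun i =>
  curve d s p (cum s π ((π.symm i : ℕ) + 1)) - curve d s p (cum s π (π.symm i : ℕ))

lemma vvec_apply (s p : Fin d → ℝ) (π : Equiv.Perm (Fin d)) (k : Fin d) :
    vvec s p π (π k) =
      curve d s p (cum s π ((k : ℕ) + 1)) - curve d s p (cum s π (k : ℕ)) := by
  simp [vvec, Equiv.symm_apply_apply]

lemma pad_vvec (s p : Fin d → ℝ) (π : Equiv.Perm (Fin d)) (j : ℕ) :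
    pad (vvec s p π) π j =
      curve d s p (cum s π (j + 1)) - curve d s p (cum s π j) := by
  by_cases h : j < d
  · rw [pad_apply' h]
    have : (π.symm (π ⟨j, h⟩) : ℕ) = j := by rw [Equiv.symm_apply_apply]
    rw [vvec, this]
  · rw [pad, dif_neg h]
    rw [cum_stable π (by omega : d ≤ j), cum_stable π (by omega : d ≤ j + 1), sub_self]

lemma cum_vvec (hs : ∀ i, 0 < s i) (p : Fin d → ℝ) (π : Equiv.Perm (Fin d)) (n : ℕ) :
    cum (vvec s p π) π n = curve d s p (cum s π n) := by
  unfold cum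
  calc ∑ k ∈ range n, pad (vvec s p π) π k
      = ∑ k ∈ range n, (curve d s p (cum s π (k + 1)) - curve d s p (cum s π k)) :=
        Finset.sum_congr rfl fun k _ => pad_vvec s p π k
    _ = curve d s p (cum s π n) - curve d s p (cum s π 0) :=
        Finset.sum_range_sub (fun k => curve d s p (cum s π k)) n
    _ = curve d s p (cum s π n) := by rw [cum_zero, curve_zero' hs, sub_zero]

lemma cum_s_mem (hs : ∀ i, 0 < s i) (π : Equiv.Perm (Fin d)) {n : ℕ} (hn : n ≤ d) :
    cum s π n ∈ Set.Icc (0:ℝ) (∑ i, s i) :=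
  ⟨cum_nonneg (hs0 hs) π n, cum_le_total (hs0 hs) π hn⟩

lemma vvec_nonneg (hd : 1 ≤ d) (hs : ∀ i, 0 < s i) {p : Fin d → ℝ} (hp : ∀ i, 0 ≤ p i)
    (π : Equiv.Perm (Fin d)) : ∀ i, 0 ≤ vvec s p π i := by
  intro i
  rw [vvec, sub_nonneg]
  have h1 : ((π.symm i : ℕ) + 1) ≤ d := (π.symm i).isLt
  exact curve_mono hd hs hp (cum_nonneg (hs0 hs) π _)
    (cum_le_step s (hs0 hs) π _) (cum_le_total (hs0 hs) π h1)

lemma vvec_prob (hd : 1 ≤ d) (hs : ∀ i, 0 < s i) {p : Fin d → ℝ} (hp : ProbVec d p)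
    (π : Equiv.Perm (Fin d)) : ProbVec d (vvec s p π) := by
  refine ⟨vvec_nonneg hd hs hp.1 π, ?_⟩
  have h1 : ∑ i, vvec s p π i = cum (vvec s p π) π d := (cum_d _ π).symm
  rw [h1, cum_vvec hs p π d, cum_d, curve_total hs, hp.2]

lemma vvec_beta (hd : 1 ≤ d) (hs : ∀ i, 0 < s i) {p : Fin d → ℝ} (hp : ∀ i, 0 ≤ p i)
    (π : Equiv.Perm (Fin d)) : IsBetaOrder d s (vvec s p π) π := by
  have adj : ∀ k : ℕ, (hk : k + 1 < d) →
      vvec s p π (π ⟨k + 1, hk⟩) / s (π ⟨k + 1, hk⟩) ≤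
      vvec s p π (π ⟨k, by omega⟩) / s (π ⟨k, by omega⟩) := by
    intro k hk
    set k1 : Fin d := ⟨k, by omega⟩
    set k2 : Fin d := ⟨k + 1, hk⟩
    have hs1 : 0 < s (π k1) := hs _
    have hs2 : 0 < s (π k2) := hs _
    have hA : cum s π (k + 1) = cum s π k + s (π k1) := by
      rw [cum_succ, pad_apply' (by omega : k < d)]
    have hC : cum s π (k + 2) = cum s π (k + 1) + s (π k2) := by
      rw [cum_succ, pad_apply' hk]
    set FA := curve d s p (cum s π k)
    set FB := curve d s p (cum s π (k + 1))
    set FC := curve d s p (cum s π (k + 2))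
    have hcombo : (s (π k2) / (s (π k1) + s (π k2))) * FA
        + (s (π k1) / (s (π k1) + s (π k2))) * FC ≤ FB := by
      have h12 : 0 < s (π k1) + s (π k2) := by linarith
      have hx : (s (π k2) / (s (π k1) + s (π k2))) * cum s π k
          + (s (π k1) / (s (π k1) + s (π k2))) * cum s π (k + 2) = cum s π (k + 1) := by
        field_simp
        rw [hC, hA]
        ring
      have := curve_combo hd hs hp (cum_s_mem hs π (by omega : k ≤ d))
        (cum_s_mem hs π (by omega : k + 2 ≤ d))
        (div_nonneg hs2.le h12.le) (div_nonneg hs1.le h12.le)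
        (by field_simp; ring)
      rw [hx] at this
      exact this
    rw [vvec_apply s p π k2, vvec_apply s p π k1]
    have hk1c : (k1 : ℕ) = k := rfl
    have hk2c : (k2 : ℕ) = k + 1 := rfl
    rw [hk1c, hk2c, div_le_div_iff₀ hs2 hs1]
    have h12 : 0 < s (π k1) + s (π k2) := by linarith
    have h2 := hcombo
    field_simp at h2
    show (FC - FB) * s (π k1) ≤ (FB - FA) * s (π k2)
    nlinarith [h2]
  -- extend to all pairs
  intro i j hij
  obtain ⟨i, hi⟩ := i
  obtain ⟨j, hj⟩ := j
  rw [Fin.le_def] at hij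
  simp only at hij
  induction j with
  | zero =>
      have : i = 0 := by omega
      subst this
      exact le_refl _
  | succ n ih =>
      rcases Nat.lt_or_ge i (n + 1) with h | h
      · have hn : n < d := by omega
        calc vvec s p π (π ⟨n + 1, hj⟩) / s (π ⟨n + 1, hj⟩)
            ≤ vvec s p π (π ⟨n, hn⟩) / s (π ⟨n, hn⟩) := adj n hj
          _ ≤ _ := ih hn (by omega)
      · have : i = n + 1 := by omega
        subst this
        exact le_refl _

lemma vvec_curve_le (hd : 1 ≤ d) (hs : ∀ i, 0 < s i) {p : Fin d → ℝ} (hp : ∀ i, 0 ≤ p i)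
    (π : Equiv.Perm (Fin d)) {x : ℝ} (hx : x ∈ Set.Icc (0:ℝ) (∑ i, s i)) :
    curve d s (vvec s p π) x ≤ curve d s p x := by
  rw [curve_eq_Gc hd hs (vvec_nonneg hd hs hp π) (vvec_beta hd hs hp π) hx]
  obtain ⟨m, hmd, h1, h2⟩ := exists_segment hd hs π hx
  rw [Gc_eval hs (vvec s p π) π hmd h1 h2, cum_vvec hs p π m, pad_vvec s p π m]
  have hsm : 0 < pad s π m := by rw [pad_apply' hmd]; exact hs _
  set θ : ℝ := (x - cum s π m) / pad s π m with hθ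
  have hθ0 : 0 ≤ θ := div_nonneg (by linarith) hsm.le
  have hθ1 : θ ≤ 1 := by
    rw [hθ, div_le_one hsm]
    have := cum_succ s π m
    rw [this] at h2
    linarith
  have hxcomb : (1 - θ) * cum s π m + θ * cum s π (m + 1) = x := by
    rw [cum_succ s π m, hθ]
    field_simp
    ring
  calc curve d s p (cum s π m) +
        (curve d s p (cum s π (m + 1)) - curve d s p (cum s π m)) / pad s π m
          * (x - cum s π m)
      = (1 - θ) * curve d s p (cum s π m) + θ * curve d s p (cum s π (m + 1)) := by
        rw [hθ]; field_simp; ring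
    _ ≤ curve d s p ((1 - θ) * cum s π m + θ * cum s π (m + 1)) :=
        curve_combo hd hs hp (cum_s_mem hs π (le_of_lt hmd))
          (cum_s_mem hs π hmd) (by linarith) hθ0 (by ring)
    _ = curve d s p x := by rw [hxcomb]

/-- prefix sums of a thermomajorized vector are bounded by curve values of `p`. -/
lemma prefix_le (hd : 1 ≤ d) (hs : ∀ i, 0 < s i) {p r : Fin d → ℝ}
    (hr0 : ∀ i, 0 ≤ r i)
    (hcurve : ∀ x ∈ Set.Icc (0:ℝ) (∑ i, s i), curve d s r x ≤ curve d s p x)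
    (π : Equiv.Perm (Fin d)) {n : ℕ} (hn : n ≤ d) :
    cum r π n ≤ curve d s p (cum s π n) := by
  classical
  set lam : Fin d → ℝ := fun i => if ((π.symm i : ℕ) < n) then 1 else 0 with hlam
  have hr_sum : ∀ (f : Fin d → ℝ), ∑ i, lam i * f i = cum f π n := by
    intro f
    rw [sum_reindex (fun i => lam i * f i) π (fun j => if j < n then pad f π j else 0) ?_,
      sum_ite_lt _ hn]
    · rfl
    · intro k
      simp only [hlam, Equiv.symm_apply_apply]
      by_cases h : (k : ℕ) < n
      · rw [if_pos h, if_pos h, one_mul, pad_apply]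
      · rw [if_neg h, if_neg h, zero_mul]
  have hmem : cum r π n ∈ cset s r (cum s π n) := by
    refine ⟨lam, fun i => ?_, hr_sum s, (hr_sum r).symm⟩
    simp only [hlam]
    split <;> simp
  calc cum r π n ≤ curve d s r (cum s π n) := le_curve s hr0 hmem
    _ ≤ curve d s p (cum s π n) := hcurve _ (cum_s_mem hs π hn)

/-! ### the transport matrix -/

/-- the monotone-transport thermal process carrying `p` (β-ordered by `σ`) to `vvec s p π`. -/
noncomputable def Tmat (s : Fin d → ℝ) (σ π : Equiv.Perm (Fin d)) :
    Matrix (Fin d) (Fin d) ℝ := fun i j =>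
  ov (cum s σ ((σ.symm j : ℕ))) (cum s σ ((σ.symm j : ℕ) + 1))
    (cum s π ((π.symm i : ℕ))) (cum s π ((π.symm i : ℕ) + 1)) / s j

lemma sum_ov_partition (hs : ∀ i, 0 < s i) (π : Equiv.Perm (Fin d)) {u v : ℝ}
    (hu : 0 ≤ u) (huv : u ≤ v) (hv : v ≤ ∑ i, s i) :
    ∑ k ∈ range d, ov u v (cum s π k) (cum s π (k + 1)) = v - u := by
  rw [ov_telescope u v (fun k => cum s π k) (cum_le_step s (hs0 hs) π) huv d]
  rw [cum_zero, cum_d]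
  rw [min_eq_right hv, max_eq_right huv, min_eq_left (le_trans hu huv), max_eq_left hu]

lemma tgt_bounds (hs : ∀ i, 0 < s i) (π : Equiv.Perm (Fin d)) (i : Fin d) :
    0 ≤ cum s π ((π.symm i : ℕ)) ∧
    cum s π ((π.symm i : ℕ)) ≤ cum s π ((π.symm i : ℕ) + 1) ∧
    cum s π ((π.symm i : ℕ) + 1) ≤ ∑ i, s i :=
  ⟨cum_nonneg (hs0 hs) π _, cum_le_step s (hs0 hs) π _,
    cum_le_total (hs0 hs) π (π.symm i).isLt⟩

lemma tgt_step (s : Fin d → ℝ) (π : Equiv.Perm (Fin d)) (i : Fin d) :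
    cum s π ((π.symm i : ℕ) + 1) - cum s π ((π.symm i : ℕ)) = s i := by
  rw [cum_succ, pad_apply]
  simp

lemma Tmat_mem_TP (hd : 1 ≤ d) (hs : ∀ i, 0 < s i) (σ π : Equiv.Perm (Fin d)) :
    Tmat s σ π ∈ TP d s := by
  have hTs : (Tmat s σ π).mulVec s = s := by
    funext i
    obtain ⟨hu, huv, hv⟩ := tgt_bounds hs π i
    rw [Matrix.mulVec, dotProduct]
    have hterm : ∀ j : Fin d, Tmat s σ π i j * s j =
        (fun k : ℕ => ov (cum s π ((π.symm i : ℕ))) (cum s π ((π.symm i : ℕ) + 1))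
          (cum s σ k) (cum s σ (k + 1))) ((σ.symm j : ℕ)) := by
      intro j
      rw [Tmat, div_mul_cancel₀ _ (ne_of_gt (hs j)), ov_comm]
    calc ∑ j, Tmat s σ π i j * s j
        = ∑ j : Fin d, (fun k : ℕ => ov (cum s π ((π.symm i : ℕ)))
            (cum s π ((π.symm i : ℕ) + 1)) (cum s σ k) (cum s σ (k + 1)))
              ((σ.symm j : ℕ)) := Finset.sum_congr rfl fun j _ => hterm j
      _ = ∑ k ∈ range d, ov (cum s π ((π.symm i : ℕ))) (cum s π ((π.symm i : ℕ) + 1))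
            (cum s σ k) (cum s σ (k + 1)) := by
          exact (Fintype.sum_equiv σ.symm
            (fun j : Fin d => (fun k : ℕ => ov (cum s π ((π.symm i : ℕ)))
              (cum s π ((π.symm i : ℕ) + 1)) (cum s σ k) (cum s σ (k + 1))) ((σ.symm j : ℕ)))
            (fun j : Fin d => (fun k : ℕ => ov (cum s π ((π.symm i : ℕ)))
              (cum s π ((π.symm i : ℕ) + 1)) (cum s σ k) (cum s σ (k + 1))) ((j : ℕ)))
            (fun j => rfl)).trans
            (Fin.sum_univ_eq_sum_range (fun k : ℕ => ov (cum s π ((π.symm i : ℕ)))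
              (cum s π ((π.symm i : ℕ) + 1)) (cum s σ k) (cum s σ (k + 1))) d)
      _ = s i := by rw [sum_ov_partition hs σ hu huv hv, tgt_step]
  refine ⟨?_, ?_, ?_⟩
  · intro i j
    exact div_nonneg (ov_nonneg _ _ _ _) (hs j).le
  · intro j
    have hu : 0 ≤ cum s σ ((σ.symm j : ℕ)) := cum_nonneg (hs0 hs) σ _
    have huv := cum_le_step s (hs0 hs) σ ((σ.symm j : ℕ))
    have hv : cum s σ ((σ.symm j : ℕ) + 1) ≤ ∑ i, s i :=
      cum_le_total (hs0 hs) σ (σ.symm j).isLt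
    have hterm : ∀ i : Fin d, Tmat s σ π i j =
        (fun k : ℕ => ov (cum s σ ((σ.symm j : ℕ))) (cum s σ ((σ.symm j : ℕ) + 1))
          (cum s π k) (cum s π (k + 1)) / s j) ((π.symm i : ℕ)) := fun i => rfl
    calc ∑ i, Tmat s σ π i j
        = ∑ k ∈ range d, ov (cum s σ ((σ.symm j : ℕ))) (cum s σ ((σ.symm j : ℕ) + 1))
            (cum s π k) (cum s π (k + 1)) / s j := by
          rw [Finset.sum_congr rfl fun i _ => hterm i]
          exact (Fintype.sum_equiv π.symm
            (fun i : Fin d => (fun k : ℕ => ov (cum s σ ((σ.symm j : ℕ)))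
              (cum s σ ((σ.symm j : ℕ) + 1)) (cum s π k) (cum s π (k + 1)) / s j)
                ((π.symm i : ℕ)))
            (fun i : Fin d => (fun k : ℕ => ov (cum s σ ((σ.symm j : ℕ)))
              (cum s σ ((σ.symm j : ℕ) + 1)) (cum s π k) (cum s π (k + 1)) / s j) ((i : ℕ)))
            (fun i => rfl)).trans
            (Fin.sum_univ_eq_sum_range (fun k : ℕ => ov (cum s σ ((σ.symm j : ℕ)))
              (cum s σ ((σ.symm j : ℕ) + 1)) (cum s π k) (cum s π (k + 1)) / s j) d)
      _ = 1 := by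
          rw [← Finset.sum_div, sum_ov_partition hs π hu huv hv]
          rw [show cum s σ ((σ.symm j : ℕ) + 1) - cum s σ ((σ.symm j : ℕ)) = s j from
            tgt_step s σ j]
          exact div_self (ne_of_gt (hs j))
  · have hg : (fun i => s i / ∑ k, s k) = (∑ k, s k)⁻¹ • s := by
      funext i; simp [div_eq_inv_mul, smul_eq_mul]
    rw [hg, Matrix.mulVec_smul, hTs]

lemma Tmat_mulVec (hd : 1 ≤ d) (hs : ∀ i, 0 < s i) {p : Fin d → ℝ} (hp : ∀ i, 0 ≤ p i)
    {σ : Equiv.Perm (Fin d)} (hβ : IsBetaOrder d s p σ) (π : Equiv.Perm (Fin d)) :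
    (Tmat s σ π).mulVec p = vvec s p π := by
  funext i
  obtain ⟨hu, huv, hv⟩ := tgt_bounds hs π i
  set u : ℝ := cum s π ((π.symm i : ℕ)) with hu'
  set v : ℝ := cum s π ((π.symm i : ℕ) + 1) with hv'
  rw [Matrix.mulVec, dotProduct]
  have hterm : ∀ j : Fin d, Tmat s σ π i j * p j =
      (fun k : ℕ => (pad p σ k / pad s σ k) *
        (ov 0 v (cum s σ k) (cum s σ (k + 1)) - ov 0 u (cum s σ k) (cum s σ (k + 1))))
        ((σ.symm j : ℕ)) := by
    intro j
    simp only
    rw [Tmat, pad_apply, pad_apply, Equiv.apply_symm_apply]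
    have hsrc0 : 0 ≤ cum s σ ((σ.symm j : ℕ)) := cum_nonneg (hs0 hs) σ _
    have hsrcle := cum_le_step s (hs0 hs) σ ((σ.symm j : ℕ))
    rw [ov_comm, ov_diff _ _ _ _ hsrc0 hsrcle hu huv]
    field_simp
  calc ∑ j, Tmat s σ π i j * p j
      = ∑ k ∈ range d, (pad p σ k / pad s σ k) *
          (ov 0 v (cum s σ k) (cum s σ (k + 1)) - ov 0 u (cum s σ k) (cum s σ (k + 1))) := by
        rw [Finset.sum_congr rfl fun j _ => hterm j]
        exact (Fintype.sum_equiv σ.symm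
          (fun j : Fin d => (fun k : ℕ => (pad p σ k / pad s σ k) *
            (ov 0 v (cum s σ k) (cum s σ (k + 1)) - ov 0 u (cum s σ k) (cum s σ (k + 1))))
              ((σ.symm j : ℕ)))
          (fun j : Fin d => (fun k : ℕ => (pad p σ k / pad s σ k) *
            (ov 0 v (cum s σ k) (cum s σ (k + 1)) - ov 0 u (cum s σ k) (cum s σ (k + 1))))
              ((j : ℕ)))
          (fun j => rfl)).trans
          (Fin.sum_univ_eq_sum_range (fun k : ℕ => (pad p σ k / pad s σ k) *
            (ov 0 v (cum s σ k) (cum s σ (k + 1)) - ov 0 u (cum s σ k) (cum s σ (k + 1)))) d)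
    _ = Gc s p σ v - Gc s p σ u := by
        rw [Gc, Gc, ← Finset.sum_sub_distrib]
        exact Finset.sum_congr rfl fun k _ => by ring
    _ = vvec s p π i := by
        rw [← curve_eq_Gc hd hs hp hβ ⟨le_trans hu huv, hv⟩,
          ← curve_eq_Gc hd hs hp hβ ⟨hu, le_trans huv hv⟩]
        rfl

/-! ### greedy optimality and the convex hull -/

lemma greedy (hd : 1 ≤ d) (hs : ∀ i, 0 < s i) {p r : Fin d → ℝ} (hp : ProbVec d p)
    (hr : ProbVec d r)
    (hc : ∀ x ∈ Set.Icc (0:ℝ) (∑ i, s i), curve d s r x ≤ curve d s p x)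
    (c : Fin d → ℝ) (π : Equiv.Perm (Fin d))
    (hsort : ∀ k : ℕ, (h : k + 1 < d) → c (π ⟨k + 1, h⟩) ≤ c (π ⟨k, by omega⟩)) :
    ∑ i, r i * c i ≤ ∑ i, vvec s p π i * c i := by
  have hvp := vvec_prob hd hs hp π
  set e : ℕ → ℝ := fun k => pad r π k - pad (vvec s p π) π k with he
  have hDneg : ∀ n : ℕ, n ≤ d → ∑ j ∈ range n, e j ≤ 0 := by
    intro n hn
    have h1 : ∑ j ∈ range n, e j = cum r π n - cum (vvec s p π) π n := by
      simp only [he, cum]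
      rw [Finset.sum_sub_distrib]
    rw [h1, sub_nonpos, cum_vvec hs p π n]
    exact prefix_le hd hs hr.1 hc π hn
  have hDzero : ∑ j ∈ range d, e j = 0 := by
    have h1 : ∑ j ∈ range d, e j = cum r π d - cum (vvec s p π) π d := by
      simp only [he, cum]
      rw [Finset.sum_sub_distrib]
    rw [h1, cum_d, cum_d, hr.2, hvp.2, sub_self]
  have hreindex : ∀ q : Fin d → ℝ, ∑ i, q i * c i = ∑ k ∈ range d, pad q π k * pad c π k := by
    intro q
    apply sum_reindex (fun i => q i * c i) π (fun k => pad q π k * pad c π k)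
    intro k
    rw [pad_apply, pad_apply]
  rw [hreindex r, hreindex (vvec s p π)]
  rw [← sub_nonpos, ← Finset.sum_sub_distrib]
  have hterm : ∀ k : ℕ, pad r π k * pad c π k - pad (vvec s p π) π k * pad c π k
      = pad c π k • e k := by
    intro k
    simp only [he, smul_eq_mul]
    ring
  rw [Finset.sum_congr rfl (fun k _ => hterm k)]
  rw [Finset.sum_range_by_parts (fun k => pad c π k) e d]
  rw [hDzero, smul_zero, zero_sub, neg_nonpos]
  apply Finset.sum_nonneg
  intro i hi
  have hid : i + 1 < d := by
    have := Finset.mem_range.1 hi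
    omega
  have hcc : pad c π (i + 1) - pad c π i ≤ 0 := by
    rw [pad_apply' hid, pad_apply' (by omega : i < d), sub_nonpos]
    exact hsort i hid
  have hD := hDneg (i + 1) (by omega)
  rw [smul_eq_mul]
  nlinarith [hcc, hD]

/-- any thermomajorized probability vector lies in the convex hull of greedy vertices. -/
lemma mem_hull_of_dominated (hd : 1 ≤ d) (hs : ∀ i, 0 < s i) {p r : Fin d → ℝ}
    (hp : ProbVec d p) (hr : ProbVec d r)
    (hc : ∀ x ∈ Set.Icc (0:ℝ) (∑ i, s i), curve d s r x ≤ curve d s p x) :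
    r ∈ convexHull ℝ (Set.range (vvec s p)) := by
  by_contra hnot
  have hfin : (Set.range (vvec s p)).Finite := Set.finite_range _
  have hclosed : IsClosed (convexHull ℝ (Set.range (vvec s p))) :=
    (hfin.isCompact_convexHull ℝ).isClosed
  obtain ⟨f, u, hfa, hfr⟩ := geometric_hahn_banach_closed_point
    (convex_convexHull ℝ _) hclosed hnot
  set c : Fin d → ℝ := fun i => f (fun j => if i = j then (1:ℝ) else 0) with hcdef
  have f_eval : ∀ q : Fin d → ℝ, f q = ∑ i, q i * c i := by
    intro q
    conv_lhs => rw [pi_eq_sum_univ q]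
    rw [map_sum]
    apply Finset.sum_congr rfl
    intro i _
    rw [map_smul, smul_eq_mul, hcdef]
  set π : Equiv.Perm (Fin d) := Tuple.sort (fun i => -(c i)) with hπ
  have hsort : ∀ k : ℕ, (h : k + 1 < d) → c (π ⟨k + 1, h⟩) ≤ c (π ⟨k, by omega⟩) := by
    intro k h
    have := Tuple.monotone_sort (fun i => -(c i))
      (show (⟨k, by omega⟩ : Fin d) ≤ ⟨k + 1, h⟩ from by rw [Fin.mk_le_mk]; omega)
    simp only [Function.comp_apply, neg_le_neg_iff] at this
    exact this
  have hbound : f r ≤ f (vvec s p π) := by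
    rw [f_eval, f_eval]
    exact greedy hd hs hp hr hc c π hsort
  have hlt : f (vvec s p π) < u :=
    hfa _ (subset_convexHull ℝ _ (Set.mem_range_self π))
  linarith

lemma hull_subset_achievable (hd : 1 ≤ d) (hs : ∀ i, 0 < s i) {p : Fin d → ℝ}
    (hp : ProbVec d p) :
    convexHull ℝ (Set.range (vvec s p)) ⊆ achievable d s p := by
  apply convexHull_min ?_ (achievable_convex s p)
  rintro _ ⟨π, rfl⟩
  obtain ⟨σ, hβ⟩ := exists_beta s p
  exact ⟨Tmat s σ π, Tmat_mem_TP hd hs σ π, Tmat_mulVec hd hs hp.1 hβ π⟩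

lemma achievable_dominated (hd : 1 ≤ d) (hs : ∀ i, 0 < s i) {p : Fin d → ℝ}
    (hp : ProbVec d p) {r : Fin d → ℝ} (hr : r ∈ achievable d s p) :
    ∀ x ∈ Set.Icc (0:ℝ) (∑ i, s i), curve d s r x ≤ curve d s p x := by
  obtain ⟨T, hT, rfl⟩ := hr
  intro x hx
  exact thermal_monotone hd hs hp.1 hT hx

lemma achievable_eq_hull (hd : 1 ≤ d) (hs : ∀ i, 0 < s i) {p : Fin d → ℝ}
    (hp : ProbVec d p) :
    achievable d s p = convexHull ℝ (Set.range (vvec s p)) := by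
  apply Set.Subset.antisymm ?_ (hull_subset_achievable hd hs hp)
  intro r hr
  exact mem_hull_of_dominated hd hs hp (achievable_prob hp hr)
    (achievable_dominated hd hs hp hr)

/-! ### the two directions -/

lemma tight_of_vvec (hd : 1 ≤ d) (hs : ∀ i, 0 < s i) {p : Fin d → ℝ} (hp : ProbVec d p)
    (π : Equiv.Perm (Fin d)) : TightlyThermomajorizes d s p (vvec s p π) := by
  constructor
  · intro x hx
    exact vvec_curve_le hd hs hp.1 π hx
  · refine ⟨π, vvec_beta hd hs hp.1 π, ?_⟩
    intro k hk
    rw [sum_Iic_eq_cum s π k, sum_Iic_eq_cum (vvec s p π) π k, cum_vvec hs p π]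

lemma tight_is_extreme (hd : 1 ≤ d) (hs : ∀ i, 0 < s i) {p r : Fin d → ℝ}
    (hp : ProbVec d p) (hr : ProbVec d r) (ht : TightlyThermomajorizes d s p r) :
    r ∈ Set.extremePoints ℝ (achievable d s p) := by
  obtain ⟨h1, π, hβ, helb⟩ := ht
  have hmem : r ∈ achievable d s p :=
    hull_subset_achievable hd hs hp (mem_hull_of_dominated hd hs hp hr h1)
  refine ⟨hmem, ?_⟩
  rintro r1 hr1 r2 hr2 ⟨a, b, ha, hb, hab, heq⟩
  have hprob1 : ProbVec d r1 := achievable_prob hp hr1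
  have hprob2 : ProbVec d r2 := achievable_prob hp hr2
  have hc1 := achievable_dominated hd hs hp hr1
  have hc2 := achievable_dominated hd hs hp hr2
  -- the elbow values of the curve of p at the partition points
  have helb' : ∀ n : ℕ, 0 < n → n < d → curve d s p (cum s π n) = cum r π n := by
    intro n hn0 hnd
    have hk : (⟨n - 1, by omega⟩ : Fin d) = ⟨n - 1, by omega⟩ := rfl
    have := helb ⟨n - 1, by omega⟩ (by simp; omega)
    rw [sum_Iic_eq_cum s π, sum_Iic_eq_cum r π] at this
    have hcast : ((⟨n - 1, by omega⟩ : Fin d) : ℕ) + 1 = n := by simp; omega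
    rw [hcast] at this
    exact this
  -- linearity of prefix sums
  have hpadlin : ∀ k : ℕ, pad r π k = a * pad r1 π k + b * pad r2 π k := by
    intro k
    unfold pad
    split
    · next h =>
        have := congrFun heq (π ⟨k, h⟩)
        simp only [Pi.add_apply, Pi.smul_apply, smul_eq_mul] at this
        exact this.symm
    · ring
  have hcumlin : ∀ n : ℕ, cum r π n = a * cum r1 π n + b * cum r2 π n := by
    intro n
    unfold cum
    rw [Finset.mul_sum, Finset.mul_sum, ← Finset.sum_add_distrib]
    exact Finset.sum_congr rfl fun k _ => hpadlin k
  -- prefix sums agree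
  have hkey : ∀ n : ℕ, n ≤ d → cum r1 π n = cum r π n ∧ cum r2 π n = cum r π n := by
    intro n hn
    rcases Nat.eq_zero_or_pos n with rfl | hn0
    · rw [cum_zero, cum_zero, cum_zero]; exact ⟨rfl, rfl⟩
    rcases eq_or_lt_of_le hn with rfl | hnd
    · rw [cum_d, cum_d, cum_d, hprob1.2, hprob2.2, hr.2]; exact ⟨rfl, rfl⟩
    have hcv := helb' n hn0 hnd
    have hb1 : cum r1 π n ≤ cum r π n := by
      rw [← hcv]; exact prefix_le hd hs hprob1.1 hc1 π hn
    have hb2 : cum r2 π n ≤ cum r π n := by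
      rw [← hcv]; exact prefix_le hd hs hprob2.1 hc2 π hn
    have hlin := hcumlin n
    have hc' : a * cum r π n + b * cum r π n = cum r π n := by
      rw [← add_mul, hab, one_mul]
    constructor
    · apply le_antisymm hb1
      have h3 : a * cum r π n ≤ a * cum r1 π n := by
        have := mul_le_mul_of_nonneg_left hb2 hb.le
        linarith
      exact le_of_mul_le_mul_left h3 ha
    · apply le_antisymm hb2
      have h3 : b * cum r π n ≤ b * cum r2 π n := by
        have := mul_le_mul_of_nonneg_left hb1 ha.le
        linarith
      exact le_of_mul_le_mul_left h3 hb
  -- componentwise equality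
  have hcomp : ∀ (q : Fin d → ℝ), (∀ n ≤ d, cum q π n = cum r π n) → q = r := by
    intro q hq
    funext i
    set k : ℕ := (π.symm i : ℕ) with hkdef
    have hkd : k < d := (π.symm i).isLt
    have h1 := hq (k + 1) hkd
    have h2 := hq k (by omega)
    have e1 : cum q π (k + 1) = cum q π k + pad q π k := cum_succ q π k
    have e2 : cum r π (k + 1) = cum r π k + pad r π k := cum_succ r π k
    have : pad q π k = pad r π k := by rw [e1] at h1; rw [e2] at h1; linarith
    rw [pad_apply' hkd, pad_apply' hkd] at this
    have hi2 : (⟨k, hkd⟩ : Fin d) = π.symm i := Fin.ext hkdef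
    have hi : π ⟨k, hkd⟩ = i := by rw [hi2, Equiv.apply_symm_apply]
    rw [hi] at this
    exact this
  exact hcomp r1 (fun n hn => (hkey n hn).1)

end S8

/-- a probability vector `r` is an extreme point of `p^TP` iff `p`
tightly thermomajorizes `r`. -/
theorem stmt8 (d : ℕ) (hd : 1 ≤ d) (s : Fin d → ℝ) (hs : ∀ i, 0 < s i)
    (p r : Fin d → ℝ) (hp : ProbVec d p) (hr : ProbVec d r) :
    r ∈ Set.extremePoints ℝ (achievable d s p) ↔ TightlyThermomajorizes d s p r := by
  constructor
  · intro hext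
    have h2 := hext
    rw [S8.achievable_eq_hull hd hs hp] at h2
    have h3 : r ∈ Set.range (S8.vvec s p) := extremePoints_convexHull_subset h2
    obtain ⟨π, hπ⟩ := h3
    rw [← hπ]
    exact S8.tight_of_vvec hd hs hp π
  · intro ht
    exact S8.tight_is_extreme hd hs hp hr ht
end

section
/- Let p be a probability vector. Every r ∈ p^TP can be written as a convex combination r = Σ_{i=1}^{N} c_i σ_i with N ≤ 2^{d−1}, c_i ≥ 0, Σ_i c_i = 1, where each σ_i is a probability vector tightly thermomajorized by p. -/
namespace S9
variable {d : ℕ}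

lemma curve_bddAbove (s p : Fin d → ℝ) (hp0 : ∀ i, 0 ≤ p i) (x : ℝ) :
    BddAbove {y | ∃ lam : Fin d → ℝ, (∀ i, lam i ∈ Set.Icc (0 : ℝ) 1) ∧
      (∑ i, lam i * s i = x) ∧ y = ∑ i, lam i * p i} := by
  refine ⟨∑ i, p i, ?_⟩
  rintro y ⟨lam, h1, h2, rfl⟩
  exact Finset.sum_le_sum fun i _ => mul_le_of_le_one_left (hp0 i) (h1 i).2

lemma curve_le {s p : Fin d → ℝ} (_hp0 : ∀ i, 0 ≤ p i) {x b : ℝ} (hb : 0 ≤ b)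
    (h : ∀ lam : Fin d → ℝ, (∀ i, lam i ∈ Set.Icc (0:ℝ) 1) → ∑ i, lam i * s i = x →
      ∑ i, lam i * p i ≤ b) : curve d s p x ≤ b := by
  apply Real.sSup_le _ hb
  rintro y ⟨lam, h1, h2, rfl⟩
  exact h lam h1 h2

lemma le_curve {s p : Fin d → ℝ} (hp0 : ∀ i, 0 ≤ p i) (lam : Fin d → ℝ)
    (hlam : ∀ i, lam i ∈ Set.Icc (0:ℝ) 1) {x : ℝ} (hx : ∑ i, lam i * s i = x) :
    ∑ i, lam i * p i ≤ curve d s p x :=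
  le_csSup (curve_bddAbove s p hp0 x) ⟨lam, hlam, hx, rfl⟩

lemma curve_le_one {s p : Fin d → ℝ} (hp0 : ∀ i, 0 ≤ p i) (hp1 : ∑ i, p i = 1) (x : ℝ) :
    curve d s p x ≤ 1 := by
  apply curve_le hp0 zero_le_one
  intro lam h1 _
  calc ∑ i, lam i * p i ≤ ∑ i, p i :=
        Finset.sum_le_sum fun i _ => mul_le_of_le_one_left (hp0 i) (h1 i).2
    _ = 1 := hp1

lemma curve_zero {s p : Fin d → ℝ} (hs : ∀ i, 0 < s i) (hp0 : ∀ i, 0 ≤ p i) :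
    curve d s p 0 = 0 := by
  apply le_antisymm
  · apply curve_le hp0 le_rfl
    intro lam h1 h2
    have : ∀ i ∈ Finset.univ, lam i * s i = 0 := by
      intro i _
      have h3 : ∀ j ∈ (Finset.univ : Finset (Fin d)), 0 ≤ lam j * s j :=
        fun j _ => mul_nonneg (h1 j).1 (hs j).le
      exact (Finset.sum_eq_zero_iff_of_nonneg h3).1 h2 i (Finset.mem_univ i)
    have hl : ∀ i, lam i = 0 := fun i => by
      have := this i (Finset.mem_univ i)
      rcases mul_eq_zero.1 this with h | h
      · exact h
      · exact absurd h (hs i).ne'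
    apply le_of_eq
    apply Finset.sum_eq_zero
    intro i _
    rw [hl i, zero_mul]
  · have := le_curve (s := s) hp0 (fun _ => 0) (fun i => ⟨le_rfl, zero_le_one⟩)
      (x := 0) (by simp)
    simpa using this

lemma curve_total {s p : Fin d → ℝ} (hp0 : ∀ i, 0 ≤ p i) (hp1 : ∑ i, p i = 1) :
    curve d s p (∑ i, s i) = 1 := by
  apply le_antisymm (curve_le_one hp0 hp1 _)
  have := le_curve (s := s) hp0 (fun _ => 1) (fun i => ⟨zero_le_one, le_rfl⟩)
    (x := ∑ i, s i) (by simp)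
  simpa [hp1] using this

end S9

namespace S9
variable {d : ℕ}

lemma Zpos {s : Fin d → ℝ} (hd : 0 < d) (hs : ∀ i, 0 < s i) : 0 < ∑ i, s i := by
  have : Nonempty (Fin d) := ⟨⟨0, hd⟩⟩
  exact Finset.sum_pos (fun i _ => hs i) Finset.univ_nonempty

lemma curve_set_nonempty {s p : Fin d → ℝ} (hd : 0 < d) (hs : ∀ i, 0 < s i) {x : ℝ}
    (hx0 : 0 ≤ x) (hxZ : x ≤ ∑ i, s i) :
    Set.Nonempty {y | ∃ lam : Fin d → ℝ, (∀ i, lam i ∈ Set.Icc (0 : ℝ) 1) ∧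
      (∑ i, lam i * s i = x) ∧ y = ∑ i, lam i * p i} := by
  have hZ := Zpos hd hs
  refine ⟨_, fun _ => x / ∑ i, s i, fun i => ⟨div_nonneg hx0 hZ.le, (div_le_one hZ).2 hxZ⟩, ?_, rfl⟩
  have : ∑ i, x / (∑ j, s j) * s i = (x / ∑ j, s j) * ∑ i, s i := by
    rw [Finset.mul_sum]
  rw [this, div_mul_cancel₀ _ hZ.ne']

lemma curve_nonneg {s p : Fin d → ℝ} (hd : 0 < d) (hs : ∀ i, 0 < s i) (hp0 : ∀ i, 0 ≤ p i)
    {x : ℝ} (hx0 : 0 ≤ x) (hxZ : x ≤ ∑ i, s i) : 0 ≤ curve d s p x := by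
  obtain ⟨y, lam, h1, h2, rfl⟩ := curve_set_nonempty (p := p) hd hs hx0 hxZ
  exact le_trans (Finset.sum_nonneg fun i _ => mul_nonneg (h1 i).1 (hp0 i))
    (le_curve hp0 lam h1 h2)

lemma curve_mono {s p : Fin d → ℝ} (hd : 0 < d) (hs : ∀ i, 0 < s i) (hp0 : ∀ i, 0 ≤ p i)
    {x x' : ℝ} (h1 : 0 ≤ x) (hxx : x ≤ x') (h2 : x' ≤ ∑ i, s i) :
    curve d s p x ≤ curve d s p x' := by
  set Z := ∑ i, s i with hZdef
  apply Real.sSup_le _ (curve_nonneg hd hs hp0 (h1.trans hxx) h2)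
  rintro y ⟨lam, hl1, hl2, rfl⟩
  rcases eq_or_lt_of_le (le_trans hxx h2) with hxZ | hxZ
  · have hx' : x = x' := le_antisymm hxx (hxZ ▸ h2)
    exact le_curve hp0 lam hl1 (hx' ▸ hl2)
  · set u := (x' - x) / (Z - x) with hu
    have hu0 : 0 ≤ u := div_nonneg (by linarith) (by linarith)
    have hu1 : u ≤ 1 := (div_le_one (by linarith)).2 (by linarith)
    set lam' := fun i => lam i + u * (1 - lam i) with hlam'
    have hl1' : ∀ i, lam' i ∈ Set.Icc (0:ℝ) 1 := by
      intro i
      have := (hl1 i).1; have := (hl1 i).2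
      constructor
      · dsimp [lam']; nlinarith
      · dsimp [lam']; nlinarith
    have hsum : ∑ i, lam' i * s i = x' := by
      have : ∑ i, lam' i * s i = ∑ i, lam i * s i + u * (Z - ∑ i, lam i * s i) := by
        calc ∑ i, lam' i * s i = ∑ i, (lam i * s i + u * (s i - lam i * s i)) := by
              apply Finset.sum_congr rfl; intro i _; dsimp [lam']; ring
          _ = ∑ i, lam i * s i + u * (Z - ∑ i, lam i * s i) := by
              rw [Finset.sum_add_distrib, ← Finset.mul_sum, Finset.sum_sub_distrib, hZdef]
      rw [this, hl2, hu]
      have hne : Z - x ≠ 0 := ne_of_gt (by linarith)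
      field_simp
      ring
    calc ∑ i, lam i * p i ≤ ∑ i, lam' i * p i := by
          apply Finset.sum_le_sum
          intro i _
          apply mul_le_mul_of_nonneg_right _ (hp0 i)
          have := (hl1 i).2
          dsimp [lam']; nlinarith
      _ ≤ _ := le_curve hp0 lam' hl1' hsum

lemma curve_concave_aux {s p : Fin d → ℝ} (hd : 0 < d) (hs : ∀ i, 0 < s i) (hp0 : ∀ i, 0 ≤ p i)
    {x1 x2 t : ℝ} (hx1 : 0 ≤ x1) (hx1Z : x1 ≤ ∑ i, s i) (hx2 : 0 ≤ x2) (hx2Z : x2 ≤ ∑ i, s i)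
    (ht0 : 0 ≤ t) (ht1 : t ≤ 1) :
    (1 - t) * curve d s p x1 + t * curve d s p x2 ≤ curve d s p ((1 - t) * x1 + t * x2) := by
  apply le_of_forall_pos_le_add
  intro ε hε
  obtain ⟨y1, hy1S, hy1⟩ := exists_lt_of_lt_csSup (curve_set_nonempty (p := p) hd hs hx1 hx1Z)
    (show curve d s p x1 - ε < curve d s p x1 by linarith)
  obtain ⟨y2, hy2S, hy2⟩ := exists_lt_of_lt_csSup (curve_set_nonempty (p := p) hd hs hx2 hx2Z)
    (show curve d s p x2 - ε < curve d s p x2 by linarith)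
  obtain ⟨lam1, h11, h12, rfl⟩ := hy1S
  obtain ⟨lam2, h21, h22, rfl⟩ := hy2S
  set lam := fun i => (1 - t) * lam1 i + t * lam2 i with hlam
  have h1 : ∀ i, lam i ∈ Set.Icc (0:ℝ) 1 := by
    intro i
    have a1 := (h11 i).1; have a2 := (h11 i).2; have b1 := (h21 i).1; have b2 := (h21 i).2
    constructor
    · dsimp [lam]; nlinarith
    · dsimp [lam]; nlinarith
  have h2 : ∑ i, lam i * s i = (1 - t) * x1 + t * x2 := by
    dsimp [lam]
    rw [← h12, ← h22, Finset.mul_sum, Finset.mul_sum, ← Finset.sum_add_distrib]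
    congr 1; ext i; ring
  have key : ∑ i, lam i * p i = (1 - t) * (∑ i, lam1 i * p i) + t * (∑ i, lam2 i * p i) := by
    dsimp [lam]
    rw [Finset.mul_sum, Finset.mul_sum, ← Finset.sum_add_distrib]
    congr 1; ext i; ring
  have := le_curve hp0 lam h1 h2
  rw [key] at this
  nlinarith

end S9

namespace S9
variable {d : ℕ}

/-- Partial sum of `q ∘ π` over indices `< k`. -/
noncomputable def pS (q : Fin d → ℝ) (π : Equiv.Perm (Fin d)) (k : ℕ) : ℝ :=
  ∑ i ∈ Finset.univ.filter (fun i : Fin d => (i : ℕ) < k), q (π i)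

lemma pS_zero (q : Fin d → ℝ) (π : Equiv.Perm (Fin d)) : pS q π 0 = 0 := by
  simp [pS]

lemma pS_succ (q : Fin d → ℝ) (π : Equiv.Perm (Fin d)) {k : ℕ} (hk : k < d) :
    pS q π (k + 1) = pS q π k + q (π ⟨k, hk⟩) := by
  unfold pS
  have hset : Finset.univ.filter (fun i : Fin d => (i : ℕ) < k + 1) =
      insert ⟨k, hk⟩ (Finset.univ.filter (fun i : Fin d => (i : ℕ) < k)) := by
    ext i
    simp only [Finset.mem_filter, Finset.mem_univ, true_and, Finset.mem_insert]
    constructor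
    · intro h
      rcases Nat.lt_succ_iff_lt_or_eq.1 h with h | h
      · exact Or.inr h
      · exact Or.inl (Fin.ext h)
    · rintro (rfl | h)
      · exact Nat.lt_succ_self k
      · exact Nat.lt_succ_of_lt h
  rw [hset, Finset.sum_insert (by simp)]
  ring

lemma pS_ge (q : Fin d → ℝ) (π : Equiv.Perm (Fin d)) {k : ℕ} (hk : d ≤ k) :
    pS q π k = ∑ i, q i := by
  unfold pS
  rw [Finset.filter_true_of_mem (fun i _ => lt_of_lt_of_le i.isLt hk)]
  exact Equiv.sum_comp π q

lemma pS_mono {q : Fin d → ℝ} (hq : ∀ i, 0 ≤ q i) (π : Equiv.Perm (Fin d)) {k k' : ℕ}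
    (h : k ≤ k') : pS q π k ≤ pS q π k' := by
  apply Finset.sum_le_sum_of_subset_of_nonneg
  · intro i hi
    simp only [Finset.mem_filter, Finset.mem_univ, true_and] at hi ⊢
    omega
  · exact fun i _ _ => hq (π i)

lemma pS_nonneg {q : Fin d → ℝ} (hq : ∀ i, 0 ≤ q i) (π : Equiv.Perm (Fin d)) (k : ℕ) :
    0 ≤ pS q π k := by
  have := pS_mono hq π (Nat.zero_le k)
  rwa [pS_zero] at this

lemma pS_le_total {q : Fin d → ℝ} (hq : ∀ i, 0 ≤ q i) (π : Equiv.Perm (Fin d)) (k : ℕ) :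
    pS q π k ≤ ∑ i, q i := by
  rcases le_or_gt d k with h | h
  · rw [pS_ge q π h]
  · have := pS_mono hq π (le_of_lt (Nat.lt_succ_of_lt (Nat.lt_succ_of_lt h)))
    calc pS q π k ≤ pS q π d := pS_mono hq π h.le
      _ = ∑ i, q i := pS_ge q π le_rfl

lemma pS_Iic (q : Fin d → ℝ) (π : Equiv.Perm (Fin d)) (k : Fin d) :
    ∑ i ∈ Finset.Iic k, q (π i) = pS q π ((k : ℕ) + 1) := by
  unfold pS
  congr 1
  ext i
  simp only [Finset.mem_Iic, Finset.mem_filter, Finset.mem_univ, true_and, Fin.le_def,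
    Nat.lt_succ_iff]

/-- The exchange inequality: key upper bound for the thermomajorization curve. -/
lemma exchange {s q : Fin d → ℝ} (hs : ∀ i, 0 < s i) (hq : ∀ i, 0 ≤ q i)
    {π : Equiv.Perm (Fin d)} (hβ : IsBetaOrder d s q π) {k : ℕ} (hk : k < d)
    (lam : Fin d → ℝ) (hlam : ∀ i, lam i ∈ Set.Icc (0:ℝ) 1) {x : ℝ}
    (hx : ∑ i, lam i * s i = x) :
    ∑ i, lam i * q i ≤ pS q π k + (x - pS s π k) * (q (π ⟨k, hk⟩) / s (π ⟨k, hk⟩)) := by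
  set t := q (π ⟨k, hk⟩) / s (π ⟨k, hk⟩) with ht
  have key : ∀ i : Fin d, lam (π i) * (q (π i) - t * s (π i)) ≤
      if (i : ℕ) < k then q (π i) - t * s (π i) else 0 := by
    intro i
    by_cases hik : (i : ℕ) < k
    · simp only [hik, if_true]
      have hle : i ≤ (⟨k, hk⟩ : Fin d) := by
        rw [Fin.le_def]; exact Nat.le_of_lt hik
      have := hβ i ⟨k, hk⟩ hle
      have hpos : 0 ≤ q (π i) - t * s (π i) := by
        rw [ht, sub_nonneg]
        exact (le_div_iff₀ (hs (π i))).1 this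
      nlinarith [(hlam (π i)).2, (hlam (π i)).1]
    · simp only [hik, if_false]
      have hle : (⟨k, hk⟩ : Fin d) ≤ i := by
        rw [Fin.le_def]; exact Nat.le_of_not_lt hik
      have := hβ ⟨k, hk⟩ i hle
      have hneg : q (π i) - t * s (π i) ≤ 0 := by
        rw [ht, sub_nonpos]
        exact (div_le_iff₀ (hs (π i))).1 this
      nlinarith [(hlam (π i)).1]
  have step1 : ∑ i, lam (π i) * (q (π i) - t * s (π i)) ≤ pS q π k - t * pS s π k := by
    calc ∑ i, lam (π i) * (q (π i) - t * s (π i))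
        ≤ ∑ i : Fin d, (if (i : ℕ) < k then q (π i) - t * s (π i) else 0) :=
          Finset.sum_le_sum fun i _ => key i
      _ = ∑ i ∈ Finset.univ.filter (fun i : Fin d => (i : ℕ) < k), (q (π i) - t * s (π i)) :=
          (Finset.sum_filter _ _).symm
      _ = pS q π k - t * pS s π k := by
          unfold pS
          rw [Finset.sum_sub_distrib, Finset.mul_sum]
  have step2 : ∑ i, lam i * q i = ∑ i, lam (π i) * (q (π i) - t * s (π i)) + t * x := by
    rw [← hx]
    have e1 : ∑ i, lam i * q i = ∑ i, lam (π i) * q (π i) :=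
      (Equiv.sum_comp π (fun i => lam i * q i)).symm
    have e2 : ∑ i, lam i * s i = ∑ i, lam (π i) * s (π i) :=
      (Equiv.sum_comp π (fun i => lam i * s i)).symm
    rw [e1, e2, Finset.mul_sum, ← Finset.sum_add_distrib]
    congr 1; ext i; ring
  rw [step2]
  calc ∑ i, lam (π i) * (q (π i) - t * s (π i)) + t * x
      ≤ pS q π k - t * pS s π k + t * x := by linarith
    _ = pS q π k + (x - pS s π k) * t := by ring

end S9

namespace S9
variable {d : ℕ}

/-- The tight vector associated to a permutation: increments of the curve of `p`. -/
noncomputable def tightVec (s p : Fin d → ℝ) (π : Equiv.Perm (Fin d)) : Fin d → ℝ :=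
  fun i => curve d s p (pS s π ((π.symm i : ℕ) + 1)) - curve d s p (pS s π (π.symm i))

lemma tightVec_apply (s p : Fin d → ℝ) (π : Equiv.Perm (Fin d)) (j : Fin d) :
    tightVec s p π (π j) =
      curve d s p (pS s π ((j : ℕ) + 1)) - curve d s p (pS s π (j : ℕ)) := by
  simp [tightVec]

variable {s p : Fin d → ℝ}

lemma curve_pS_mono (hd : 0 < d) (hs : ∀ i, 0 < s i) (hp0 : ∀ i, 0 ≤ p i)
    (π : Equiv.Perm (Fin d)) {k k' : ℕ} (h : k ≤ k') :
    curve d s p (pS s π k) ≤ curve d s p (pS s π k') :=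
  curve_mono hd hs hp0 (pS_nonneg (fun i => (hs i).le) π k)
    (pS_mono (fun i => (hs i).le) π h) (pS_le_total (fun i => (hs i).le) π k')

lemma tightVec_nonneg (hd : 0 < d) (hs : ∀ i, 0 < s i) (hp0 : ∀ i, 0 ≤ p i)
    (π : Equiv.Perm (Fin d)) (i : Fin d) : 0 ≤ tightVec s p π i := by
  unfold tightVec
  have := curve_pS_mono hd hs hp0 π (Nat.le_succ (π.symm i : ℕ))
  linarith

lemma pS_tightVec (hd : 0 < d) (hs : ∀ i, 0 < s i) (hp0 : ∀ i, 0 ≤ p i)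
    (π : Equiv.Perm (Fin d)) : ∀ k, k ≤ d →
    pS (tightVec s p π) π k = curve d s p (pS s π k) := by
  intro k
  induction k with
  | zero => intro _; rw [pS_zero, pS_zero, curve_zero hs hp0]
  | succ k ih =>
    intro hk1
    have hk : k < d := hk1
    rw [pS_succ (tightVec s p π) π hk, ih (le_of_lt hk), tightVec_apply]
    ring

lemma sum_tightVec (hd : 0 < d) (hs : ∀ i, 0 < s i) (hp0 : ∀ i, 0 ≤ p i) (hp1 : ∑ i, p i = 1)
    (π : Equiv.Perm (Fin d)) : ∑ i, tightVec s p π i = 1 := by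
  have := pS_tightVec hd hs hp0 π d le_rfl
  rw [pS_ge _ π le_rfl, pS_ge _ π le_rfl] at this
  rw [this, curve_total hp0 hp1]

lemma tightVec_probVec (hd : 0 < d) (hs : ∀ i, 0 < s i) (hp0 : ∀ i, 0 ≤ p i)
    (hp1 : ∑ i, p i = 1) (π : Equiv.Perm (Fin d)) : ProbVec d (tightVec s p π) :=
  ⟨tightVec_nonneg hd hs hp0 π, sum_tightVec hd hs hp0 hp1 π⟩

lemma tightVec_betaOrder (hd : 0 < d) (hs : ∀ i, 0 < s i) (hp0 : ∀ i, 0 ≤ p i)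
    (π : Equiv.Perm (Fin d)) : IsBetaOrder d s (tightVec s p π) π := by
  set σ := tightVec s p π with hσ
  set sl : Fin d → ℝ := fun m => σ (π m) / s (π m) with hsl
  have adj : ∀ m : ℕ, ∀ hm1 : m + 1 < d, sl ⟨m + 1, hm1⟩ ≤ sl ⟨m, Nat.lt_of_succ_lt hm1⟩ := by
    intro m hm1
    have hm : m < d := Nat.lt_of_succ_lt hm1
    set a := s (π ⟨m, hm⟩) with ha
    set b := s (π ⟨m + 1, hm1⟩) with hb
    have ha0 : 0 < a := hs _
    have hb0 : 0 < b := hs _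
    set F : ℕ → ℝ := fun k => curve d s p (pS s π k) with hF
    have hX1 : pS s π (m + 1) = pS s π m + a := pS_succ s π hm
    have hX2 : pS s π (m + 2) = pS s π (m + 1) + b := pS_succ s π hm1
    -- concavity at x1 = pS m, x2 = pS (m+2), t = a / (a+b)
    have hab : 0 < a + b := by linarith
    have ht0 : 0 ≤ a / (a + b) := by positivity
    have ht1 : a / (a + b) ≤ 1 := by
      rw [div_le_one hab]; linarith
    have hcomb : (1 - a / (a + b)) * pS s π m + (a / (a + b)) * pS s π (m + 2)
        = pS s π (m + 1) := by
      rw [hX2, hX1]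
      field_simp
      ring
    have hcc := curve_concave_aux hd hs hp0
      (pS_nonneg (fun i => (hs i).le) π m) (pS_le_total (fun i => (hs i).le) π m)
      (pS_nonneg (fun i => (hs i).le) π (m + 2)) (pS_le_total (fun i => (hs i).le) π (m + 2))
      ht0 ht1
    rw [hcomb] at hcc
    -- hcc : (1 - t) F m + t F (m+2) ≤ F (m+1)
    have key : b * (F (m + 1) - F m) ≥ a * (F (m + 2) - F (m + 1)) := by
      have h1 : (1 - a / (a + b)) * F m + (a / (a + b)) * F (m + 2) ≤ F (m + 1) := hcc
      have h2 : (a + b) * ((1 - a / (a + b)) * F m + (a / (a + b)) * F (m + 2)) =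
          b * F m + a * F (m + 2) := by
        field_simp
        ring
      nlinarith [hab]
    have e1 : σ (π ⟨m, hm⟩) = F (m + 1) - F m := tightVec_apply s p π _
    have e2 : σ (π ⟨m + 1, hm1⟩) = F (m + 2) - F (m + 1) := tightVec_apply s p π _
    rw [hsl]
    dsimp only
    rw [e1, e2, div_le_div_iff₀ hb0 ha0]
    nlinarith
  -- now chain adjacent inequalities
  have chain : ∀ n : ℕ, ∀ i j : Fin d, (j : ℕ) = (i : ℕ) + n → sl j ≤ sl i := by
    intro n
    induction n with
    | zero => intro i j h; have : i = j := Fin.ext (by omega); rw [this]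
    | succ n ih =>
      intro i j h
      have hj : ((i : ℕ) + n) + 1 < d := by omega
      have hj' : ((i : ℕ) + n) < d := Nat.lt_of_succ_lt hj
      have e : j = ⟨(i : ℕ) + n + 1, hj⟩ := Fin.ext (by simp only [Fin.val_mk]; omega)
      calc sl j = sl ⟨(i : ℕ) + n + 1, hj⟩ := by rw [e]
        _ ≤ sl ⟨(i : ℕ) + n, hj'⟩ := adj _ hj
        _ ≤ sl i := ih i _ rfl
  intro i j hij
  exact chain ((j : ℕ) - (i : ℕ)) i j (by omega)

lemma exists_interval (hd : 0 < d) (hs : ∀ i, 0 < s i) (π : Equiv.Perm (Fin d)) {x : ℝ}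
    (hx0 : 0 ≤ x) (hxZ : x ≤ ∑ i, s i) :
    ∃ k, ∃ hk : k < d, pS s π k ≤ x ∧ x ≤ pS s π (k + 1) := by
  set A := (Finset.range d).filter (fun k => pS s π k ≤ x) with hA
  have h0A : 0 ∈ A := by
    simp only [hA, Finset.mem_filter, Finset.mem_range]
    exact ⟨hd, by rw [pS_zero]; exact hx0⟩
  have hne : A.Nonempty := ⟨0, h0A⟩
  set k := A.max' hne with hkdef
  have hkA : k ∈ A := A.max'_mem hne
  simp only [hA, Finset.mem_filter, Finset.mem_range] at hkA
  refine ⟨k, hkA.1, hkA.2, ?_⟩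
  rcases lt_or_ge (k + 1) d with h | h
  · by_contra hcon
    push_neg at hcon
    have : k + 1 ∈ A := by
      simp only [hA, Finset.mem_filter, Finset.mem_range]
      exact ⟨h, hcon.le⟩
    have := A.le_max' _ this
    omega
  · rw [pS_ge s π h]
    exact hxZ

lemma curve_tightVec_le (hd : 0 < d) (hs : ∀ i, 0 < s i) (hp0 : ∀ i, 0 ≤ p i)
    (hp1 : ∑ i, p i = 1) (π : Equiv.Perm (Fin d)) {x : ℝ} (hx0 : 0 ≤ x)
    (hxZ : x ≤ ∑ i, s i) :
    curve d s (tightVec s p π) x ≤ curve d s p x := by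
  set σ := tightVec s p π with hσ
  have hσ0 : ∀ i, 0 ≤ σ i := tightVec_nonneg hd hs hp0 π
  apply Real.sSup_le _ (curve_nonneg hd hs hp0 hx0 hxZ)
  rintro y ⟨lam, h1, h2, rfl⟩
  obtain ⟨k, hk, hxk1, hxk2⟩ := exists_interval hd hs π hx0 hxZ
  have hexch := exchange hs hσ0 (tightVec_betaOrder hd hs hp0 π) hk lam h1 h2
  set F : ℕ → ℝ := fun m => curve d s p (pS s π m) with hF
  have e0 : pS σ π k = F k := pS_tightVec hd hs hp0 π k hk.le
  have e1 : σ (π ⟨k, hk⟩) = F (k + 1) - F k := tightVec_apply s p π _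
  set a := s (π ⟨k, hk⟩) with ha
  have ha0 : 0 < a := hs _
  have hX1 : pS s π (k + 1) = pS s π k + a := pS_succ s π hk
  -- concavity: x between pS k and pS (k+1)
  have ht0 : 0 ≤ (x - pS s π k) / a := div_nonneg (by linarith) ha0.le
  have ht1 : (x - pS s π k) / a ≤ 1 := by
    rw [div_le_one ha0]
    have := hxk2
    rw [hX1] at this
    linarith
  have hcomb : (1 - (x - pS s π k) / a) * pS s π k + ((x - pS s π k) / a) * pS s π (k + 1)
      = x := by
    rw [hX1]
    field_simp
    ring
  have hcc := curve_concave_aux hd hs hp0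
    (pS_nonneg (fun i => (hs i).le) π k) (pS_le_total (fun i => (hs i).le) π k)
    (pS_nonneg (fun i => (hs i).le) π (k + 1)) (pS_le_total (fun i => (hs i).le) π (k + 1))
    ht0 ht1
  rw [hcomb] at hcc
  -- hcc : (1 - t) * F k + t * F (k+1) ≤ curve p x
  have expand : pS σ π k + (x - pS s π k) * (σ (π ⟨k, hk⟩) / a) =
      (1 - (x - pS s π k) / a) * F k + ((x - pS s π k) / a) * F (k + 1) := by
    rw [e0, e1]
    field_simp
    ring
  calc ∑ i, lam i * σ i ≤ pS σ π k + (x - pS s π k) * (σ (π ⟨k, hk⟩) / a) := hexch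
    _ = (1 - (x - pS s π k) / a) * F k + ((x - pS s π k) / a) * F (k + 1) := expand
    _ ≤ curve d s p x := hcc

lemma tightVec_tight (hd : 0 < d) (hs : ∀ i, 0 < s i) (hp0 : ∀ i, 0 ≤ p i)
    (hp1 : ∑ i, p i = 1) (π : Equiv.Perm (Fin d)) :
    TightlyThermomajorizes d s p (tightVec s p π) := by
  constructor
  · intro x hx
    exact curve_tightVec_le hd hs hp0 hp1 π hx.1 hx.2
  · refine ⟨π, tightVec_betaOrder hd hs hp0 π, ?_⟩
    intro k _
    rw [pS_Iic, pS_Iic, pS_tightVec hd hs hp0 π ((k : ℕ) + 1) k.isLt]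

end S9

namespace S9
variable {d : ℕ} {s p : Fin d → ℝ}

/-- The thermomajorization polytope. -/
def Kset (s p : Fin d → ℝ) : Set (Fin d → ℝ) :=
  {q | (∀ i, 0 ≤ q i) ∧ (∑ i, q i = 1) ∧
    ∀ A : Finset (Fin d), ∑ i ∈ A, q i ≤ curve d s p (∑ i ∈ A, s i)}

lemma achievable_subset_K (hd : 0 < d) (hs : ∀ i, 0 < s i) (hp : ProbVec d p) :
    achievable d s p ⊆ Kset s p := by
  rintro r ⟨T, ⟨hT0, hTcol, hTg⟩, rfl⟩
  obtain ⟨hp0, hp1⟩ := hp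
  have hZ : (0:ℝ) < ∑ i, s i := Zpos hd hs
  have hTs : ∀ i, ∑ j, T i j * s j = s i := by
    intro i
    have := congrFun hTg i
    simp only [Matrix.mulVec, dotProduct] at this
    have h2 : (∑ j, T i j * s j) / (∑ k, s k) = s i / (∑ k, s k) := by
      rw [← this, Finset.sum_div]
      congr 1; ext j; rw [mul_div_assoc]
    field_simp at h2
    exact h2
  have hmv : ∀ i, T.mulVec p i = ∑ j, T i j * p j := by
    intro i; simp [Matrix.mulVec, dotProduct]
  refine ⟨?_, ?_, ?_⟩
  · intro i
    show 0 ≤ T.mulVec p i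
    rw [hmv]
    exact Finset.sum_nonneg fun j _ => mul_nonneg (hT0 i j) (hp0 j)
  · show ∑ i, T.mulVec p i = 1
    calc ∑ i, T.mulVec p i = ∑ i, ∑ j, T i j * p j := by simp [hmv]
      _ = ∑ j, (∑ i, T i j) * p j := by
          rw [Finset.sum_comm]
          congr 1; ext j; rw [Finset.sum_mul]
      _ = ∑ j, p j := by
          congr 1; ext j; rw [hTcol j, one_mul]
      _ = 1 := hp1
  · intro A
    show ∑ i ∈ A, T.mulVec p i ≤ curve d s p (∑ i ∈ A, s i)
    set μ := fun j => ∑ i ∈ A, T i j with hμ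
    have hμ01 : ∀ j, μ j ∈ Set.Icc (0:ℝ) 1 := by
      intro j
      constructor
      · exact Finset.sum_nonneg fun i _ => hT0 i j
      · calc μ j ≤ ∑ i, T i j :=
              Finset.sum_le_sum_of_subset_of_nonneg (Finset.subset_univ A)
                (fun i _ _ => hT0 i j)
          _ = 1 := hTcol j
    have hμs : ∑ j, μ j * s j = ∑ i ∈ A, s i := by
      calc ∑ j, μ j * s j = ∑ j, ∑ i ∈ A, T i j * s j := by
            congr 1; ext j; rw [hμ]; rw [Finset.sum_mul]
        _ = ∑ i ∈ A, ∑ j, T i j * s j := Finset.sum_comm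
        _ = ∑ i ∈ A, s i := by congr 1; ext i; rw [hTs i]
    have hμp : ∑ i ∈ A, T.mulVec p i = ∑ j, μ j * p j := by
      calc ∑ i ∈ A, T.mulVec p i = ∑ i ∈ A, ∑ j, T i j * p j := by
            apply Finset.sum_congr rfl; intro i _; exact hmv i
        _ = ∑ j, ∑ i ∈ A, T i j * p j := Finset.sum_comm
        _ = ∑ j, μ j * p j := by congr 1; ext j; rw [hμ, Finset.sum_mul]
    rw [hμp]
    exact le_curve hp0 μ hμ01 hμs

lemma curve_spread (hd : 0 < d) (hs : ∀ i, 0 < s i) (hp0 : ∀ i, 0 ≤ p i)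
    {m a b M : ℝ} (hsum : m + M = a + b) (h1 : m ≤ a) (h2 : a ≤ M)
    (hm0 : 0 ≤ m) (hMZ : M ≤ ∑ i, s i) :
    curve d s p m + curve d s p M ≤ curve d s p a + curve d s p b := by
  rcases eq_or_lt_of_le (h1.trans h2) with he | hlt
  · have ha : a = m := by linarith
    have hb : b = M := by linarith
    rw [ha, hb]
  · set t := (a - m) / (M - m) with ht
    have hMm : 0 < M - m := by linarith
    have ht0 : 0 ≤ t := div_nonneg (by linarith) hMm.le
    have ht1 : t ≤ 1 := (div_le_one hMm).2 (by linarith)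
    have hca : (1 - t) * m + t * M = a := by
      rw [ht]
      field_simp [hMm.ne']
      ring
    have hcb : (1 - (1 - t)) * m + (1 - t) * M = b := by
      field_simp [ht]
      ring_nf
      nlinarith [hsum]
    have hA := curve_concave_aux hd hs hp0 hm0 (by linarith) (by linarith) hMZ ht0 ht1
    rw [hca] at hA
    have hB := curve_concave_aux hd hs hp0 hm0 (by linarith) (by linarith) hMZ
      (t := 1 - t) (by linarith) (by linarith)
    rw [hcb] at hB
    linarith

/-- A subset is "active" for `q` if its constraint is tight. -/
def Active (s p q : Fin d → ℝ) (A : Finset (Fin d)) : Prop :=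
  ∑ i ∈ A, q i = curve d s p (∑ i ∈ A, s i)

lemma active_empty (hs : ∀ i, 0 < s i) (hp0 : ∀ i, 0 ≤ p i) {q : Fin d → ℝ} :
    Active s p q ∅ := by
  simp [Active, curve_zero hs hp0]

lemma active_univ (hp0 : ∀ i, 0 ≤ p i) (hp1 : ∑ i, p i = 1) {q : Fin d → ℝ}
    (hq : q ∈ Kset s p) : Active s p q Finset.univ := by
  unfold Active
  rw [hq.2.1, curve_total hp0 hp1]

lemma active_lattice (hd : 0 < d) (hs : ∀ i, 0 < s i) (hp0 : ∀ i, 0 ≤ p i)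
    {q : Fin d → ℝ} (hq : q ∈ Kset s p) {A B : Finset (Fin d)}
    (hA : Active s p q A) (hB : Active s p q B) :
    Active s p q (A ∩ B) ∧ Active s p q (A ∪ B) := by
  classical
  have hsum_q : ∑ i ∈ A ∪ B, q i + ∑ i ∈ A ∩ B, q i = ∑ i ∈ A, q i + ∑ i ∈ B, q i :=
    Finset.sum_union_inter
  have hsum_s : ∑ i ∈ A ∪ B, s i + ∑ i ∈ A ∩ B, s i = ∑ i ∈ A, s i + ∑ i ∈ B, s i :=
    Finset.sum_union_inter
  have hss : ∀ (C D : Finset (Fin d)), C ⊆ D → ∑ i ∈ C, s i ≤ ∑ i ∈ D, s i :=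
    fun C D h => Finset.sum_le_sum_of_subset_of_nonneg h (fun i _ _ => (hs i).le)
  have h1 : ∑ i ∈ A ∩ B, s i ≤ ∑ i ∈ A, s i := hss _ _ (Finset.inter_subset_left)
  have h2 : ∑ i ∈ A, s i ≤ ∑ i ∈ A ∪ B, s i := hss _ _ (Finset.subset_union_left)
  have h0 : 0 ≤ ∑ i ∈ A ∩ B, s i := Finset.sum_nonneg fun i _ => (hs i).le
  have hZ : ∑ i ∈ A ∪ B, s i ≤ ∑ i, s i := hss _ _ (Finset.subset_univ _)
  have hspread := curve_spread hd hs hp0 (m := ∑ i ∈ A ∩ B, s i) (M := ∑ i ∈ A ∪ B, s i)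
    (a := ∑ i ∈ A, s i) (b := ∑ i ∈ B, s i) (by linarith) h1 h2 h0 hZ
  have hc1 : ∑ i ∈ A ∩ B, q i ≤ curve d s p (∑ i ∈ A ∩ B, s i) := hq.2.2 _
  have hc2 : ∑ i ∈ A ∪ B, q i ≤ curve d s p (∑ i ∈ A ∪ B, s i) := hq.2.2 _
  unfold Active at hA hB ⊢
  constructor
  · linarith
  · linarith

end S9

namespace S9
variable {d : ℕ} {s p : Fin d → ℝ}

lemma active_step (hd : 0 < d) (hs : ∀ i, 0 < s i) (hp0 : ∀ i, 0 ≤ p i) (hp1 : ∑ i, p i = 1)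
    {q : Fin d → ℝ} (hext : q ∈ (Kset s p).extremePoints ℝ)
    {A : Finset (Fin d)} (hA : Active s p q A) (hAne : A ≠ Finset.univ) :
    ∃ i, i ∉ A ∧ Active s p q (insert i A) := by
  classical
  have hq : q ∈ Kset s p := hext.1
  set 𝔅 := Finset.univ.filter (fun B : Finset (Fin d) => Active s p q B ∧ A ⊂ B) with h𝔅
  have hu : Finset.univ ∈ 𝔅 := by
    simp only [h𝔅, Finset.mem_filter, Finset.mem_univ, true_and]
    exact ⟨active_univ hp0 hp1 hq, Finset.ssubset_univ_iff.2 hAne⟩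
  obtain ⟨B, hB𝔅, hBmin⟩ := Finset.exists_min_image 𝔅 (fun B => B.card) ⟨_, hu⟩
  simp only [h𝔅, Finset.mem_filter, Finset.mem_univ, true_and] at hB𝔅
  obtain ⟨hBact, hAB⟩ := hB𝔅
  obtain ⟨i, hiB, hiA⟩ := Finset.exists_of_ssubset hAB
  by_cases hBi : B = insert i A
  · exact ⟨i, hiA, hBi ▸ hBact⟩
  have hex2 : ∃ i', i' ∈ B ∧ i' ∉ A ∧ i' ≠ i := by
    by_contra h
    push_neg at h
    apply hBi
    apply Finset.Subset.antisymm
    · intro x hx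
      by_cases hxA : x ∈ A
      · exact Finset.mem_insert_of_mem hxA
      · exact Finset.mem_insert.2 (Or.inl (h x hx hxA))
    · intro x hx
      rcases Finset.mem_insert.1 hx with rfl | hxA
      · exact hiB
      · exact hAB.subset hxA
  obtain ⟨i', hi'B, hi'A, hii'⟩ := hex2
  by_cases hz : ∃ j, j ∈ B ∧ j ∉ A ∧ q j = 0
  · obtain ⟨j, hjB, hjA, hqj⟩ := hz
    exfalso
    have hsub : B.erase j ⊆ B := Finset.erase_subset _ _
    have hsq : ∑ i ∈ B.erase j, q i = ∑ i ∈ B, q i := by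
      have := Finset.add_sum_erase B q hjB
      rw [hqj] at this
      linarith
    have hact' : Active s p q (B.erase j) := by
      have h1 : ∑ i ∈ B.erase j, q i ≤ curve d s p (∑ i ∈ B.erase j, s i) := hq.2.2 _
      have h2 : curve d s p (∑ i ∈ B.erase j, s i) ≤ curve d s p (∑ i ∈ B, s i) :=
        curve_mono hd hs hp0 (Finset.sum_nonneg fun i _ => (hs i).le)
          (Finset.sum_le_sum_of_subset_of_nonneg hsub (fun i _ _ => (hs i).le))
          (Finset.sum_le_sum_of_subset_of_nonneg (Finset.subset_univ _)
            (fun i _ _ => (hs i).le))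
      unfold Active at hBact ⊢
      linarith
    have hmem : B.erase j ∈ 𝔅 := by
      simp only [h𝔅, Finset.mem_filter, Finset.mem_univ, true_and]
      refine ⟨hact', ?_⟩
      have hsubA : A ⊆ B.erase j := fun x hx =>
        Finset.mem_erase.2 ⟨fun he => hjA (he ▸ hx), hAB.subset hx⟩
      rcases eq_or_ne i j with rfl | hij
      · exact (Finset.ssubset_iff_of_subset hsubA).2
          ⟨i', Finset.mem_erase.2 ⟨hii', hi'B⟩, hi'A⟩
      · exact (Finset.ssubset_iff_of_subset hsubA).2
          ⟨i, Finset.mem_erase.2 ⟨hij, hiB⟩, hiA⟩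
    have := hBmin _ hmem
    have := Finset.card_erase_lt_of_mem hjB
    omega
  · push_neg at hz
    exfalso
    have hqi : 0 < q i := lt_of_le_of_ne (hq.1 i) (Ne.symm (hz i hiB hiA))
    have hqi' : 0 < q i' := lt_of_le_of_ne (hq.1 i') (Ne.symm (hz i' hi'B hi'A))
    have sep : ∀ C : Finset (Fin d), Active s p q C → (i ∈ C ↔ i' ∈ C) := by
      intro C hC
      have hD : Active s p q (A ∪ C ∩ B) :=
        (active_lattice hd hs hp0 hq hA (active_lattice hd hs hp0 hq hC hBact).1).2
      have hDB : A ∪ C ∩ B ⊆ B :=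
        Finset.union_subset hAB.subset Finset.inter_subset_right
    -- if exactly one of i, i' belongs to C we get a contradiction with minimality of B
      have contra : ∀ w w' : Fin d, w ∈ B → w ∉ A → w' ∈ B → w' ∉ A →
          w ∈ C → w' ∉ C → False := by
        intro w w' hwB hwA hw'B hw'A hwC hw'C
        have hAD : A ⊂ A ∪ C ∩ B :=
          (Finset.ssubset_iff_of_subset Finset.subset_union_left).2
            ⟨w, Finset.mem_union_right _ (Finset.mem_inter.2 ⟨hwC, hwB⟩), hwA⟩
        have hDBs : A ∪ C ∩ B ⊂ B :=
          (Finset.ssubset_iff_of_subset hDB).2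
            ⟨w', hw'B, fun hmem => by
              rcases Finset.mem_union.1 hmem with h | h
              · exact hw'A h
              · exact hw'C (Finset.mem_inter.1 h).1⟩
        have hmem : A ∪ C ∩ B ∈ 𝔅 := by
          simp only [h𝔅, Finset.mem_filter, Finset.mem_univ, true_and]
          exact ⟨hD, hAD⟩
        have := hBmin _ hmem
        have := Finset.card_lt_card hDBs
        omega
      constructor
      · intro hiC
        by_contra hi'C
        exact contra i i' hiB hiA hi'B hi'A hiC hi'C
      · intro hi'C
        by_contra hiC
        exact contra i' i hi'B hi'A hiB hiA hi'C hiC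
    -- build the perturbation
    set slack := fun C : Finset (Fin d) => curve d s p (∑ i ∈ C, s i) - ∑ i ∈ C, q i
      with hslack
    set Bad := Finset.univ.filter (fun C : Finset (Fin d) => ¬ Active s p q C) with hBad
    have hBadpos : ∀ C ∈ Bad, 0 < slack C := by
      intro C hC
      simp only [hBad, Finset.mem_filter, Finset.mem_univ, true_and] at hC
      have h1 : ∑ i ∈ C, q i ≤ curve d s p (∑ i ∈ C, s i) := hq.2.2 C
      rcases lt_or_eq_of_le h1 with h | h
      · simp only [hslack]; linarith
      · exact absurd h hC
    set ε0 := if hne : Bad.Nonempty then Bad.inf' hne slack else 1 with hε0def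
    have hε0pos : 0 < ε0 := by
      rw [hε0def]
      split_ifs with hne
      · exact (Finset.lt_inf'_iff _).2 (fun C hC => hBadpos C hC)
      · exact one_pos
    have hε0le : ∀ C ∈ Bad, ε0 ≤ slack C := by
      intro C hC
      rw [hε0def]
      split_ifs with hne
      · exact Finset.inf'_le _ hC
      · exact absurd ⟨C, hC⟩ hne
    set ε := min (min (q i) (q i')) ε0 with hεdef
    have hεpos : 0 < ε := lt_min (lt_min hqi hqi') hε0pos
    have hεqi : ε ≤ q i := le_trans (min_le_left _ _) (min_le_left _ _)
    have hεqi' : ε ≤ q i' := le_trans (min_le_left _ _) (min_le_right _ _)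
    have hεε0 : ε ≤ ε0 := min_le_right _ _
    set v := fun j => if j = i then ε else if j = i' then -ε else 0 with hv
    have hvsum : ∀ C : Finset (Fin d),
        ∑ j ∈ C, v j = (if i ∈ C then ε else 0) - (if i' ∈ C then ε else 0) := by
      intro C
      have hptw : ∀ j, v j = (if j = i then ε else 0) + (if j = i' then -ε else 0) := by
        intro j
        rw [hv]
        by_cases h1 : j = i
        · subst h1
          simp [Ne.symm hii']
        · simp [h1]
      rw [Finset.sum_congr rfl (fun j _ => hptw j), Finset.sum_add_distrib,
        Finset.sum_ite_eq' C i (fun _ => ε), Finset.sum_ite_eq' C i' (fun _ => -ε)]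
      split_ifs <;> ring
    have hK' : ∀ η : ℝ, η = 1 ∨ η = -1 → (fun j => q j + η * v j) ∈ Kset s p := by
      intro η hη
      have hη1 : η * ε ≤ ε ∧ -ε ≤ η * ε := by
        rcases hη with rfl | rfl <;> constructor <;> linarith
      refine ⟨?_, ?_, ?_⟩
      · intro j
        rw [hv]
        dsimp only
        by_cases h1 : j = i
        · subst h1
          rw [if_pos rfl]
          rcases hη with rfl | rfl <;> linarith
        · by_cases h2 : j = i'
          · subst h2
            rw [if_neg h1, if_pos rfl]
            rcases hη with rfl | rfl <;> linarith
          · rw [if_neg h1, if_neg h2, mul_zero, add_zero]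
            exact hq.1 j
      · rw [Finset.sum_add_distrib, ← Finset.mul_sum, hvsum Finset.univ]
        simp [hq.2.1]
      · intro C
        rw [Finset.sum_add_distrib, ← Finset.mul_sum, hvsum C]
        by_cases hC : Active s p q C
        · have : (if i ∈ C then ε else 0) - (if i' ∈ C then ε else 0) = 0 := by
            rcases (sep C hC) with ⟨h1, h2⟩
            by_cases h : i ∈ C
            · rw [if_pos h, if_pos (h1 h)]; ring
            · rw [if_neg h, if_neg (fun h' => h (h2 h'))]; ring
          rw [this, mul_zero, add_zero, hC]
        · have hCB : C ∈ Bad := by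
            simp only [hBad, Finset.mem_filter, Finset.mem_univ, true_and]
            exact hC
          have habs : η * ((if i ∈ C then ε else 0) - (if i' ∈ C then ε else 0)) ≤ ε := by
            rcases hη with rfl | rfl <;> split_ifs <;> simp <;> linarith
          have := hε0le C hCB
          simp only [hslack] at this
          linarith
    have h1 := hK' 1 (Or.inl rfl)
    have h2 := hK' (-1) (Or.inr rfl)
    rw [mem_extremePoints] at hext
    have hseg : q ∈ openSegment ℝ (fun j => q j + 1 * v j) (fun j => q j + (-1) * v j) := by
      refine ⟨1/2, 1/2, by norm_num, by norm_num, by norm_num, ?_⟩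
      funext j
      simp only [Pi.add_apply, Pi.smul_apply, smul_eq_mul]
      ring
    obtain ⟨he1, -⟩ := hext.2 _ h1 _ h2 hseg
    have := congrFun he1 i
    simp only [hv, if_pos rfl] at this
    have : ε = 0 := by linarith
    linarith

end S9

namespace S9
variable {d : ℕ} {s p : Fin d → ℝ}

lemma filter_lt_succ {k : ℕ} (hk : k < d) :
    Finset.univ.filter (fun i : Fin d => (i : ℕ) < k + 1) =
      insert ⟨k, hk⟩ (Finset.univ.filter (fun i : Fin d => (i : ℕ) < k)) := by
  ext i
  simp only [Finset.mem_filter, Finset.mem_univ, true_and, Finset.mem_insert]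
  constructor
  · intro h
    rcases Nat.lt_succ_iff_lt_or_eq.1 h with h | h
    · exact Or.inr h
    · exact Or.inl (Fin.ext h)
  · rintro (rfl | h)
    · exact Nat.lt_succ_self k
    · exact Nat.lt_succ_of_lt h

lemma extreme_eq_tightVec (hd : 0 < d) (hs : ∀ i, 0 < s i) (hp0 : ∀ i, 0 ≤ p i)
    (hp1 : ∑ i, p i = 1) {q : Fin d → ℝ} (hext : q ∈ (Kset s p).extremePoints ℝ) :
    ∃ π : Equiv.Perm (Fin d), q = tightVec s p π := by
  classical
  have hq : q ∈ Kset s p := hext.1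
  have chain : ∀ n, n ≤ d → ∃ A : ℕ → Finset (Fin d),
      (∀ k, k ≤ n → (A k).card = k ∧ Active s p q (A k)) ∧
      (∀ k, k < n → A k ⊆ A (k + 1)) := by
    intro n
    induction n with
    | zero =>
      intro _
      refine ⟨fun _ => ∅, ?_, ?_⟩
      · intro k hk
        interval_cases k
        exact ⟨Finset.card_empty, active_empty hs hp0⟩
      · intro k hk; omega
    | succ n ih =>
      intro hn1
      obtain ⟨A, h1, h2⟩ := ih (Nat.le_of_succ_le hn1)
      have hAn := h1 n le_rfl
      have hne : A n ≠ Finset.univ := by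
        intro h
        have := hAn.1
        rw [h, Finset.card_univ, Fintype.card_fin] at this
        omega
      obtain ⟨i, hiA, hact⟩ := active_step hd hs hp0 hp1 hext hAn.2 hne
      refine ⟨fun k => if k ≤ n then A k else insert i (A n), ?_, ?_⟩
      · intro k hk
        by_cases h : k ≤ n
        · simp only [if_pos h]
          exact h1 k h
        · have hk' : k = n + 1 := by omega
          subst hk'
          simp only [if_neg h]
          exact ⟨by rw [Finset.card_insert_of_notMem hiA, hAn.1], hact⟩
      · intro k hk
        by_cases h : k < n
        · simp only [if_pos (by omega : k ≤ n), if_pos (by omega : k + 1 ≤ n)]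
          exact h2 k h
        · have hk' : k = n := by omega
          subst hk'
          simp only [if_pos le_rfl, if_neg (by omega : ¬ k + 1 ≤ k)]
          exact Finset.subset_insert _ _
  obtain ⟨A, hca, hsub⟩ := chain d le_rfl
  have hmono : ∀ a b, a ≤ b → b ≤ d → A a ⊆ A b := by
    intro a b hab hbd
    induction b with
    | zero => have h0 : a = 0 := by omega
              subst h0; exact Finset.Subset.refl _
    | succ b ihb =>
      rcases Nat.lt_succ_iff_lt_or_eq.1 (Nat.lt_succ_of_le hab) with h | h
      · exact (ihb (by omega) (by omega)).trans (hsub b (by omega))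
      · subst h; exact Finset.Subset.refl _
  have hstep : ∀ k, k < d → ∃ a, A (k + 1) \ A k = {a} := by
    intro k hk
    apply Finset.card_eq_one.1
    rw [Finset.card_sdiff_of_subset (hsub k hk), (hca (k+1) hk).1, (hca k hk.le).1]
    omega
  choose g hg using hstep
  have hgmem : ∀ k (h : k < d), g k h ∈ A (k + 1) ∧ g k h ∉ A k := by
    intro k h
    have : g k h ∈ A (k + 1) \ A k := by
      rw [hg k h]; exact Finset.mem_singleton_self _
    exact ⟨(Finset.mem_sdiff.1 this).1, (Finset.mem_sdiff.1 this).2⟩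
  have hAsucc : ∀ k (h : k < d), A (k + 1) = insert (g k h) (A k) := by
    intro k h
    have h1 : A k ∪ (A (k + 1) \ A k) = A (k + 1) := Finset.union_sdiff_of_subset (hsub k h)
    rw [← h1, hg k h, Finset.insert_eq, Finset.union_comm]
  set π0 : Fin d → Fin d := fun k => g (k : ℕ) k.isLt with hπ0
  have hinj : Function.Injective π0 := by
    intro k k' heq
    rcases lt_trichotomy (k : ℕ) (k' : ℕ) with h | h | h
    · exfalso
      have h1 : π0 k ∈ A ((k : ℕ) + 1) := (hgmem _ k.isLt).1
      have h2 : π0 k ∈ A (k' : ℕ) := hmono _ _ (by omega) (le_of_lt k'.isLt) h1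
      rw [heq] at h2
      exact (hgmem _ k'.isLt).2 h2
    · exact Fin.ext h
    · exfalso
      have h1 : π0 k' ∈ A ((k' : ℕ) + 1) := (hgmem _ k'.isLt).1
      have h2 : π0 k' ∈ A (k : ℕ) := hmono _ _ (by omega) (le_of_lt k.isLt) h1
      rw [← heq] at h2
      exact (hgmem _ k.isLt).2 h2
  set π : Equiv.Perm (Fin d) := Equiv.ofBijective π0
    ((Fintype.bijective_iff_injective_and_card π0).2 ⟨hinj, rfl⟩) with hπ
  have hπ0app : ∀ k : Fin d, π k = π0 k := fun k => rfl
  have himg : ∀ m, m ≤ d → A m =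
      Finset.image (fun k : Fin d => π k) (Finset.univ.filter (fun k : Fin d => (k : ℕ) < m)) := by
    intro m
    induction m with
    | zero =>
      intro _
      have h0 : A 0 = ∅ := Finset.card_eq_zero.1 (hca 0 (Nat.zero_le d)).1
      rw [h0]
      have : Finset.univ.filter (fun k : Fin d => (k : ℕ) < 0) = ∅ := by
        apply Finset.filter_false_of_mem
        intro i _
        omega
      rw [this, Finset.image_empty]
    | succ m ihm =>
      intro hm1
      have hm : m < d := hm1
      rw [hAsucc m hm, ihm hm.le, filter_lt_succ hm, Finset.image_insert]
      congr 1
  have hsums : ∀ m, m ≤ d → pS q π m = curve d s p (pS s π m) := by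
    intro m hm
    have hact := (hca m hm).2
    unfold Active at hact
    have hconv : ∀ f : Fin d → ℝ, ∑ i ∈ A m, f i =
        ∑ i ∈ Finset.univ.filter (fun k : Fin d => (k : ℕ) < m), f (π i) := by
      intro f
      rw [himg m hm]
      rw [Finset.sum_image (fun x _ y _ h => π.injective h)]
    unfold pS
    rw [← hconv q, ← hconv s]
    exact hact
  refine ⟨π, ?_⟩
  funext j
  set k := π.symm j with hk
  have hkd : (k : ℕ) < d := k.isLt
  have h1 := hsums ((k : ℕ) + 1) hkd
  have h2 := hsums (k : ℕ) hkd.le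
  have h3 := pS_succ q π hkd
  have h4 : (⟨(k : ℕ), hkd⟩ : Fin d) = k := rfl
  rw [h4] at h3
  have h5 : π k = j := Equiv.apply_symm_apply π j
  rw [h5] at h3
  have : q j = curve d s p (pS s π ((k : ℕ) + 1)) - curve d s p (pS s π (k : ℕ)) := by
    rw [← h1, ← h2, h3]
    ring
  rw [this]
  unfold tightVec
  rfl

end S9

namespace S9
variable {d : ℕ} {s p : Fin d → ℝ}

lemma Kset_convex : Convex ℝ (Kset s p) := by
  intro q1 hq1 q2 hq2 a b ha hb hab
  refine ⟨?_, ?_, ?_⟩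
  · intro i
    simp only [Pi.add_apply, Pi.smul_apply, smul_eq_mul]
    have := hq1.1 i; have := hq2.1 i
    nlinarith
  · simp only [Pi.add_apply, Pi.smul_apply, smul_eq_mul]
    rw [Finset.sum_add_distrib, ← Finset.mul_sum, ← Finset.mul_sum, hq1.2.1, hq2.2.1]
    linarith
  · intro A
    simp only [Pi.add_apply, Pi.smul_apply, smul_eq_mul]
    rw [Finset.sum_add_distrib, ← Finset.mul_sum, ← Finset.mul_sum]
    have h1 := hq1.2.2 A
    have h2 := hq2.2.2 A
    have hc : a * curve d s p (∑ i ∈ A, s i) + b * curve d s p (∑ i ∈ A, s i) =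
        curve d s p (∑ i ∈ A, s i) := by rw [← add_mul, hab, one_mul]
    nlinarith [mul_le_mul_of_nonneg_left h1 ha, mul_le_mul_of_nonneg_left h2 hb]

lemma Kset_isClosed : IsClosed (Kset s p) := by
  have : Kset s p = (⋂ i, {q : Fin d → ℝ | 0 ≤ q i}) ∩
      ({q : Fin d → ℝ | ∑ i, q i = 1} ∩
        ⋂ A : Finset (Fin d), {q : Fin d → ℝ | ∑ i ∈ A, q i ≤ curve d s p (∑ i ∈ A, s i)}) := by
    ext q
    simp only [Kset, Set.mem_inter_iff, Set.mem_iInter, Set.mem_setOf_eq]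
  rw [this]
  refine IsClosed.inter (isClosed_iInter fun i => isClosed_le continuous_const
    (continuous_apply i)) (IsClosed.inter ?_ ?_)
  · exact isClosed_eq (continuous_finset_sum _ fun i _ => continuous_apply i) continuous_const
  · exact isClosed_iInter fun A => isClosed_le
      (continuous_finset_sum _ fun i _ => continuous_apply i) continuous_const

lemma Kset_isCompact : IsCompact (Kset s p) :=
  (isCompact_stdSimplex ℝ (Fin d)).of_isClosed_subset Kset_isClosed
    (fun q hq => ⟨hq.1, hq.2.1⟩)

lemma Kset_subset_hull (hd : 0 < d) (hs : ∀ i, 0 < s i) (hp0 : ∀ i, 0 ≤ p i)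
    (hp1 : ∑ i, p i = 1) :
    Kset s p ⊆ convexHull ℝ (Set.range (tightVec s p)) := by
  have hKM := closure_convexHull_extremePoints (Kset_isCompact (s := s) (p := p)) Kset_convex
  have hsub : (Kset s p).extremePoints ℝ ⊆ Set.range (tightVec s p) := by
    intro q hq
    obtain ⟨π, hπ⟩ := extreme_eq_tightVec hd hs hp0 hp1 hq
    exact ⟨π, hπ.symm⟩
  have hfin : (Set.range (tightVec s p)).Finite := Set.finite_range _
  calc Kset s p = closure (convexHull ℝ ((Kset s p).extremePoints ℝ)) := hKM.symm
    _ ⊆ closure (convexHull ℝ (Set.range (tightVec s p))) :=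
        closure_mono (convexHull_mono hsub)
    _ = convexHull ℝ (Set.range (tightVec s p)) :=
        (hfin.isClosed_convexHull ℝ).closure_eq

/-- The sum functional as a linear map. -/
def sumL (d : ℕ) : (Fin d → ℝ) →ₗ[ℝ] ℝ where
  toFun q := ∑ i, q i
  map_add' q1 q2 := by simp [Finset.sum_add_distrib]
  map_smul' c q := by simp [Finset.mul_sum]

lemma card_le_of_affineIndependent (hd : 0 < d) {t : Finset (Fin d → ℝ)}
    (hai : AffineIndependent ℝ ((↑) : ↥t → Fin d → ℝ))
    (hsum : ∀ x ∈ t, ∑ i, x i = 1) : t.card ≤ d := by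
  have hcard := hai.card_le_finrank_succ
  rw [Fintype.card_coe] at hcard
  have hker : vectorSpan ℝ (Set.range ((↑) : ↥t → Fin d → ℝ)) ≤ LinearMap.ker (sumL d) := by
    rw [vectorSpan_def]
    rw [Submodule.span_le]
    rintro v ⟨x, hx, y, hy, rfl⟩
    obtain ⟨⟨x, hxt⟩, rfl⟩ := hx
    obtain ⟨⟨y, hyt⟩, rfl⟩ := hy
    simp only [SetLike.mem_coe, LinearMap.mem_ker, vsub_eq_sub]
    show ∑ i, (x - y) i = 0
    simp only [Pi.sub_apply]
    rw [Finset.sum_sub_distrib, hsum x hxt, hsum y hyt]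
    ring
  have hrange : LinearMap.range (sumL d) = ⊤ := by
    rw [LinearMap.range_eq_top]
    intro c
    use fun j => if j = ⟨0, hd⟩ then c else 0
    show ∑ i : Fin d, (if i = ⟨0, hd⟩ then c else 0) = c
    rw [Finset.sum_ite_eq' Finset.univ (⟨0, hd⟩ : Fin d) (fun _ => c)]
    simp
  have hkerrank : Module.finrank ℝ (LinearMap.ker (sumL d)) + 1 = d := by
    have := LinearMap.finrank_range_add_finrank_ker (sumL d)
    rw [hrange, finrank_top, Module.finrank_fintype_fun_eq_card, Fintype.card_fin,
      Module.finrank_self] at this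
    omega
  have hmono : Module.finrank ℝ (vectorSpan ℝ (Set.range ((↑) : ↥t → Fin d → ℝ))) ≤
      Module.finrank ℝ (LinearMap.ker (sumL d)) :=
    Submodule.finrank_mono hker
  omega

end S9

/-- every `r ∈ p^TP` is a convex combination of at most `2^(d-1)`
probability vectors, each tightly thermomajorized by `p`. -/
theorem stmt9 (d : ℕ) (hd : 1 ≤ d) (s : Fin d → ℝ) (hs : ∀ i, 0 < s i)
    (p : Fin d → ℝ) (hp : ProbVec d p) (r : Fin d → ℝ) (hr : r ∈ achievable d s p) :
    ∃ N : ℕ, 1 ≤ N ∧ N ≤ 2 ^ (d - 1) ∧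
      ∃ (c : Fin N → ℝ) (σ : Fin N → (Fin d → ℝ)),
        (∀ i, 0 ≤ c i) ∧ (∑ i, c i = 1) ∧
        (∀ i, ProbVec d (σ i) ∧ TightlyThermomajorizes d s p (σ i)) ∧
        r = ∑ i, c i • σ i := by
  classical
  obtain ⟨hp0, hp1⟩ := hp
  have hd0 : 0 < d := hd
  have hrK : r ∈ S9.Kset s p := S9.achievable_subset_K hd0 hs ⟨hp0, hp1⟩ hr
  have hrhull : r ∈ convexHull ℝ (Set.range (S9.tightVec s p)) :=
    S9.Kset_subset_hull hd0 hs hp0 hp1 hrK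
  rw [convexHull_eq_union] at hrhull
  simp only [Set.mem_iUnion] at hrhull
  obtain ⟨t, hts, hai, hmem⟩ := hrhull
  -- cardinality bound
  have hsum1 : ∀ x ∈ t, ∑ i, x i = 1 := by
    intro x hx
    obtain ⟨π, rfl⟩ := hts hx
    exact S9.sum_tightVec hd0 hs hp0 hp1 π
  have hcard : t.card ≤ d := S9.card_le_of_affineIndependent hd0 hai hsum1
  have htne : t.Nonempty := by
    rcases Finset.eq_empty_or_nonempty t with rfl | h
    · simp at hmem
    · exact h
  -- extract weights
  rw [Finset.convexHull_eq] at hmem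
  obtain ⟨w, hw0, hw1, hwc⟩ := hmem
  rw [Finset.centerMass_eq_of_sum_1 _ _ hw1] at hwc
  -- enumerate t
  let e := t.equivFin
  refine ⟨t.card, Finset.card_pos.2 htne, ?_, fun m => w ((e.symm m : ↥t) : Fin d → ℝ),
    fun m => ((e.symm m : ↥t) : Fin d → ℝ), ?_, ?_, ?_, ?_⟩
  · -- N ≤ 2 ^ (d - 1)
    have h1 : d - 1 < 2 ^ (d - 1) := Nat.lt_two_pow_self
    omega
  · intro m
    exact hw0 _ (e.symm m).2
  · calc ∑ m : Fin t.card, w ((e.symm m : ↥t) : Fin d → ℝ)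
        = ∑ y : ↥t, w (y : Fin d → ℝ) := Fintype.sum_equiv e.symm _ _ (fun m => rfl)
      _ = ∑ y ∈ t, w y := Finset.sum_coe_sort t w
      _ = 1 := hw1
  · intro m
    show ProbVec d ((e.symm m : ↥t) : Fin d → ℝ) ∧
      TightlyThermomajorizes d s p ((e.symm m : ↥t) : Fin d → ℝ)
    obtain ⟨π, hπ⟩ := hts (e.symm m).2
    rw [← hπ]
    exact ⟨S9.tightVec_probVec hd0 hs hp0 hp1 π, S9.tightVec_tight hd0 hs hp0 hp1 π⟩
  · calc r = ∑ y ∈ t, w y • id y := hwc.symm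
      _ = ∑ y : ↥t, w (y : Fin d → ℝ) • id (y : Fin d → ℝ) :=
          (Finset.sum_coe_sort t (fun y => w y • id y)).symm
      _ = ∑ m : Fin t.card, w ((e.symm m : ↥t) : Fin d → ℝ) • ((e.symm m : ↥t) : Fin d → ℝ) :=
          (Fintype.sum_equiv e.symm _ _ (fun m => rfl)).symm
end

section
/- Every probability vector p is an extreme point of its own achievable set p^TP. -/
lemma key_mono {d : ℕ} (g : Fin d → ℝ) (hg : ∀ i, 0 < g i)
    (T : Matrix (Fin d) (Fin d) ℝ) (hTn : ∀ i j, 0 ≤ T i j)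
    (hTc : ∀ j, ∑ i, T i j = 1) (hTg : T.mulVec g = g) (x : Fin d → ℝ) :
    ∑ i, (T.mulVec x i) ^ 2 / g i ≤ ∑ i, (x i) ^ 2 / g i := by
  have h1 : ∀ i, (T.mulVec x i) ^ 2 ≤ g i * ∑ j, T i j / g j * (x j) ^ 2 := by
    intro i
    have hcs := Finset.sum_mul_sq_le_sq_mul_sq Finset.univ
      (fun j => Real.sqrt (T i j * g j)) (fun j => Real.sqrt (T i j / g j) * x j)
    have e1 : ∀ j, Real.sqrt (T i j * g j) * (Real.sqrt (T i j / g j) * x j) = T i j * x j := by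
      intro j
      have hgj := (hg j).ne'
      rw [← mul_assoc, ← Real.sqrt_mul (mul_nonneg (hTn i j) (hg j).le)]
      have : T i j * g j * (T i j / g j) = (T i j) ^ 2 := by field_simp
      rw [this, Real.sqrt_sq (hTn i j)]
    have e2 : ∀ j, (Real.sqrt (T i j * g j)) ^ 2 = T i j * g j := fun j =>
      Real.sq_sqrt (mul_nonneg (hTn i j) (hg j).le)
    have e3 : ∀ j, (Real.sqrt (T i j / g j) * x j) ^ 2 = T i j / g j * (x j) ^ 2 := by
      intro j
      rw [mul_pow, Real.sq_sqrt (div_nonneg (hTn i j) (hg j).le)]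
    simp only [e1, e2, e3] at hcs
    have hgi : ∑ j, T i j * g j = g i := by
      have := congrFun hTg i
      simpa [Matrix.mulVec, dotProduct] using this
    rw [hgi] at hcs
    simpa [Matrix.mulVec, dotProduct] using hcs
  calc ∑ i, (T.mulVec x i) ^ 2 / g i
      ≤ ∑ i, ∑ j, T i j / g j * (x j) ^ 2 := by
        apply Finset.sum_le_sum
        intro i _
        rw [div_le_iff₀ (hg i)]
        linarith [h1 i]
    _ = ∑ j, (∑ i, T i j) * ((x j) ^ 2 / g j) := by
        rw [Finset.sum_comm]
        refine Finset.sum_congr rfl fun j _ => ?_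
        rw [Finset.sum_mul]
        exact Finset.sum_congr rfl fun i _ => by ring
    _ = ∑ j, (x j) ^ 2 / g j := by
        refine Finset.sum_congr rfl fun j _ => by rw [hTc j, one_mul]

/-- every probability vector `p` is an extreme point (a vertex) of its
own achievable set `p^TP`. -/
theorem stmt10 (d : ℕ) (hd : 1 ≤ d) (s : Fin d → ℝ) (hs : ∀ i, 0 < s i)
    (p : Fin d → ℝ) (hp : ProbVec d p) :
    p ∈ Set.extremePoints ℝ (achievable d s p) := by
  haveI : NeZero d := ⟨by omega⟩
  set g : Fin d → ℝ := fun i => s i / ∑ k, s k with hgdef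
  have hZ : 0 < ∑ k, s k := Finset.sum_pos (fun i _ => hs i) Finset.univ_nonempty
  have hg : ∀ i, 0 < g i := fun i => div_pos (hs i) hZ
  have hmem : p ∈ achievable d s p := by
    refine ⟨1, ⟨?_, ?_, ?_⟩, Matrix.one_mulVec p⟩
    · intro i j
      rw [Matrix.one_apply]
      split <;> norm_num
    · intro j
      simp [Matrix.one_apply]
    · exact Matrix.one_mulVec _
  refine ⟨hmem, ?_⟩
  rintro x hx y hy hseg
  obtain ⟨a, b, ha, hb, hab, hsum⟩ := hseg
  obtain ⟨T, ⟨hTn, hTc, hTg⟩, hTx⟩ := hx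
  obtain ⟨U, ⟨hUn, hUc, hUg⟩, hUy⟩ := hy
  have h1 : ∑ i, (x i) ^ 2 / g i ≤ ∑ i, (p i) ^ 2 / g i := by
    rw [← hTx]; exact key_mono g hg T hTn hTc hTg p
  have h2 : ∑ i, (y i) ^ 2 / g i ≤ ∑ i, (p i) ^ 2 / g i := by
    rw [← hUy]; exact key_mono g hg U hUn hUc hUg p
  have hpi : ∀ i, p i = a * x i + b * y i := by
    intro i
    have := congrFun hsum i
    simpa using this.symm
  have hb' : b = 1 - a := by linarith
  have hid : a * ∑ i, (x i) ^ 2 / g i + b * ∑ i, (y i) ^ 2 / g i - ∑ i, (p i) ^ 2 / g i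
      = a * b * ∑ i, (x i - y i) ^ 2 / g i := by
    rw [Finset.mul_sum, Finset.mul_sum, Finset.mul_sum, ← Finset.sum_add_distrib,
      ← Finset.sum_sub_distrib]
    refine Finset.sum_congr rfl fun i _ => ?_
    rw [hpi i, hb']
    have hgi := (hg i).ne'
    field_simp
    ring
  have hsumzero : ∑ i, (x i - y i) ^ 2 / g i = 0 := by
    have hnn : 0 ≤ ∑ i, (x i - y i) ^ 2 / g i :=
      Finset.sum_nonneg fun i _ => div_nonneg (sq_nonneg _) (hg i).le
    have hFp : a * ∑ i, (p i) ^ 2 / g i + b * ∑ i, (p i) ^ 2 / g i = ∑ i, (p i) ^ 2 / g i := by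
      rw [← add_mul, hab, one_mul]
    have h3 : a * b * ∑ i, (x i - y i) ^ 2 / g i ≤ 0 := by
      linarith [mul_le_mul_of_nonneg_left h1 ha.le, mul_le_mul_of_nonneg_left h2 hb.le]
    have h4 : ∑ i, (x i - y i) ^ 2 / g i ≤ 0 :=
      le_of_mul_le_mul_left (by linarith : a * b * ∑ i, (x i - y i) ^ 2 / g i ≤ a * b * 0)
        (mul_pos ha hb)
    linarith
  have hxy : x = y := by
    funext i
    have := (Finset.sum_eq_zero_iff_of_nonneg
      (fun i _ => div_nonneg (sq_nonneg _) (hg i).le)).mp hsumzero i (Finset.mem_univ i)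
    have hgi := (hg i).ne'
    field_simp at this
    rw [mul_zero] at this
    have := (pow_eq_zero_iff two_ne_zero).mp this
    linarith
  have hxp : x = p := by
    funext i
    rw [hpi i, hxy, ← add_mul, hab, one_mul]
  exact hxp
end
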